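/- arXiv:1405.7333 — 9 statements merged into one kernel-verified Lean document; each statement's English description precedes it below -/
import Mathlib

section
/- Let a ∈ (-1,1) and let η be a Borel probability measure on [0,∞) such that ∫₀^∞ e^{ντ} dη(τ) < ∞ for some ν > 0, whose mean E = ∫₀^∞ τ dη(τ) satisfies E < arccos(-a)/√(1-a²). Then every complex root λ of the characteristic equation λ + a + ∫₀^∞ e^{-λτ} dη(τ) = 0 has negative real part (i.e., the distribution η is stable). -/
open MeasureTheory Real
set_option maxHeartbeats 1000000

open MeasureTheory Real

lemma mul_cos_le_sin {w : ℝ} (h0 : 0 ≤ w) (h1 : w ≤ π) : w * Real.cos w ≤ Real.sin w := by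
  have mono : MonotoneOn (fun w => Real.sin w - w * Real.cos w) (Set.Icc 0 π) := by
    apply monotoneOn_of_deriv_nonneg (convex_Icc 0 π)
    · exact (Real.continuous_sin.sub (continuous_id.mul Real.continuous_cos)).continuousOn
    · intro x hx
      exact ((Real.hasDerivAt_sin x).sub ((hasDerivAt_id x).mul
        (Real.hasDerivAt_cos x))).differentiableAt.differentiableWithinAt
    · intro x hx
      rw [interior_Icc] at hx
      have : HasDerivAt (fun w => Real.sin w - w * Real.cos w) (x * Real.sin x) x := by
        have h := (Real.hasDerivAt_sin x).sub ((hasDerivAt_id x).mul (Real.hasDerivAt_cos x))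
        exact h.congr_deriv (by simp only [id]; ring)
      rw [this.deriv]
      exact mul_nonneg hx.1.le (Real.sin_nonneg_of_nonneg_of_le_pi hx.1.le (le_of_lt hx.2))
  have := mono (Set.mem_Icc.2 ⟨le_refl 0, Real.pi_pos.le⟩) (Set.mem_Icc.2 ⟨h0, h1⟩) h0
  simp at this
  linarith

lemma sub_sin_le {V : ℝ} (h0 : 0 ≤ V) (h1 : V ≤ π) :
    V - Real.sin V ≤ V / 2 * (1 - Real.cos V) := by
  have hw0 : (0:ℝ) ≤ V / 2 := by linarith
  have hw1 : V / 2 ≤ π := by linarith [Real.pi_pos]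
  have h := mul_cos_le_sin hw0 hw1
  have hc : 0 ≤ Real.cos (V / 2) := Real.cos_nonneg_of_mem_Icc
    ⟨by linarith [Real.pi_pos], by linarith⟩
  have hs : Real.sin V = 2 * Real.sin (V/2) * Real.cos (V/2) := by
    rw [← Real.sin_two_mul]; ring_nf
  have hcv : Real.cos V = 2 * Real.cos (V/2)^2 - 1 := by
    rw [← Real.cos_two_mul]; ring_nf
  nlinarith [mul_le_mul_of_nonneg_right h hc]

lemma key_ineq {θ u : ℝ} (hθ0 : 0 < θ) (hθπ : θ < π) (hu : 0 ≤ u) :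
    0 ≤ u * Real.sin θ ^ 2 - θ * Real.sin θ * Real.sin u
      + (Real.sin θ - θ * Real.cos θ) * (Real.cos u - Real.cos θ) := by
  set s := Real.sin θ with hs
  set c := Real.cos θ with hc
  have hpy : s ^ 2 + c ^ 2 = 1 := Real.sin_sq_add_cos_sq θ
  have hs0 : 0 < s := Real.sin_pos_of_pos_of_lt_pi hθ0 hθπ
  have hsθ : s ≤ θ := by
    have := Real.sin_lt hθ0; linarith
  have hc1 : c ≤ 1 := Real.cos_le_one θ
  have iden : u * s ^ 2 - θ * s * Real.sin u + (s - θ * c) * (Real.cos u - c)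
      = s ^ 2 * ((u - θ) - Real.sin (u - θ)) + (θ - s * c) * (1 - Real.cos (u - θ)) := by
    rw [Real.sin_sub, Real.cos_sub]
    linear_combination (θ - s * Real.cos u) * hpy
  rw [iden]
  have hcos : Real.cos (u - θ) ≤ 1 := Real.cos_le_one _
  have hθsc : 0 ≤ θ - s * c := by nlinarith
  rcases le_or_gt θ u with hcase | hcase
  · have h1 : Real.sin (u - θ) ≤ u - θ := by
      rcases eq_or_lt_of_le hcase with h | h
      · simp [← h]
      · exact le_of_lt (Real.sin_lt (by linarith))
    nlinarith
  · -- u < θ; V := θ - u ∈ (0, θ]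
    set V := θ - u with hV
    have hV0 : 0 < V := by simp [hV]; linarith
    have hVθ : V ≤ θ := by simp [hV]; linarith
    have hVπ : V ≤ π := le_trans hVθ hθπ.le
    have hsub : Real.sin (u - θ) = -Real.sin V ∧ Real.cos (u - θ) = Real.cos V := by
      constructor
      · rw [show u - θ = -V by ring, Real.sin_neg]
      · rw [show u - θ = -V by ring, Real.cos_neg]
    rw [hsub.1, hsub.2]
    have hL2 := sub_sin_le hV0.le hVπ
    have hcV : Real.cos V ≤ 1 := Real.cos_le_one _
    -- need (θ - s*c)*(1 - cos V) ≥ s^2*(V - sin V)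
    -- s^2*(V - sinV) ≤ s^2*(V/2)*(1-cosV) ≤ s^2*(θ/2)*(1-cosV) and θ - s*c ≥ s^2*θ/2
    have h1 : s ^ 2 * (V - Real.sin V) ≤ s ^ 2 * (θ / 2) * (1 - Real.cos V) := by
      nlinarith [mul_le_mul_of_nonneg_left hL2 (sq_nonneg s),
        mul_nonneg (mul_nonneg (sq_nonneg s) (by linarith : (0:ℝ) ≤ θ/2 - V/2))
          (by linarith : (0:ℝ) ≤ 1 - Real.cos V)]
    have h2 : s ^ 2 * (θ / 2) ≤ θ - s * c := by nlinarith [sq_nonneg (1 - c), sq_nonneg c]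
    nlinarith
/-- Paper Theorem 5.2: stability of a general distribution of delays. -/
theorem stmt1 (a : ℝ) (ha : a ∈ Set.Ioo (-1 : ℝ) 1)
    (η : Measure ℝ) [IsProbabilityMeasure η]
    (hsupp : η (Set.Iio 0) = 0)
    (hν : ∃ ν > 0, Integrable (fun τ => Real.exp (ν * τ)) η)
    (E : ℝ) (hE : E = ∫ τ, τ ∂η)
    (hEbound : E < Real.arccos (-a) / Real.sqrt (1 - a ^ 2)) :
    ∀ z : ℂ, z + (a : ℂ) + (∫ τ, Complex.exp (-z * τ) ∂η) = 0 → z.re < 0 := by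
  obtain ⟨ha1, ha2⟩ := ha
  intro z hz
  by_contra hcon
  push_neg at hcon
  set x := z.re with hxdef
  set y := z.im with hydef
  -- a.e. nonnegativity of τ
  have haeτ : ∀ᵐ τ ∂η, 0 ≤ τ := by
    rw [MeasureTheory.ae_iff]
    have hset : {a : ℝ | ¬ 0 ≤ a} = Set.Iio 0 := by ext t; simp [not_le]
    rw [hset]; exact hsupp
  obtain ⟨ν, hν0, hνint⟩ := hν
  -- integrability of τ
  have hτint : Integrable (fun τ : ℝ => τ) η := by
    refine Integrable.mono' (hνint.const_mul (ν⁻¹)) aestronglyMeasurable_id ?_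
    filter_upwards [haeτ] with τ hτ
    rw [Real.norm_eq_abs, abs_of_nonneg hτ]
    have h1 : ν * τ ≤ Real.exp (ν * τ) := by linarith only [Real.add_one_le_exp (ν * τ)]
    calc τ = ν⁻¹ * (ν * τ) := by field_simp
    _ ≤ ν⁻¹ * Real.exp (ν * τ) := by
        exact mul_le_mul_of_nonneg_left h1 (inv_nonneg.2 hν0.le)
  have hE0 : 0 ≤ E := hE ▸ integral_nonneg_of_ae haeτ
  have hexp_le1 : ∀ᵐ τ ∂η, Real.exp (-x * τ) ≤ 1 := by
    filter_upwards [haeτ] with τ hτ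
    rw [Real.exp_le_one_iff]
    have h1 : 0 ≤ x * τ := mul_nonneg hcon hτ
    linarith only [h1]
  have hmeasg : AEStronglyMeasurable (fun τ : ℝ => Real.exp (-x * τ)) η :=
    (Real.continuous_exp.comp (continuous_const.mul continuous_id)).aestronglyMeasurable
  have hgint : Integrable (fun τ : ℝ => Real.exp (-x * τ)) η := by
    refine Integrable.mono' (integrable_const (1 : ℝ)) hmeasg ?_
    filter_upwards [hexp_le1] with τ h
    rw [Real.norm_eq_abs, abs_of_nonneg (Real.exp_pos _).le]; exact h
  have hgtrig : ∀ w : ℝ, ∀ f : ℝ → ℝ, Continuous f → (∀ t : ℝ, |f t| ≤ 1) →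
      Integrable (fun τ : ℝ => Real.exp (-x * τ) * f (w * τ)) η := by
    intro w f hf hb
    refine Integrable.mono' (integrable_const (1 : ℝ))
      ((Real.continuous_exp.comp (continuous_const.mul continuous_id)).mul
        (hf.comp (continuous_const.mul continuous_id))).aestronglyMeasurable ?_
    filter_upwards [hexp_le1] with τ h
    rw [Real.norm_eq_abs, abs_mul, abs_of_nonneg (Real.exp_pos _).le]
    calc Real.exp (-x * τ) * |f (w * τ)| ≤ 1 * 1 :=
      mul_le_mul h (hb _) (abs_nonneg _) zero_le_one
    _ = 1 := by ring
  have hτg : Integrable (fun τ : ℝ => τ * Real.exp (-x * τ)) η := by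
    refine Integrable.mono' hτint.abs
      (continuous_id.mul (Real.continuous_exp.comp
        (continuous_const.mul continuous_id))).aestronglyMeasurable ?_
    filter_upwards [hexp_le1] with τ h
    rw [Real.norm_eq_abs, abs_mul, abs_of_nonneg (Real.exp_pos _).le]
    calc |τ| * Real.exp (-x * τ) ≤ |τ| * 1 :=
      mul_le_mul_of_nonneg_left h (abs_nonneg _)
    _ = |τ| := by ring
  -- the complex integrand
  have hre' : ∀ τ : ℝ, (-z * (τ : ℂ)).re = -x * τ := by
    intro τ; simp [Complex.mul_re, hxdef]
  have him' : ∀ τ : ℝ, (-z * (τ : ℂ)).im = -(y * τ) := by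
    intro τ; simp [Complex.mul_im, hydef]
  have hnormexp : ∀ τ : ℝ, ‖Complex.exp (-z * (τ : ℂ))‖ = Real.exp (-x * τ) := by
    intro τ; rw [Complex.norm_exp, hre' τ]
  have hzint : Integrable (fun τ : ℝ => Complex.exp (-z * (τ : ℂ))) η := by
    refine Integrable.mono' (integrable_const (1 : ℝ)) ?_ ?_
    · apply Continuous.aestronglyMeasurable
      exact Complex.continuous_exp.comp (continuous_const.mul Complex.continuous_ofReal)
    · filter_upwards [hexp_le1] with τ h
      rw [hnormexp τ]; exact h
  have hIeq : ∫ τ, Complex.exp (-z * (τ : ℂ)) ∂η = -(z + (a : ℂ)) := by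
    linear_combination hz
  have E1 : ∫ τ, Real.exp (-x * τ) * Real.cos (y * τ) ∂η = -(x + a) := by
    have h := integral_re hzint
    have hfe : (fun τ : ℝ => RCLike.re (Complex.exp (-z * (τ : ℂ))))
        = fun τ : ℝ => Real.exp (-x * τ) * Real.cos (y * τ) := by
      funext τ
      rw [RCLike.re_to_complex, Complex.exp_re, hre' τ, him' τ, Real.cos_neg]
    rw [hfe, hIeq] at h
    rw [h]; simp [hxdef]
  have E2 : ∫ τ, Real.exp (-x * τ) * Real.sin (y * τ) ∂η = y := by
    have h := integral_im hzint
    have hfe : (fun τ : ℝ => RCLike.im (Complex.exp (-z * (τ : ℂ))))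
        = fun τ : ℝ => -(Real.exp (-x * τ) * Real.sin (y * τ)) := by
      funext τ
      rw [RCLike.im_to_complex, Complex.exp_im, hre' τ, him' τ, Real.sin_neg]
      ring
    rw [hfe, hIeq] at h
    rw [integral_neg] at h
    have h2 : RCLike.im (-(z + (a:ℂ))) = -y := by
      rw [RCLike.im_to_complex]; simp [hydef]
    rw [h2] at h
    linarith only [h]
  set c := ∫ τ, Real.exp (-x * τ) ∂η with hcdef
  have hc_pos : 0 < c := by
    rw [hcdef, integral_pos_iff_support_of_nonneg_ae
      (Filter.Eventually.of_forall fun τ => (Real.exp_pos _).le) hgint]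
    have hsup : Function.support (fun τ : ℝ => Real.exp (-x * τ)) = Set.univ := by
      ext τ; simp [Real.exp_ne_zero]
    rw [hsup]
    simp
  have hc1 : c ≤ 1 := by
    have h := integral_mono_ae hgint (integrable_const (1 : ℝ)) hexp_le1
    rwa [integral_const, probReal_univ, smul_eq_mul, one_mul] at h
  have hc_lb : 1 - x * E ≤ c := by
    have hint2 : Integrable (fun τ : ℝ => 1 - x * τ) η :=
      (integrable_const 1).sub (hτint.const_mul x)
    have hmono := integral_mono hint2 hgint
      (fun τ => by dsimp; linarith only [Real.add_one_le_exp (-x * τ)])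
    have hval : ∫ τ, (1 - x * τ) ∂η = 1 - x * E := by
      rw [integral_sub (integrable_const 1) (hτint.const_mul x), integral_const,
        integral_const_mul, probReal_univ, smul_eq_mul, one_mul, hE]
    rw [hval] at hmono
    exact hmono
  set T := ∫ τ, τ * Real.exp (-x * τ) ∂η with hTdef
  have hT_le_E : T ≤ E := by
    rw [hTdef, hE]
    apply integral_mono_ae hτg hτint
    filter_upwards [hexp_le1, haeτ] with τ h hτ
    calc τ * Real.exp (-x * τ) ≤ τ * 1 := mul_le_mul_of_nonneg_left h hτ
    _ = τ := by ring
  -- global angle quantities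
  set θa := Real.arccos (-a) with hθadef
  set sa := Real.sqrt (1 - a ^ 2) with hsadef
  have hθa0 : 0 < θa := Real.arccos_pos.2 (by linarith)
  have hθaπ : θa < π := by
    refine lt_of_le_of_ne (Real.arccos_le_pi _) fun h => ?_
    have := Real.arccos_eq_pi.1 h
    linarith
  have hsina : Real.sin θa = sa := by
    rw [hθadef, Real.sin_arccos, hsadef]; congr 1; ring
  have hsa0 : 0 < sa := by
    rw [← hsina]; exact Real.sin_pos_of_pos_of_lt_pi hθa0 hθaπ
  have hEs : E * sa < θa := (lt_div_iff₀ hsa0).1 hEbound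
  have hcos_a : Real.cos θa = -a := Real.cos_arccos (by linarith) (by linarith)
  have haE : (-a) * E ≤ 1 := by
    rcases le_or_gt 0 a with h | h
    · have h1 : 0 ≤ a * E := mul_nonneg h hE0
      linarith only [h1]
    · have h1 : θa * (-a) ≤ sa := by
        have h2 := mul_cos_le_sin hθa0.le (Real.arccos_le_pi (-a))
        rw [hcos_a, hsina] at h2
        exact h2
      by_contra hgt
      push_neg at hgt
      have h3 : 1 * sa < ((-a) * E) * sa := mul_lt_mul_of_pos_right hgt hsa0
      have h4 : (-a) * (E * sa) < (-a) * θa :=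
        mul_lt_mul_of_pos_left hEs (by linarith only [h] : (0:ℝ) < -a)
      linarith only [h1, h3, h4]
  by_cases hy0 : y = 0
  · -- real root case
    have hceq : c = -(x + a) := by
      rw [hcdef, ← E1]
      congr 1; funext τ; rw [hy0]; simp
    have hprod : x * ((-a) * E) ≤ x * 1 := mul_le_mul_of_nonneg_left haE hcon
    have hxa_neg : x + a < 0 := by linarith only [hc_pos, hceq]
    have hi : 1 + a + x ≤ x * E := by linarith only [hc_lb, hceq]
    have hneg_a : (0:ℝ) ≤ -a := by linarith only [hxa_neg, hcon]
    have hmul := mul_le_mul_of_nonneg_left hi hneg_a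
    have hx2 : 0 < (1 + a) * (-(x + a)) :=
      mul_pos (by linarith only [ha1]) (by linarith only [hxa_neg])
    linarith only [hmul, hprod, hx2]
  · -- oscillatory case
    set y' := |y| with hy'def
    have hy'0 : 0 < y' := abs_pos.2 hy0
    have E2' : ∫ τ, Real.exp (-x * τ) * Real.sin (y' * τ) ∂η = y' := by
      rcases abs_cases y with ⟨h1, _⟩ | ⟨h1, _⟩
      · rw [hy'def, h1]; exact E2
      · rw [hy'def, h1]
        have hfe : (fun τ : ℝ => Real.exp (-x * τ) * Real.sin (-y * τ))
            = fun τ : ℝ => -(Real.exp (-x * τ) * Real.sin (y * τ)) := by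
          funext τ; rw [show -y * τ = -(y * τ) by ring, Real.sin_neg]; ring
        rw [hfe, integral_neg, E2]
    have E1' : ∫ τ, Real.exp (-x * τ) * Real.cos (y' * τ) ∂η = -(x + a) := by
      rcases abs_cases y with ⟨h1, _⟩ | ⟨h1, _⟩
      · rw [hy'def, h1]; exact E1
      · rw [hy'def, h1]
        have hfe : (fun τ : ℝ => Real.exp (-x * τ) * Real.cos (-y * τ))
            = fun τ : ℝ => Real.exp (-x * τ) * Real.cos (y * τ) := by
          funext τ; rw [show -y * τ = -(y * τ) by ring, Real.cos_neg]
        rw [hfe]; exact E1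
    -- Cauchy-Schwarz style bound
    have hC2 : (x + a) ^ 2 + y ^ 2 ≤ c ^ 2 := by
      have hnorm : ‖∫ τ, Complex.exp (-z * (τ : ℂ)) ∂η‖ ≤ c := by
        calc ‖∫ τ, Complex.exp (-z * (τ : ℂ)) ∂η‖
            ≤ ∫ τ, ‖Complex.exp (-z * (τ : ℂ))‖ ∂η := norm_integral_le_integral_norm _
        _ = c := by rw [hcdef]; congr 1; funext τ; exact hnormexp τ
      rw [hIeq, norm_neg] at hnorm
      have h2 : Complex.normSq (z + (a:ℂ)) ≤ c ^ 2 := by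
        rw [Complex.normSq_eq_norm_sq]
        exact pow_le_pow_left₀ (norm_nonneg _) hnorm 2
      rw [Complex.normSq_apply] at h2
      simp only [Complex.add_re, Complex.add_im, Complex.ofReal_re, Complex.ofReal_im,
        add_zero] at h2
      have h2' : (x + a) * (x + a) + y * y ≤ c ^ 2 := h2
      linarith only [h2']
    have hy2 : 0 < y ^ 2 := by
      have h1 : y ^ 2 ≠ 0 := pow_ne_zero 2 hy0
      exact lt_of_le_of_ne (sq_nonneg y) (Ne.symm h1)
    have hC2' : (x + a) ^ 2 < c ^ 2 := by linarith only [hC2, hy2]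
    have hxa_lt : x + a < c := lt_of_pow_lt_pow_left₀ 2 hc_pos.le hC2'
    have hxa_gt : -c < x + a := by
      have h6 : (-(x + a)) ^ 2 < c ^ 2 := by rw [neg_sq]; exact hC2'
      have h7 := lt_of_pow_lt_pow_left₀ 2 hc_pos.le h6
      linarith only [h7]
    set A := (x + a) / c with hAdef
    have hA1 : -1 < A := by
      rw [hAdef, lt_div_iff₀ hc_pos]; linarith only [hxa_gt]
    have hA2 : A < 1 := by
      rw [hAdef, div_lt_one hc_pos]; linarith only [hxa_lt]
    have hAc : A * c = x + a := by
      rw [hAdef]; field_simp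
    set θA := Real.arccos (-A) with hθAdef
    have hθA0 : 0 < θA := Real.arccos_pos.2 (by linarith only [hA1])
    have hθAπ : θA < π := by
      refine lt_of_le_of_ne (Real.arccos_le_pi _) fun h => ?_
      have h8 := Real.arccos_eq_pi.1 h
      linarith only [h8, hA2]
    have hcosA : Real.cos θA = -A :=
      Real.cos_arccos (by linarith only [hA2]) (by linarith only [hA1])
    set sA := Real.sin θA with hsAdef
    have hsA0 : 0 < sA := Real.sin_pos_of_pos_of_lt_pi hθA0 hθAπ
    have hgsin : Integrable (fun τ : ℝ => Real.exp (-x * τ) * Real.sin (y' * τ)) η :=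
      hgtrig y' Real.sin Real.continuous_sin fun t => Real.abs_sin_le_one t
    have hgcos : Integrable (fun τ : ℝ => Real.exp (-x * τ) * Real.cos (y' * τ)) η :=
      hgtrig y' Real.cos Real.continuous_cos fun t => Real.abs_cos_le_one t
    -- nonnegativity of the key integrand
    have hpos : (0:ℝ) ≤ ∫ τ, ((y' * sA ^ 2) * (τ * Real.exp (-x * τ))
        - (θA * sA) * (Real.exp (-x * τ) * Real.sin (y' * τ))
        + (sA - θA * Real.cos θA) * (Real.exp (-x * τ) * Real.cos (y' * τ))
        - ((sA - θA * Real.cos θA) * Real.cos θA) * Real.exp (-x * τ)) ∂η := by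
      have hfun : (fun τ : ℝ => (y' * sA ^ 2) * (τ * Real.exp (-x * τ))
          - (θA * sA) * (Real.exp (-x * τ) * Real.sin (y' * τ))
          + (sA - θA * Real.cos θA) * (Real.exp (-x * τ) * Real.cos (y' * τ))
          - ((sA - θA * Real.cos θA) * Real.cos θA) * Real.exp (-x * τ))
          = fun τ : ℝ => Real.exp (-x * τ) * ((y' * τ) * Real.sin θA ^ 2
            - θA * Real.sin θA * Real.sin (y' * τ)
            + (Real.sin θA - θA * Real.cos θA) * (Real.cos (y' * τ) - Real.cos θA)) := by
        funext τ; rw [hsAdef]; ring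
      rw [hfun]
      apply integral_nonneg_of_ae
      filter_upwards [haeτ] with τ hτ
      exact mul_nonneg (Real.exp_pos _).le (key_ineq hθA0 hθAπ (mul_nonneg hy'0.le hτ))
    have hval : ∫ τ, ((y' * sA ^ 2) * (τ * Real.exp (-x * τ))
        - (θA * sA) * (Real.exp (-x * τ) * Real.sin (y' * τ))
        + (sA - θA * Real.cos θA) * (Real.exp (-x * τ) * Real.cos (y' * τ))
        - ((sA - θA * Real.cos θA) * Real.cos θA) * Real.exp (-x * τ)) ∂η
        = (y' * sA ^ 2) * T - (θA * sA) * y'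
          + (sA - θA * Real.cos θA) * (-(x + a))
          - ((sA - θA * Real.cos θA) * Real.cos θA) * c := by
      have e1 : Integrable (fun τ : ℝ => (y' * sA ^ 2) * (τ * Real.exp (-x * τ))
          - (θA * sA) * (Real.exp (-x * τ) * Real.sin (y' * τ))) η := by
        exact (hτg.const_mul _).sub (hgsin.const_mul _)
      have e2 : Integrable (fun τ : ℝ => ((y' * sA ^ 2) * (τ * Real.exp (-x * τ))
          - (θA * sA) * (Real.exp (-x * τ) * Real.sin (y' * τ)))
          + (sA - θA * Real.cos θA) * (Real.exp (-x * τ) * Real.cos (y' * τ))) η := by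
        exact e1.add (hgcos.const_mul _)
      have e3 : Integrable (fun τ : ℝ => (y' * sA ^ 2) * (τ * Real.exp (-x * τ))) η :=
        hτg.const_mul _
      have e4 : Integrable (fun τ : ℝ =>
          (θA * sA) * (Real.exp (-x * τ) * Real.sin (y' * τ))) η := hgsin.const_mul _
      have e5 : Integrable (fun τ : ℝ => (sA - θA * Real.cos θA)
          * (Real.exp (-x * τ) * Real.cos (y' * τ))) η := hgcos.const_mul _
      have e6 : Integrable (fun τ : ℝ =>
          ((sA - θA * Real.cos θA) * Real.cos θA) * Real.exp (-x * τ)) η := hgint.const_mul _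
      rw [integral_sub e2 e6, integral_add e1 e5, integral_sub e3 e4,
        integral_const_mul, integral_const_mul, integral_const_mul, integral_const_mul,
        E2', E1', ← hTdef, ← hcdef]
    rw [hval] at hpos
    have hzero : (sA - θA * Real.cos θA) * (-(x + a))
        - ((sA - θA * Real.cos θA) * Real.cos θA) * c = 0 := by
      rw [hcosA, ← hAc]; ring
    have h5 : θA * sA * y' ≤ y' * sA ^ 2 * T := by linarith only [hpos, hzero]
    have hTgeq : θA / sA ≤ T := by
      rw [div_le_iff₀ hsA0]
      by_contra h6
      push_neg at h6
      have h7 := mul_lt_mul_of_pos_right h6 (mul_pos hsA0 hy'0)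
      linarith only [h5, h7]
    have hAa : a ≤ A := by
      rw [hAdef, le_div_iff₀ hc_pos]
      rcases le_or_gt 0 a with h | h
      · have h9 := mul_le_mul_of_nonneg_left hc1 h
        linarith only [h9, hcon]
      · have h1 : (-a) * (1 - c) ≤ (-a) * (x * E) :=
          mul_le_mul_of_nonneg_left (by linarith only [hc_lb]) (by linarith only [h])
        have h2 : x * ((-a) * E) ≤ x * 1 := mul_le_mul_of_nonneg_left haE hcon
        linarith only [h1, h2]
    have hθθ : θa ≤ θA := by
      rcases eq_or_lt_of_le hAa with h | h
      · rw [hθadef, hθAdef, h]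
      · exact le_of_lt (Real.strictAntiOn_arccos
          ⟨by linarith only [hA2], by linarith only [hA1]⟩
          ⟨by linarith only [ha2], by linarith only [ha1]⟩ (by linarith only [h]))
    have hconc : θa * sA ≤ θA * sa := by
      rcases eq_or_lt_of_le hθθ with h | h
      · have hss : sA = sa := by rw [hsAdef, ← h, hsina]
        rw [h, hss]
      · have ht1 : θa / θA ≤ 1 := by
          rw [div_le_one hθA0]; linarith only [h]
        have ht0 : 0 ≤ θa / θA := le_of_lt (div_pos hθa0 hθA0)
        have hcc := strictConcaveOn_sin_Icc.concaveOn.2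
          (Set.mem_Icc.2 ⟨le_refl (0:ℝ), Real.pi_pos.le⟩)
          (Set.mem_Icc.2 ⟨hθA0.le, hθAπ.le⟩)
          (by linarith only [ht1] : (0:ℝ) ≤ 1 - θa / θA) ht0 (by ring)
        simp only [smul_eq_mul, mul_zero, Real.sin_zero, zero_add] at hcc
        have hmul : θa / θA * θA = θa := div_mul_cancel₀ θa (ne_of_gt hθA0)
        rw [hmul, hsina] at hcc
        -- hcc : (1 - θa/θA) * 0 + θa/θA * sin θA ≤ sa  (roughly)
        have hcc' : θa / θA * sA ≤ sa := by
          rw [hsAdef]; linarith only [hcc]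
        calc θa * sA = θA * (sA * (θa / θA)) := by field_simp
        _ ≤ θA * sa := by
            rw [mul_comm sA (θa / θA)]
            exact mul_le_mul_of_nonneg_left hcc' hθA0.le
    have hfinal : θa / sa ≤ θA / sA := by
      rw [div_le_div_iff₀ hsa0 hsA0]; linarith only [hconc]
    have hlast : E < θa / sa := hEbound
    linarith only [hT_le_E, hTgeq, hfinal, hlast]
end

section
/- Let a ∈ (-1,1) and E > 0 satisfy E < arccos(-a)/√(1-a²). Let η = Σ_{i=1}^n p_i δ_{τ_i} be a finitely supported probability measure on [0,∞) (τ_i ≥ 0, p_i > 0, Σ p_i = 1) with mean Σ p_i τ_i = E. Then every complex root λ of the characteristic equation λ + a + Σ_{i=1}^n p_i e^{-λ τ_i} = 0 has negative real part. -/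
open MeasureTheory

private lemma sin_x_le (x : ℝ) (hx : 0 ≤ x) : Real.sin x ≤ x := by
  rcases eq_or_lt_of_le hx with h | h
  · simp [← h]
  · exact (Real.sin_lt h).le

/-- For `0 ≤ u ≤ φ ≤ π`, `sin φ - sin u ≤ sin (φ - u)`. -/
private lemma sin_diff_le (u φ : ℝ) (hu : 0 ≤ u) (huφ : u ≤ φ) (hφ : φ ≤ Real.pi) :
    Real.sin φ - Real.sin u ≤ Real.sin (φ - u) := by
  have h1 : Real.sin (u + (φ - u)) =
      Real.sin u * Real.cos (φ - u) + Real.cos u * Real.sin (φ - u) := Real.sin_add _ _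
  have h2 : u + (φ - u) = φ := by ring
  rw [h2] at h1
  have hsu : 0 ≤ Real.sin u := Real.sin_nonneg_of_nonneg_of_le_pi hu (huφ.trans hφ)
  have hsd : 0 ≤ Real.sin (φ - u) :=
    Real.sin_nonneg_of_nonneg_of_le_pi (by linarith) (by linarith)
  nlinarith [Real.cos_le_one (φ - u), Real.cos_le_one u]

/-- The strict tangent inequality: `φ cos φ < sin φ` on `(0, π)`. -/
private lemma tan_ineq (φ : ℝ) (h0 : 0 < φ) (hπ : φ < Real.pi) :
    φ * Real.cos φ < Real.sin φ := by
  have hs : 0 < Real.sin φ := Real.sin_pos_of_pos_of_lt_pi h0 hπ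
  rcases le_or_gt (Real.cos φ) 0 with hc | hc
  · nlinarith
  · have hφ2 : φ < Real.pi / 2 := by
      by_contra h
      push_neg at h
      have := Real.cos_nonpos_of_pi_div_two_le_of_le h (by nlinarith [Real.pi_pos])
      linarith
    have ht := Real.lt_tan h0 hφ2
    rw [Real.tan_eq_sin_div_cos] at ht
    calc φ * Real.cos φ < (Real.sin φ / Real.cos φ) * Real.cos φ := by
          exact mul_lt_mul_of_pos_right ht hc
      _ = Real.sin φ := by field_simp

/-- `ψ(u) = (1-cos u)(φ - sin φ cos φ) - sin²φ (u - sin u) ≥ 0` on `[0, φ]`. -/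
private lemma psi_nonneg (φ : ℝ) (h0 : 0 < φ) (hπ : φ < Real.pi) (u : ℝ)
    (hu : 0 ≤ u) (huφ : u ≤ φ) :
    Real.sin φ ^ 2 * (u - Real.sin u) ≤
      (1 - Real.cos u) * (φ - Real.sin φ * Real.cos φ) := by
  set s := Real.sin φ with hs
  set c := Real.cos φ with hc
  set K := φ - s * c with hK
  set f : ℝ → ℝ := fun v => (1 - Real.cos v) * K - s ^ 2 * (v - Real.sin v) with hf
  have hmono : MonotoneOn f (Set.Icc 0 φ) := by
    apply monotoneOn_of_deriv_nonneg (convex_Icc 0 φ)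
    · fun_prop
    · apply Differentiable.differentiableOn
      fun_prop
    · intro v hv
      rw [interior_Icc] at hv
      obtain ⟨hv0, hvφ⟩ := hv
      have hder : HasDerivAt f (Real.sin v * K - s ^ 2 * (1 - Real.cos v)) v := by
        have d1 : HasDerivAt (fun w : ℝ => 1 - Real.cos w) (Real.sin v) v := by
          simpa using (Real.hasDerivAt_cos v).const_sub 1
        have d2 : HasDerivAt (fun w : ℝ => w - Real.sin w) (1 - Real.cos v) v :=
          (hasDerivAt_id v).sub (Real.hasDerivAt_sin v)
        exact (d1.mul_const K).sub (d2.const_mul (s ^ 2))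
      rw [hder.deriv]
      -- show `0 ≤ sin v * (φ - s c) - s² (1 - cos v)`
      have hsv : 0 ≤ Real.sin v :=
        Real.sin_nonneg_of_nonneg_of_le_pi hv0.le (by linarith)
      have hsφ : 0 ≤ s := Real.sin_nonneg_of_nonneg_of_le_pi h0.le hπ.le
      have hsleφ : s ≤ φ := (sin_x_le φ h0.le)
      -- s (1 - cos v) ≤ sin v (1 - c)  from  s - sin v ≤ sin (φ - v)
      have hdiff : s - Real.sin v ≤ Real.sin (φ - v) := sin_diff_le v φ hv0.le hvφ.le hπ.le
      have hsub : Real.sin (φ - v) = s * Real.cos v - c * Real.sin v := Real.sin_sub φ v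
      have hA : s * (1 - Real.cos v) ≤ Real.sin v * (1 - c) := by
        rw [hsub] at hdiff; nlinarith
      have hcv : Real.cos v ≤ 1 := Real.cos_le_one v
      nlinarith [mul_le_mul_of_nonneg_left hA hsφ]
  have h1 := hmono (Set.left_mem_Icc.2 h0.le) (Set.mem_Icc.2 ⟨hu, huφ⟩) hu
  simp only [hf, Real.cos_zero, Real.sin_zero] at h1
  simp only [hK] at h1 ⊢
  nlinarith [h1]

/-- `G(θ) = θ s² - φ s sin θ + (s - φ c)(cos θ - c) ≥ 0` for `θ ≥ 0`, where
`s = sin φ`, `c = cos φ`, `φ ∈ (0, π)`. -/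
private lemma G_nonneg (φ : ℝ) (h0 : 0 < φ) (hπ : φ < Real.pi) (θ : ℝ) (hθ : 0 ≤ θ) :
    0 ≤ θ * Real.sin φ ^ 2 - φ * Real.sin φ * Real.sin θ
      + (Real.sin φ - φ * Real.cos φ) * (Real.cos θ - Real.cos φ) := by
  set s := Real.sin φ with hs
  set c := Real.cos φ with hc
  have hpyth : s ^ 2 + c ^ 2 = 1 := Real.sin_sq_add_cos_sq φ
  have hsφ : 0 ≤ s := Real.sin_nonneg_of_nonneg_of_le_pi h0.le hπ.le
  have hsleφ : s ≤ φ := sin_x_le φ h0.le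
  have hcle : c ≤ 1 := Real.cos_le_one φ
  have hscφ : 0 ≤ φ - s * c := by nlinarith [Real.neg_one_le_cos φ]
  have hid : θ * s ^ 2 - φ * s * Real.sin θ + (s - φ * c) * (Real.cos θ - c)
      = s ^ 2 * ((θ - φ) - Real.sin (θ - φ)) + (1 - Real.cos (θ - φ)) * (φ - s * c) := by
    rw [Real.sin_sub θ φ, Real.cos_sub θ φ]
    linear_combination (φ - s * Real.cos θ) * hpyth
  rw [hid]
  rcases le_or_gt φ θ with h | h
  · have h1 : Real.sin (θ - φ) ≤ θ - φ := sin_x_le _ (by linarith)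
    have h2 : Real.cos (θ - φ) ≤ 1 := Real.cos_le_one _
    nlinarith [sq_nonneg s]
  · have hpsi := psi_nonneg φ h0 hπ (φ - θ) (by linarith) (by linarith)
    have e1 : Real.sin (θ - φ) = -Real.sin (φ - θ) := by
      rw [← Real.sin_neg]; ring_nf
    have e2 : Real.cos (θ - φ) = Real.cos (φ - θ) := by
      rw [← Real.cos_neg]; ring_nf
    rw [e1, e2]
    nlinarith [hpsi]

/-- The pointwise inequality: for `θ, w ≥ 0`,
`0 ≤ θ s² - φ s e^{-w} sin θ + (s-φc) e^{-w} cos θ + ((s-φc)s/φ) w - (s-φc) c`. -/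
private lemma R_nonneg (φ : ℝ) (h0 : 0 < φ) (hπ : φ < Real.pi) (θ w : ℝ)
    (hθ : 0 ≤ θ) (hw : 0 ≤ w) :
    0 ≤ θ * Real.sin φ ^ 2 - φ * Real.sin φ * (Real.exp (-w) * Real.sin θ)
      + (Real.sin φ - φ * Real.cos φ) * (Real.exp (-w) * Real.cos θ)
      + ((Real.sin φ - φ * Real.cos φ) * Real.sin φ / φ) * w
      - (Real.sin φ - φ * Real.cos φ) * Real.cos φ := by
  set s := Real.sin φ with hs
  set c := Real.cos φ with hc
  set e := Real.exp (-w) with he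
  have he0 : 0 < e := Real.exp_pos _
  have he1 : e ≤ 1 := by
    rw [he, ← Real.exp_zero]
    exact Real.exp_le_exp.2 (by linarith)
  have hwe : 1 - e ≤ w := by
    have := Real.add_one_le_exp (-w)
    rw [← he] at this; linarith
  have hsφ : 0 ≤ s := Real.sin_nonneg_of_nonneg_of_le_pi h0.le hπ.le
  have htan : φ * c < s := tan_ineq φ h0 hπ
  have hβ : 0 ≤ s - φ * c := by linarith
  have hG := G_nonneg φ h0 hπ θ hθ
  rw [← hs, ← hc] at hG
  -- U = value of the linearized bound at e = 0
  have hU : 0 ≤ θ * s ^ 2 + (s - φ * c) ^ 2 / φ :=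
    add_nonneg (by positivity) (by positivity)
  have hcoef : 0 ≤ (s - φ * c) * s / φ := by positivity
  have hident : θ * s ^ 2 - φ * s * (e * Real.sin θ) + (s - φ * c) * (e * Real.cos θ)
      + ((s - φ * c) * s / φ) * w - (s - φ * c) * c
      = (1 - e) * (θ * s ^ 2 + (s - φ * c) ^ 2 / φ)
        + e * (θ * s ^ 2 - φ * s * Real.sin θ + (s - φ * c) * (Real.cos θ - c))
        + ((s - φ * c) * s / φ) * (w - (1 - e)) := by
    field_simp
    ring
  rw [hident]
  have t1 : 0 ≤ (1 - e) * (θ * s ^ 2 + (s - φ * c) ^ 2 / φ) :=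
    mul_nonneg (by linarith) hU
  have t2 : 0 ≤ e * (θ * s ^ 2 - φ * s * Real.sin θ + (s - φ * c) * (Real.cos θ - c)) :=
    mul_nonneg he0.le hG
  have t3 : 0 ≤ ((s - φ * c) * s / φ) * (w - (1 - e)) :=
    mul_nonneg hcoef (by linarith)
  linarith

set_option maxHeartbeats 1000000 in
/-- The main real-variable lemma: a characteristic root with `x ≥ 0`, `y ≥ 0`
leads to a contradiction. -/
private lemma key (a E : ℝ) (ha1 : -1 < a) (ha2 : a < 1) (hE : 0 < E)
    (hEs : E * Real.sqrt (1 - a ^ 2) < Real.arccos (-a))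
    (n : ℕ) (p τ : Fin n → ℝ) (hp : ∀ i, 0 < p i) (hτ : ∀ i, 0 ≤ τ i)
    (hsum : ∑ i, p i = 1) (hmean : ∑ i, p i * τ i = E)
    (x y : ℝ) (hx : 0 ≤ x) (hy : 0 ≤ y)
    (hRe : x + a + ∑ i, p i * (Real.exp (-(x * τ i)) * Real.cos (y * τ i)) = 0)
    (hIm : y = ∑ i, p i * (Real.exp (-(x * τ i)) * Real.sin (y * τ i))) : False := by
  set φ := Real.arccos (-a) with hφdef
  have hna1 : (-1 : ℝ) ≤ -a := by linarith
  have hna2 : -a ≤ 1 := by linarith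
  have hφ0 : 0 < φ := Real.arccos_pos.2 (by linarith)
  have hφπ : φ < Real.pi := by
    rcases lt_or_eq_of_le (Real.arccos_le_pi (-a)) with h | h
    · exact h
    · exact absurd (Real.arccos_eq_pi.1 h) (by linarith)
  have hcos : Real.cos φ = -a := Real.cos_arccos hna1 hna2
  have hsin : Real.sin φ = Real.sqrt (1 - a ^ 2) := by
    rw [hφdef, Real.sin_arccos]
    norm_num
  set s := Real.sin φ with hs
  set c := Real.cos φ with hc
  have hs0 : 0 < s := Real.sin_pos_of_pos_of_lt_pi hφ0 hφπ
  have hEφ : E * s < φ := by rw [hsin]; exact hEs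
  have htan : φ * c < s := tan_ineq φ hφ0 hφπ
  -- Sum of pointwise nonnegative quantities
  have hsum_nonneg : 0 ≤ ∑ i, p i *
      ((y * τ i) * s ^ 2 - φ * s * (Real.exp (-(x * τ i)) * Real.sin (y * τ i))
        + (s - φ * c) * (Real.exp (-(x * τ i)) * Real.cos (y * τ i))
        + ((s - φ * c) * s / φ) * (x * τ i) - (s - φ * c) * c) := by
    apply Finset.sum_nonneg
    intro i _
    apply mul_nonneg (hp i).le
    exact R_nonneg φ hφ0 hφπ (y * τ i) (x * τ i)
      (mul_nonneg hy (hτ i)) (mul_nonneg hx (hτ i))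
  -- Rewrite the sum using the constraints
  have hexpand : (∑ i, p i *
      ((y * τ i) * s ^ 2 - φ * s * (Real.exp (-(x * τ i)) * Real.sin (y * τ i))
        + (s - φ * c) * (Real.exp (-(x * τ i)) * Real.cos (y * τ i))
        + ((s - φ * c) * s / φ) * (x * τ i) - (s - φ * c) * c))
      = (y * s ^ 2 + ((s - φ * c) * s / φ) * x) * (∑ i, p i * τ i)
        - φ * s * (∑ i, p i * (Real.exp (-(x * τ i)) * Real.sin (y * τ i)))
        + (s - φ * c) * (∑ i, p i * (Real.exp (-(x * τ i)) * Real.cos (y * τ i)))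
        - (s - φ * c) * c * (∑ i, p i) := by
    rw [Finset.sum_congr rfl (fun i _ => show _ =
        (y * s ^ 2 + ((s - φ * c) * s / φ) * x) * (p i * τ i)
          - φ * s * (p i * (Real.exp (-(x * τ i)) * Real.sin (y * τ i)))
          + (s - φ * c) * (p i * (Real.exp (-(x * τ i)) * Real.cos (y * τ i)))
          - (s - φ * c) * c * p i from by ring)]
    simp only [Finset.sum_add_distrib, Finset.sum_sub_distrib, ← Finset.mul_sum]
  rw [hexpand, hmean, hsum, ← hIm] at hsum_nonneg
  have hcosSum : (∑ i, p i * (Real.exp (-(x * τ i)) * Real.cos (y * τ i))) = -(x + a) := by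
    linarith
  rw [hcosSum] at hsum_nonneg
  -- hsum_nonneg : 0 ≤ (y s² + ((s-φc)s/φ) x) E - φ s y + (s-φc)(-(x+a)) - (s-φc) c
  have hca : c = -a := hcos
  rw [hca] at hsum_nonneg htan
  -- Simplify: 0 ≤ s y (sE - φ) + ((s+φa) x / φ)(sE - φ)
  have hkey : 0 ≤ (s * y + (s + φ * a) * x / φ) * (s * E - φ) := by
    have hφne : φ ≠ 0 := ne_of_gt hφ0
    have : (y * s ^ 2 + ((s - φ * -a) * s / φ) * x) * E - φ * s * y
        + (s - φ * -a) * -(x + a) - (s - φ * -a) * -a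
        = (s * y + (s + φ * a) * x / φ) * (s * E - φ) := by
      field_simp
      ring
    linarith [hsum_nonneg, this.symm.le, this.le]
  have hneg : s * E - φ < 0 := by linarith
  have hpos : 0 ≤ s * y + (s + φ * a) * x / φ := by
    have h1 : 0 ≤ s * y := mul_nonneg hs0.le hy
    have h2 : 0 ≤ (s + φ * a) * x / φ := by
      apply div_nonneg _ hφ0.le
      apply mul_nonneg _ hx
      linarith
    linarith
  have hzero : s * y + (s + φ * a) * x / φ = 0 := by
    by_contra h
    have hlt : 0 < s * y + (s + φ * a) * x / φ := lt_of_le_of_ne hpos (Ne.symm h)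
    nlinarith
  have hy0 : y = 0 := by
    have h2 : 0 ≤ (s + φ * a) * x / φ := by
      apply div_nonneg _ hφ0.le
      exact mul_nonneg (by linarith) hx
    have h1 : s * y ≤ 0 := by linarith
    nlinarith
  have hx0 : x = 0 := by
    have h1 : 0 ≤ s * y := mul_nonneg hs0.le hy
    have h2 : (s + φ * a) * x / φ ≤ 0 := by linarith
    have h3 : (s + φ * a) * x ≤ 0 := by
      by_contra h
      push_neg at h
      have := div_pos h hφ0
      linarith
    have h4 : 0 < s + φ * a := by linarith
    nlinarith [mul_nonneg h4.le hx]
  -- now x = 0, y = 0: characteristic equation gives a + 1 = 0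
  rw [hx0, hy0] at hRe
  simp only [zero_mul, neg_zero, Real.exp_zero, Real.cos_zero, mul_one, one_mul] at hRe
  rw [hsum] at hRe
  linarith

set_option maxHeartbeats 1000000 in
/-- Paper Theorem 4.5: stability of a distribution of discrete delays. -/
theorem stmt2 (a E : ℝ) (ha : a ∈ Set.Ioo (-1 : ℝ) 1) (hE : 0 < E)
    (hEbound : E < Real.arccos (-a) / Real.sqrt (1 - a ^ 2))
    (n : ℕ) (hn : 1 ≤ n) (p τ : Fin n → ℝ)
    (hp : ∀ i, 0 < p i) (hτ : ∀ i, 0 ≤ τ i)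
    (hsum : ∑ i, p i = 1) (hmean : ∑ i, p i * τ i = E) :
    ∀ z : ℂ, z + (a : ℂ) + (∑ i, (p i : ℂ) * Complex.exp (-z * (τ i : ℂ))) = 0 →
      z.re < 0 := by
  obtain ⟨ha1, ha2⟩ := ha
  intro z hz
  by_contra hre
  push_neg at hre
  set x := z.re with hxdef
  set y := z.im with hydef
  have ha2' : 0 < 1 - a ^ 2 := by nlinarith
  have hsq : 0 < Real.sqrt (1 - a ^ 2) := Real.sqrt_pos.2 ha2'
  have hEs : E * Real.sqrt (1 - a ^ 2) < Real.arccos (-a) :=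
    (lt_div_iff₀ hsq).1 hEbound
  -- real and imaginary parts of the characteristic equation
  have hre_i : ∀ i, (Complex.exp (-z * (τ i : ℂ))).re
      = Real.exp (-(x * τ i)) * Real.cos (y * τ i) := by
    intro i
    rw [Complex.exp_re]
    simp [Complex.neg_re, Complex.neg_im, Complex.mul_re, Complex.mul_im,
      Complex.ofReal_re, Complex.ofReal_im, Real.cos_neg]
    rfl
  have him_i : ∀ i, (Complex.exp (-z * (τ i : ℂ))).im
      = -(Real.exp (-(x * τ i)) * Real.sin (y * τ i)) := by
    intro i
    rw [Complex.exp_im]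
    simp [Complex.neg_re, Complex.neg_im, Complex.mul_re, Complex.mul_im,
      Complex.ofReal_re, Complex.ofReal_im, Real.sin_neg]
    rfl
  have hRe : x + a + ∑ i, p i * (Real.exp (-(x * τ i)) * Real.cos (y * τ i)) = 0 := by
    have h0 := congrArg Complex.re hz
    simp only [Complex.add_re, Complex.ofReal_re, Complex.re_sum, Complex.mul_re,
      Complex.ofReal_im, Complex.zero_re, zero_mul, sub_zero] at h0
    simp only [hre_i] at h0
    exact h0
  have hIm : y + ∑ i, p i * -(Real.exp (-(x * τ i)) * Real.sin (y * τ i)) = 0 := by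
    have h0 := congrArg Complex.im hz
    simp only [Complex.add_im, Complex.ofReal_im, Complex.im_sum, Complex.mul_im,
      Complex.ofReal_re, Complex.zero_im, zero_mul, add_zero] at h0
    simp only [him_i] at h0
    exact h0
  have hIm' : y = ∑ i, p i * (Real.exp (-(x * τ i)) * Real.sin (y * τ i)) := by
    simp only [mul_neg, Finset.sum_neg_distrib] at hIm
    linarith
  rcases le_or_gt 0 y with hy | hy
  · exact key a E ha1 ha2 hE hEs n p τ hp hτ hsum hmean x y hre hy hRe hIm'
  · -- y < 0: use -y instead (cos is even, sin is odd)
    have hcos' : ∀ i, Real.cos (-y * τ i) = Real.cos (y * τ i) := fun i => by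
      rw [show -y * τ i = -(y * τ i) by ring, Real.cos_neg]
    have hsin' : ∀ i, Real.sin (-y * τ i) = -Real.sin (y * τ i) := fun i => by
      rw [show -y * τ i = -(y * τ i) by ring, Real.sin_neg]
    apply key a E ha1 ha2 hE hEs n p τ hp hτ hsum hmean x (-y) hre (by linarith)
    · simp only [hcos']
      exact hRe
    · simp only [hsin', mul_neg, Finset.sum_neg_distrib]
      linarith [hIm']
end

section
/- Let a, b ∈ ℝ and E ≥ 0, and consider the characteristic equation λ + a + b e^{-λE} = 0 associated with the single discrete delay E (η = δ_E). Every complex root λ of this equation has negative real part if and only if either (a > -b and a ≥ |b|), or (b > |a| and E < arccos(-a/b)/√(b²-a²)). -/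
open Real

lemma sinc_mono {α β : ℝ} (hα : 0 < α) (hαβ : α ≤ β) (hβ : β ≤ π) :
    α * Real.sin β ≤ β * Real.sin α := by
  have hβ0 : 0 < β := lt_of_lt_of_le hα hαβ
  have hd1 : α/β ≤ 1 := (div_le_one hβ0).2 hαβ
  have h := strictConcaveOn_sin_Icc.concaveOn.2 (show β ∈ Set.Icc 0 π from ⟨hβ0.le, hβ⟩)
    (show (0:ℝ) ∈ Set.Icc 0 π from ⟨le_rfl, Real.pi_pos.le⟩)
    (show (0:ℝ) ≤ α/β by positivity) (show (0:ℝ) ≤ 1 - α/β by linarith)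
    (by ring)
  simp only [smul_eq_mul, mul_zero, add_zero, Real.sin_zero] at h
  have h2 : α / β * β = α := div_mul_cancel₀ _ hβ0.ne'
  rw [h2] at h
  calc α * Real.sin β = (α / β * Real.sin β) * β := by field_simp
    _ ≤ Real.sin α * β := by nlinarith [h]
    _ = β * Real.sin α := mul_comm _ _

lemma mul_cos_lt_sin {φ : ℝ} (h0 : 0 < φ) (h : φ ≤ π/2) : φ * Real.cos φ < Real.sin φ := by
  rcases eq_or_lt_of_le h with h' | h'
  · rw [h', Real.cos_pi_div_two, Real.sin_pi_div_two]; simp [Real.pi_pos]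
  · have ht := Real.lt_tan h0 h'
    have hc : 0 < Real.cos φ := Real.cos_pos_of_mem_Ioo ⟨by linarith [Real.pi_pos], h'⟩
    rw [Real.tan_eq_sin_div_cos, lt_div_iff₀ hc] at ht
    exact ht

set_option maxHeartbeats 1000000 in
lemma caseB_noroot {a b E x y : ℝ} (hab : |a| < b) (hE : 0 ≤ E)
    (hEs : E < Real.arccos (-a/b) / Real.sqrt (b^2 - a^2))
    (hx : 0 ≤ x) (hy : 0 ≤ y)
    (h1 : x + a + b * Real.exp (-(x*E)) * Real.cos (y*E) = 0)
    (h2 : y = b * Real.exp (-(x*E)) * Real.sin (y*E)) : False := by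
  have hb : 0 < b := (abs_nonneg a).trans_lt hab
  have hba := abs_lt.1 hab
  have hc1 : (-1:ℝ) < -a/b := by rw [lt_div_iff₀ hb]; linarith
  have hc2 : -a/b < 1 := by rw [div_lt_one hb]; linarith
  set φ := Real.arccos (-a/b) with hφdef
  clear_value φ
  have hφpos : 0 < φ := hφdef ▸ Real.arccos_pos.2 hc2
  have hφpi : φ ≤ π := hφdef ▸ Real.arccos_le_pi _
  have hcosφ : Real.cos φ = -a/b := hφdef ▸ Real.cos_arccos hc1.le hc2.le
  have hbcos : b * Real.cos φ = -a := by rw [hcosφ]; field_simp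
  set ω := Real.sqrt (b^2 - a^2) with hωdef
  clear_value ω
  have hω : 0 < ω := hωdef ▸ Real.sqrt_pos.2 (by nlinarith only [hba.1, hba.2])
  have hbsin : b * Real.sin φ = ω := by
    rw [hφdef, hωdef, Real.sin_arccos]
    have hq : b^2 - a^2 = b^2 * (1 - (-a/b)^2) := by
      field_simp
    rw [hq, Real.sqrt_mul (sq_nonneg b), Real.sqrt_sq hb.le]
  have hsinφ : 0 < Real.sin φ := by nlinarith only [hbsin, hω, hb, Real.sin_nonneg_of_nonneg_of_le_pi (le_of_lt hφpos) hφpi]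
  have hEω : E * ω < φ := by rw [lt_div_iff₀ hω] at hEs; exact hEs
  have hexp : 0 < Real.exp (-(x*E)) := Real.exp_pos _
  have hexp1 : Real.exp (-(x*E)) ≤ 1 := Real.exp_le_one_iff.2 (by nlinarith only [mul_nonneg hx hE])
  rcases eq_or_lt_of_le hy with hy0 | hy0
  · -- y = 0 : real root case
    rw [← hy0] at h1
    simp only [zero_mul, Real.cos_zero, mul_one] at h1
    set t := b * E with htdef
    clear_value t
    rcases le_or_gt t 1 with ht | ht
    · rw [htdef] at ht
      have hg1 : b * (-(x*E) + 1) ≤ b * Real.exp (-(x*E)) :=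
        mul_le_mul_of_nonneg_left (Real.add_one_le_exp (-(x*E))) hb.le
      have hg2 : 0 ≤ (1 - b*E) * x := mul_nonneg (by linarith) hx
      linarith only [h1, hg1, hg2, hba.1]
    · have hEpos : 0 < E := by
        rcases eq_or_lt_of_le hE with h | h
        · exfalso; rw [htdef, ← h] at ht; simp at ht; linarith
        · exact h
      have hlog : Real.log t - x*E + 1 ≤ t * Real.exp (-(x*E)) := by
        have := Real.add_one_le_exp (Real.log t - x*E)
        rwa [sub_eq_add_neg, Real.exp_add, Real.exp_log (by linarith)] at this
      have hlogpos : 0 < Real.log t := Real.log_pos ht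
      -- need: -a*E < log t + 1
      have hkey : -a*E < Real.log t + 1 := by
        rcases le_or_gt 0 a with ha | ha
        · nlinarith only [mul_nonneg ha hE, hlogpos]
        · -- a < 0 : c > 0, φ < π/2
          have hφ2 : φ < π/2 := hφdef ▸ Real.arccos_lt_pi_div_two.2 (div_pos (by linarith) hb)
          have hcc := mul_cos_lt_sin hφpos hφ2.le
          -- t * sin φ = E * ω < φ
          have h5 : t * Real.sin φ < φ := by
            have : t * Real.sin φ = E * ω := by rw [htdef, ← hbsin]; ring
            linarith
          have hcφ : 0 < Real.cos φ := by rw [hcosφ]; exact div_pos (by linarith) hb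
          -- -a*E = cos φ * t
          have h6 : -a*E = Real.cos φ * t := by rw [htdef, ← hbcos]; ring
          -- cos φ * t * sin φ < cos φ * φ < sin φ  ⇒ cos φ * t < 1
          have h7a : Real.cos φ * (t * Real.sin φ) < Real.cos φ * φ :=
            mul_lt_mul_of_pos_left h5 hcφ
          have h7 : Real.cos φ * t < 1 := by nlinarith only [h7a, hcc, hsinφ]
          linarith only [h6, h7, hlogpos]
      have h1E : E*x + E*a + t * Real.exp (-(x*E)) = 0 := by
        rw [htdef]; linear_combination E * h1
      linarith only [hkey, hlog, h1E]
  · -- y > 0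
    set r := b * Real.exp (-(x*E)) with hrdef
    clear_value r
    have hr0 : 0 < r := by rw [hrdef]; exact mul_pos hb hexp
    have hrb : r ≤ b := by
      rw [hrdef]
      nlinarith only [mul_le_mul_of_nonneg_left hexp1 hb.le]
    have hsinθ : 0 < Real.sin (y*E) := by nlinarith only [h2, hy0, hr0]
    have hEpos : 0 < E := by
      rcases eq_or_lt_of_le hE with h | h
      · exfalso; rw [← h] at hsinθ; simp at hsinθ
      · exact h
    have hErs0 : E * (r * Real.sin (y*E)) = y * E := by linear_combination (-E) * h2
    set θ := y * E with hθdef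
    clear_value θ
    have hθpos : 0 < θ := by rw [hθdef]; exact mul_pos hy0 hEpos
    have hrc : r * Real.cos θ = -(x+a) := by linarith only [h1]
    have hErs : E * (r * Real.sin θ) = θ := hErs0
    clear hErs0
    rcases le_or_gt 0 a with ha | ha
    · -- a ≥ 0 : y ≤ ω and θ ≥ φ
      have hyω : y ≤ ω := by
        rw [hωdef]
        apply Real.le_sqrt_of_sq_le
        have hsc := Real.sin_sq_add_cos_sq θ
        have e1 : y^2 = r^2 - (x+a)^2 := by
          linear_combination (y + r*Real.sin θ) * h2 + ((x+a) - r*Real.cos θ) * hrc + r^2 * hsc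
        nlinarith only [e1, mul_self_le_mul_self hr0.le hrb, sq_nonneg x, mul_nonneg ha hx]
      have hcos : Real.cos θ ≤ Real.cos φ := by
        rcases le_or_gt (Real.cos θ) 0 with h | h
        · have hA : b * Real.cos θ ≤ r * Real.cos θ := by
            nlinarith only [mul_nonneg (sub_nonneg.2 hrb) (neg_nonneg.2 h)]
          have hB : b * Real.cos θ ≤ b * Real.cos φ := by linarith only [hrc, hbcos, hA, hx]
          exact (mul_le_mul_iff_right₀ hb).1 hB
        · nlinarith only [mul_pos hr0 h, hrc, hx, ha]
      have hθφ : φ ≤ θ := by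
        by_contra h
        push_neg at h
        have := Real.cos_lt_cos_of_nonneg_of_le_pi hθpos.le hφpi h
        linarith only [this, hcos]
      have hyE : y * E ≤ ω * E := mul_le_mul_of_nonneg_right hyω hE
      rw [hθdef] at hθφ
      linarith only [hyE, hEω, hθφ]
    · -- a < 0 : c > 0, φ < π/2
      have hφ2 : φ < π/2 := hφdef ▸ Real.arccos_lt_pi_div_two.2 (div_pos (by linarith) hb)
      have hcφ : 0 < Real.cos φ := by rw [hcosφ]; exact div_pos (by linarith) hb
      have hcc := mul_cos_lt_sin hφpos hφ2.le
      have hyb : y ≤ b := by nlinarith only [Real.sin_le_one θ, h2, hr0, hrb]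
      have hθ2 : θ < π/2 := by
        have hhalf : φ * Real.sin (π/2) ≤ (π/2) * Real.sin φ :=
          sinc_mono hφpos hφ2.le (by linarith [Real.pi_pos])
        rw [Real.sin_pi_div_two, mul_one] at hhalf
        have hbE : b * E * Real.sin φ < φ := by
          have : b * E * Real.sin φ = E * ω := by rw [← hbsin]; ring
          linarith only [this, hEω]
        have h12 : θ ≤ b * E := by
          rw [hθdef]; exact mul_le_mul_of_nonneg_right hyb hEpos.le
        nlinarith only [hbE, hhalf, hsinφ, h12]
      set s := x * E with hsdef
      clear_value s
      have hs : 0 ≤ s := by rw [hsdef]; exact mul_nonneg hx hE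
      have hbr : b = r * Real.exp s := by
        rw [hrdef, mul_assoc, ← Real.exp_add]
        simp [hsdef]
      -- (*) : cos φ * exp s * θ = s * sin θ + θ * cos θ
      have hstar : Real.cos φ * Real.exp s * θ = s * Real.sin θ + θ * Real.cos θ := by
        have hxe : s = -a*E - E*(r*Real.cos θ) := by rw [hsdef, hrc]; ring
        have h8 : s * Real.sin θ = (-a*E) * Real.sin θ - θ * Real.cos θ := by
          linear_combination Real.sin θ * hxe - Real.cos θ * hErs
        have hna : -a = Real.cos φ * (r * Real.exp s) := by rw [← hbr, ← hbcos]; ring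
        rw [hna] at h8
        linear_combination (-1 : ℝ) * h8 - Real.cos φ * Real.exp s * hErs
      rcases le_or_gt φ θ with hθφ | hθφ
      · -- E ≥ E*, contradiction
        have hmono : φ * Real.sin θ ≤ θ * Real.sin φ :=
          sinc_mono hφpos hθφ (by linarith [Real.pi_pos])
        have h9 : θ ≤ E * b * Real.sin θ := by
          nlinarith only [hErs, mul_nonneg (mul_nonneg (sub_nonneg.2 hrb) hEpos.le) hsinθ.le]
        have h10 : E * b * Real.sin θ * Real.sin φ = E * ω * Real.sin θ := by
          rw [← hbsin]; ring
        linarith only [mul_lt_mul_of_pos_right hEω hsinθ,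
          mul_le_mul_of_nonneg_right h9 hsinφ.le, h10, hmono]
      · -- θ < φ
        have hcc2 : Real.cos φ < Real.cos θ :=
          Real.cos_lt_cos_of_nonneg_of_le_pi hθpos.le hφpi hθφ
        have hs0 : 0 < s := by
          rcases eq_or_lt_of_le hs with h | h
          · exfalso
            rw [← h] at hstar
            simp at hstar
            nlinarith only [hstar, hcc2, hθpos]
          · exact h
        have hes : 0 < Real.exp s - 1 := by
          have := Real.add_one_lt_exp (x := s) hs0.ne'
          linarith only [this, hs0]
        have hstar2 : s * Real.sin θ < Real.cos φ * θ * (Real.exp s - 1) := by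
          have := mul_lt_mul_of_pos_left hcc2 hθpos
          linarith only [hstar, this]
        have hstar3 : θ * Real.exp s * Real.sin φ < φ * Real.sin θ := by
          have h10 : E * b * Real.sin θ = θ * Real.exp s := by
            rw [hbr]; linear_combination Real.exp s * hErs
          have h11 : E * b * Real.sin φ < φ := by
            have : E * b * Real.sin φ = E * ω := by rw [← hbsin]; ring
            linarith only [this, hEω]
          have h10b : E * b * Real.sin θ * Real.sin φ = θ * Real.exp s * Real.sin φ := by
            rw [h10]
          linarith only [h10b, mul_lt_mul_of_pos_right h11 hsinθ]
        have hes2 : Real.exp s - 1 ≤ s * Real.exp s := by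
          have hmul : Real.exp (-s) * Real.exp s = 1 := by rw [← Real.exp_add]; simp
          nlinarith only [Real.add_one_le_exp (-s), hmul, Real.exp_pos s]
        have c1 := mul_lt_mul_of_pos_left hstar3 hs0
        have c2 := mul_lt_mul_of_pos_left hstar2 hφpos
        have c3 := mul_lt_mul_of_pos_right hcc (mul_pos hθpos hes)
        have c4 := mul_le_mul_of_nonneg_left hes2 (mul_pos hsinφ hθpos).le
        linarith only [c1, c2, c3, c4]

lemma complex_root_of_real {a b E x1 : ℝ} (hroot : x1 + a + b * Real.exp (-(x1*E)) = 0) :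
    (x1:ℂ) + a + b * Complex.exp (-(x1:ℂ) * E) = 0 := by
  have h : ((x1 + a + b*Real.exp (-(x1*E)) : ℝ) : ℂ) = 0 := by rw [hroot]; norm_num
  push_cast [Complex.ofReal_exp] at h
  rw [neg_mul]
  exact h

lemma caseA_noroot {a b E : ℝ} (hE : 0 ≤ E) (h1 : -b < a) (h2 : |b| ≤ a) {z : ℂ}
    (hz : z + a + b * Complex.exp (-z * E) = 0) (hre : 0 ≤ z.re) : False := by
  have hzre : (-z*(E:ℂ)).re = -(z.re*E) := by simp
  have h3 : z + (a:ℂ) = -((b:ℂ) * Complex.exp (-z*E)) := by linear_combination hz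
  have habs : ‖z + (a:ℂ)‖ = |b| * Real.exp (-(z.re*E)) := by
    rw [h3, norm_neg, norm_mul, Complex.norm_exp, hzre, Complex.norm_real, Real.norm_eq_abs]
  have hexp1 : Real.exp (-(z.re*E)) ≤ 1 :=
    Real.exp_le_one_iff.2 (by nlinarith only [mul_nonneg hre hE])
  have hble : ‖z + (a:ℂ)‖ ≤ |b| := by
    rw [habs]
    nlinarith only [hexp1, abs_nonneg b, Real.exp_pos (-(z.re*E))]
  have hrele : z.re + a ≤ ‖z + (a:ℂ)‖ := by
    have := Complex.re_le_norm (z + a)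
    simpa using this
  have hre0 : z.re = 0 := le_antisymm (by linarith) hre
  have h4 : ‖z+(a:ℂ)‖ ^ 2 = (z.re + a)^2 + z.im^2 := by
    rw [Complex.sq_norm, Complex.normSq_apply]
    simp only [Complex.add_re, Complex.add_im, Complex.ofReal_re, Complex.ofReal_im, add_zero]
    ring
  have him2 : z.im^2 ≤ 0 := by
    nlinarith only [h4, hble, h2, norm_nonneg (z+(a:ℂ)), hre0,
      abs_nonneg b, le_trans (abs_nonneg b) h2]
  have him : z.im = 0 := by
    have h5 : z.im^2 = 0 := le_antisymm him2 (sq_nonneg _)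
    exact pow_eq_zero_iff two_ne_zero |>.1 h5
  have hz0 : z = 0 := Complex.ext hre0 him
  rw [hz0] at hz
  simp at hz
  have : a + b = 0 := by exact_mod_cast hz
  linarith

lemma exists_real_root {a b E : ℝ} (hE : 0 ≤ E) {x0 : ℝ} (hx0 : 0 ≤ x0)
    (hf : x0 + a + b * Real.exp (-(x0*E)) ≤ 0) :
    ∃ x1 : ℝ, 0 ≤ x1 ∧ x1 + a + b * Real.exp (-(x1*E)) = 0 := by
  set f : ℝ → ℝ := fun x => x + a + b * Real.exp (-(x*E)) with hfdef
  have hcont : Continuous f := by fun_prop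
  set x2 := x0 + |a| + |b| + 1 with hx2def
  have hx02 : x0 ≤ x2 := by
    have := abs_nonneg a; have := abs_nonneg b; simp [hx2def]; linarith
  have hexp1 : Real.exp (-(x2*E)) ≤ 1 := by
    apply Real.exp_le_one_iff.2
    nlinarith only [mul_nonneg (le_trans hx0 hx02) hE]
  have hbexp : -|b| ≤ b * Real.exp (-(x2*E)) := by
    nlinarith only [mul_nonneg (by linarith [neg_abs_le b] : (0:ℝ) ≤ b + |b|) (Real.exp_pos (-(x2*E))).le,
      mul_le_mul_of_nonneg_left hexp1 (abs_nonneg b)]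
  have hfx2 : 0 ≤ f x2 := by
    have h6 : f x2 = x2 + a + b * Real.exp (-(x2*E)) := rfl
    rw [h6, hx2def]
    have := neg_abs_le a
    linarith
  have hmem : (0:ℝ) ∈ Set.Icc (f x0) (f x2) := ⟨hf, hfx2⟩
  obtain ⟨x1, hx1mem, hfx1⟩ := intermediate_value_Icc hx02 hcont.continuousOn hmem
  exact ⟨x1, le_trans hx0 hx1mem.1, hfx1⟩

lemma exists_root_of_late {a b E : ℝ} (hab : |a| < b)
    (hEstar : Real.arccos (-a/b) / Real.sqrt (b^2 - a^2) ≤ E)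
    (hpos : ∀ x : ℝ, 0 ≤ x → 0 < x + a + b * Real.exp (-(x*E))) :
    ∃ z : ℂ, z + a + b * Complex.exp (-z * E) = 0 ∧ 0 ≤ z.re := by
  have hb : 0 < b := (abs_nonneg a).trans_lt hab
  have hba := abs_lt.1 hab
  have hc1 : (-1:ℝ) < -a/b := by rw [lt_div_iff₀ hb]; linarith
  have hc2 : -a/b < 1 := by rw [div_lt_one hb]; linarith
  set φ := Real.arccos (-a/b) with hφdef
  have hφpos : 0 < φ := hφdef ▸ Real.arccos_pos.2 hc2
  set ω := Real.sqrt (b^2 - a^2) with hωdef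
  have hω : 0 < ω := hωdef ▸ Real.sqrt_pos.2 (by nlinarith only [hba.1, hba.2])
  have hbsin : b * Real.sin φ = ω := by
    rw [hφdef, hωdef, Real.sin_arccos]
    have hq : b^2 - a^2 = b^2 * (1 - (-a/b)^2) := by field_simp
    rw [hq, Real.sqrt_mul (sq_nonneg b), Real.sqrt_sq hb.le]
  have hEω : φ ≤ E * ω := by
    rw [div_le_iff₀ hω] at hEstar; exact hEstar
  have hEpos : 0 < E := by
    rcases lt_or_ge 0 E with h | h
    · exact h
    · exfalso; nlinarith only [hEω, hφpos, hω, mul_nonpos_of_nonpos_of_nonneg h hω.le]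
  -- the function h
  set g : ℝ → ℝ := fun x => -(x+a) * Real.exp (x*E) / b with hgdef
  have hgcont : Continuous g := by fun_prop
  have hg1 : ∀ x : ℝ, 0 ≤ x → g x < 1 := by
    intro x hx
    have h5 := hpos x hx
    have hexp : 0 < Real.exp (x*E) := Real.exp_pos _
    have hee : Real.exp (-(x*E)) * Real.exp (x*E) = 1 := by
      rw [← Real.exp_add]; simp
    rw [hgdef]
    rw [div_lt_one hb]
    nlinarith only [h5, hexp, hee, hb, mul_pos (mul_pos hb hexp) h5]
  -- the set S
  set S := {x : ℝ | 0 ≤ x ∧ g x ≤ -1} with hSdef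
  have hSne : S.Nonempty := by
    refine ⟨|a| + b, ⟨by positivity, ?_⟩⟩
    have hx3 : b ≤ |a| + b + a := by have := neg_abs_le a; linarith
    have hexp : 1 ≤ Real.exp ((|a| + b)*E) :=
      Real.one_le_exp_iff.2 (by positivity)
    show -((|a| + b)+a) * Real.exp ((|a| + b)*E) / b ≤ -1
    rw [div_le_iff₀ hb]
    nlinarith only [hx3, hexp, hb]
  have hSclosed : IsClosed S := by
    have : S = Set.Ici (0:ℝ) ∩ g ⁻¹' (Set.Iic (-1)) := by
      ext x; simp only [hSdef, Set.mem_setOf_eq, Set.mem_inter_iff, Set.mem_Ici,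
        Set.mem_preimage, Set.mem_Iic]
    rw [this]
    exact isClosed_Ici.inter (isClosed_Iic.preimage hgcont)
  have hSbdd : BddBelow S := ⟨0, fun x hx => hx.1⟩
  set x1 := sInf S with hx1def
  have hx1S : x1 ∈ S := hSclosed.csInf_mem hSne hSbdd
  have hx10 : 0 ≤ x1 := hx1S.1
  have hgx1 : g x1 ≤ -1 := hx1S.2
  have hlt : ∀ x, 0 ≤ x → x < x1 → -1 < g x := by
    intro x hx hxx
    by_contra h
    push_neg at h
    have : x ∈ S := ⟨hx, h⟩
    have := csInf_le hSbdd this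
    rw [← hx1def] at this
    linarith
  -- the function G
  set G : ℝ → ℝ := fun x =>
    Real.arccos (g x) - E * (b * Real.exp (-(x*E)) * Real.sin (Real.arccos (g x))) with hGdef
  have hGcont : Continuous G := by
    apply Continuous.sub (Real.continuous_arccos.comp hgcont)
    exact continuous_const.mul
      ((continuous_const.mul (by fun_prop : Continuous fun x : ℝ => Real.exp (-(x*E)))).mul
        (Real.continuous_sin.comp (Real.continuous_arccos.comp hgcont)))
  have hG0 : G 0 ≤ 0 := by
    have hg0 : g 0 = -a/b := by rw [hgdef]; simp [neg_div]
    show Real.arccos (g 0) - E * (b * Real.exp (-(0*E)) * Real.sin (Real.arccos (g 0))) ≤ 0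
    rw [hg0, ← hφdef]
    simp only [zero_mul, neg_zero, Real.exp_zero, mul_one]
    have : E * (b * Real.sin φ) = E * ω := by rw [hbsin]
    linarith [hEω, this]
  have hGx1 : G x1 = π := by
    show Real.arccos (g x1) - E * (b * Real.exp (-(x1*E)) * Real.sin (Real.arccos (g x1))) = π
    rw [Real.arccos_eq_pi.2 hgx1, Real.sin_pi]
    ring
  have hmem : (0:ℝ) ∈ Set.Icc (G 0) (G x1) := ⟨hG0, by rw [hGx1]; exact Real.pi_pos.le⟩
  obtain ⟨xs, hxsmem, hGxs⟩ := intermediate_value_Icc hx10 hGcont.continuousOn hmem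
  have hxs0 : 0 ≤ xs := hxsmem.1
  have hxsne : xs ≠ x1 := by
    intro h
    rw [h, hGx1] at hGxs
    exact Real.pi_pos.ne' hGxs
  have hxslt : xs < x1 := lt_of_le_of_ne hxsmem.2 hxsne
  have hgxs1 : -1 < g xs := hlt xs hxs0 hxslt
  have hgxs2 : g xs < 1 := hg1 xs hxs0
  -- build the root
  set ys := Real.arccos (g xs) / E with hysdef
  have hyE : ys * E = Real.arccos (g xs) := by
    rw [hysdef]; field_simp
  have hcosys : Real.cos (ys * E) = g xs := by
    rw [hyE]; exact Real.cos_arccos hgxs1.le hgxs2.le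
  have hee : Real.exp (-(xs*E)) * Real.exp (xs*E) = 1 := by
    rw [← Real.exp_add]; simp
  have hre_eq : xs + a + b * (Real.exp (-(xs*E)) * Real.cos (ys*E)) = 0 := by
    rw [hcosys, hgdef]
    show xs + a + b * (Real.exp (-(xs*E)) * (-(xs+a) * Real.exp (xs*E) / b)) = 0
    field_simp
    first
    | linear_combination (-(xs+a)) * hee
    | linear_combination (xs+a) * hee
    | linear_combination (-(xs+a)) * b * hee
    | linear_combination (xs+a) * b * hee
    | nlinarith only [hee]
  have him_eq : ys - b * (Real.exp (-(xs*E)) * Real.sin (ys*E)) = 0 := by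
    have hG : Real.arccos (g xs) - E * (b * Real.exp (-(xs*E)) * Real.sin (Real.arccos (g xs))) = 0 := hGxs
    rw [← hyE] at hG
    have : E * (ys - b * (Real.exp (-(xs*E)) * Real.sin (ys*E))) = 0 := by
      linear_combination hG
    rcases mul_eq_zero.1 this with h | h
    · exact absurd h hEpos.ne'
    · exact h
  refine ⟨⟨xs, ys⟩, ?_, hxs0⟩
  apply Complex.ext
  · have hzre : ((⟨xs, ys⟩:ℂ) + a + b * Complex.exp (-(⟨xs, ys⟩:ℂ) * E)).re
        = xs + a + b * (Real.exp (-(xs*E)) * Real.cos (ys*E)) := by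
      simp only [Complex.add_re, Complex.mul_re, Complex.ofReal_re, Complex.ofReal_im,
        Complex.exp_re, Complex.exp_im, Complex.neg_re, Complex.neg_im, Complex.mul_im]
      simp [Real.cos_neg, Real.sin_neg]
      try ring
    rw [hzre]
    simpa using hre_eq
  · have hzim : ((⟨xs, ys⟩:ℂ) + a + b * Complex.exp (-(⟨xs, ys⟩:ℂ) * E)).im
        = ys - b * (Real.exp (-(xs*E)) * Real.sin (ys*E)) := by
      simp only [Complex.add_im, Complex.mul_im, Complex.ofReal_re, Complex.ofReal_im,
        Complex.exp_re, Complex.exp_im, Complex.neg_re, Complex.neg_im, Complex.mul_re]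
      simp [Real.cos_neg, Real.sin_neg]
      try ring
    rw [hzim]
    simpa using him_eq

/-- Paper Theorem 2.5 (Hayes): stability for a single discrete delay. -/
theorem stmt3 (a b E : ℝ) (hE : 0 ≤ E) :
    (∀ z : ℂ, z + (a : ℂ) + (b : ℂ) * Complex.exp (-z * (E : ℂ)) = 0 → z.re < 0) ↔
    ((-b < a ∧ |b| ≤ a) ∨
      (|a| < b ∧ E < Real.arccos (-a / b) / Real.sqrt (b ^ 2 - a ^ 2))) := by
  constructor
  · intro hstab
    by_contra hR
    push_neg at hR
    obtain ⟨hR1, hR2⟩ := hR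
    have hrealroot : ∀ x0 : ℝ, 0 ≤ x0 → x0 + a + b * Real.exp (-(x0*E)) ≤ 0 → False := by
      intro x0 hx0 hf
      obtain ⟨x1, hx10, hroot⟩ := exists_real_root hE hx0 hf
      have := hstab ((x1:ℂ)) (by
        have h := complex_root_of_real hroot
        rw [neg_mul] at h ⊢
        exact h)
      rw [Complex.ofReal_re] at this
      linarith
    rcases le_or_gt (a+b) 0 with hab | hab
    · exact hrealroot 0 le_rfl (by simp; linarith)
    · have hba : -b < a := by linarith
      have h2 : a < |b| := hR1 hba
      have hb : 0 < b := by
        rcases le_or_gt b 0 with h | h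
        · rw [abs_of_nonpos h] at h2; linarith
        · exact h
      have habs : |a| < b := abs_lt.2 ⟨hba, by rwa [abs_of_pos hb] at h2⟩
      have hEstar : Real.arccos (-a/b) / Real.sqrt (b^2 - a^2) ≤ E := hR2 habs
      by_cases hex : ∃ x : ℝ, 0 ≤ x ∧ x + a + b * Real.exp (-(x*E)) ≤ 0
      · obtain ⟨x0, hx0, hf⟩ := hex
        exact hrealroot x0 hx0 hf
      · push_neg at hex
        obtain ⟨z, hzeq, hzre⟩ := exists_root_of_late habs hEstar hex
        exact absurd (hstab z hzeq) (not_lt.2 hzre)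
  · rintro (⟨h1, h2⟩ | ⟨h1, h2⟩) z hz
    · by_contra hre
      push_neg at hre
      exact caseA_noroot hE h1 h2 hz hre
    · by_contra hre
      push_neg at hre
      -- extract the real and imaginary parts
      have hzre : (-z*(E:ℂ)).re = -(z.re*E) := by simp
      have hzim : (-z*(E:ℂ)).im = -(z.im*E) := by simp
      have he_re : (Complex.exp (-z*(E:ℂ))).re
          = Real.exp (-(z.re*E)) * Real.cos (z.im*E) := by
        rw [Complex.exp_re, hzre, hzim, Real.cos_neg]
      have he_im : (Complex.exp (-z*(E:ℂ))).im
          = -(Real.exp (-(z.re*E)) * Real.sin (z.im*E)) := by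
        rw [Complex.exp_im, hzre, hzim, Real.sin_neg]; ring
      have hre_eq : z.re + a + b * (Real.exp (-(z.re*E)) * Real.cos (z.im*E)) = 0 := by
        have h := congrArg Complex.re hz
        simp only [Complex.add_re, Complex.mul_re, Complex.ofReal_re, Complex.ofReal_im,
          Complex.zero_re, zero_mul, sub_zero] at h
        rw [he_re] at h
        linarith [h]
      have him_eq : z.im - b * (Real.exp (-(z.re*E)) * Real.sin (z.im*E)) = 0 := by
        have h := congrArg Complex.im hz
        simp only [Complex.add_im, Complex.mul_im, Complex.ofReal_re, Complex.ofReal_im,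
          Complex.zero_im, zero_mul, add_zero, Complex.ofReal_im] at h
        rw [he_im] at h
        linarith [h]
      -- pass to y = |z.im|
      set y := |z.im| with hydef
      have hcosy : Real.cos (y*E) = Real.cos (z.im*E) := by
        rcases abs_cases z.im with ⟨h, _⟩ | ⟨h, _⟩
        · rw [hydef, h]
        · rw [hydef, h, neg_mul, Real.cos_neg]
      have hsiny : y = b * Real.exp (-(z.re*E)) * Real.sin (y*E) := by
        rcases abs_cases z.im with ⟨h, _⟩ | ⟨h, _⟩
        · rw [hydef, h]; linarith [him_eq, mul_assoc b (Real.exp (-(z.re*E))) (Real.sin (z.im*E))]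
        · rw [hydef, h, neg_mul, Real.sin_neg]
          have := him_eq
          nlinarith only [him_eq]
      have heq1 : z.re + a + b * Real.exp (-(z.re*E)) * Real.cos (y*E) = 0 := by
        rw [hcosy]; linarith [hre_eq, mul_assoc b (Real.exp (-(z.re*E))) (Real.cos (z.im*E))]
      exact caseB_noroot h1 hE h2 hre (abs_nonneg z.im) heq1 hsiny
end

section
/- Let a, b ∈ ℝ and let η be a Borel probability measure on [0,∞) with ∫₀^∞ e^{ντ} dη(τ) < ∞ for some ν > 0. If a ≤ -b, then the characteristic equation λ + a + b ∫₀^∞ e^{-λτ} dη(τ) = 0 has a real root λ ≥ 0; moreover, if a < -b, it has a real root λ > 0. -/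
open MeasureTheory

section aux

variable (a b : ℝ) (η : Measure ℝ) [IsProbabilityMeasure η]

theorem aux_main (hsupp : η (Set.Iio 0) = 0)
    (hν : ∃ ν > 0, Integrable (fun τ => Real.exp (ν * τ)) η) :
    a + b ≤ 0 → ∃ l : ℝ, 0 ≤ l ∧ (a + b < 0 → l ≠ 0) ∧
      l + a + b * (∫ τ, Real.exp (-l * τ) ∂η) = 0 := by
  intro hc
  obtain ⟨ν, hν0, hint⟩ := hν
  have hae : ∀ᵐ τ ∂η, 0 ≤ τ := by
    rw [ae_iff]
    convert hsupp using 2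
    ext τ; simp [Set.mem_Iio]
  set I : ℝ → ℝ := fun l => ∫ τ, Real.exp (-l * τ) ∂η with hI
  -- integrability for l ≥ -ν
  have hbound : ∀ l : ℝ, -ν ≤ l → ∀ᵐ τ ∂η, ‖Real.exp (-l * τ)‖ ≤ Real.exp (ν * τ) := by
    intro l hl
    filter_upwards [hae] with τ hτ
    rw [Real.norm_eq_abs, Real.abs_exp, Real.exp_le_exp]
    nlinarith
  have hmeas : ∀ l : ℝ, AEStronglyMeasurable (fun τ => Real.exp (-l * τ)) η := fun l =>
    (Real.continuous_exp.comp (continuous_const.mul continuous_id)).aestronglyMeasurable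
  have hinteg : ∀ l : ℝ, -ν ≤ l → Integrable (fun τ => Real.exp (-l * τ)) η := fun l hl =>
    Integrable.mono' hint (hmeas l) (hbound l hl)
  -- I is continuous at every l₀ > -ν
  have hcont : ∀ l₀ : ℝ, -ν < l₀ → ContinuousAt I l₀ := by
    intro l₀ hl₀
    apply continuousAt_of_dominated (bound := fun τ => Real.exp (ν * τ))
    · exact Filter.Eventually.of_forall hmeas
    · filter_upwards [Ioi_mem_nhds hl₀] with l hl
      exact hbound l (le_of_lt hl)
    · exact hint
    · filter_upwards with τ
      exact (Real.continuous_exp.comp ((continuous_id.neg).mul continuous_const)).continuousAt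
  -- bounds on I for l ≥ 0
  have hI01 : ∀ l : ℝ, 0 ≤ l → 0 ≤ I l ∧ I l ≤ 1 := by
    intro l hl
    constructor
    · apply integral_nonneg
      intro τ; positivity
    · calc I l ≤ ∫ _, (1 : ℝ) ∂η := by
            apply integral_mono_ae (hinteg l (by linarith)) (integrable_const 1)
            filter_upwards [hae] with τ hτ
            rw [Real.exp_le_one_iff]
            nlinarith
        _ = 1 := by simp
  have hI0 : I 0 = 1 := by
    simp [hI]
  set g : ℝ → ℝ := fun l => l + a + b * I l with hg
  have hg0 : g 0 = a + b := by simp [hg, hI0]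
  set L : ℝ := |b| + |a| + 1 with hL
  have hL0 : (0:ℝ) ≤ L := by positivity
  have hgL : 0 ≤ g L := by
    have h1 := hI01 L hL0
    have h2 : b * I L ≥ -|b| := by
      rcases le_or_gt 0 b with hb | hb
      · nlinarith [abs_nonneg b]
      · nlinarith [neg_abs_le b, abs_nonneg b]
    have := abs_nonneg a
    have := neg_abs_le a
    simp only [hg]
    nlinarith
  have hgcont : ContinuousOn g (Set.Icc 0 L) := by
    apply ContinuousOn.add (continuousOn_id.add continuousOn_const)
    apply continuousOn_const.mul
    intro x hx
    exact ((hcont x (by linarith [hx.1])).continuousWithinAt)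
  have hmem : (0:ℝ) ∈ Set.Icc (g 0) (g L) := ⟨by rw [hg0]; exact hc, hgL⟩
  obtain ⟨l, hlmem, hgl⟩ := intermediate_value_Icc hL0 hgcont hmem
  refine ⟨l, hlmem.1, ?_, hgl⟩
  intro hlt hl0
  rw [hl0, hg0] at hgl
  linarith

end aux

/-- Paper statement (i) after Theorem 2.5: when `a ≤ -b` the characteristic
equation has a nonnegative real root, positive when `a < -b`. -/
theorem stmt4 (a b : ℝ) (η : Measure ℝ) [IsProbabilityMeasure η]
    (hsupp : η (Set.Iio 0) = 0)
    (hν : ∃ ν > 0, Integrable (fun τ => Real.exp (ν * τ)) η)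
    (hab : a ≤ -b) :
    (∃ l : ℝ, 0 ≤ l ∧
      (l : ℂ) + (a : ℂ) + (b : ℂ) * (∫ τ, Complex.exp (-(l : ℂ) * τ) ∂η) = 0) ∧
    (a < -b → ∃ l : ℝ, 0 < l ∧
      (l : ℂ) + (a : ℂ) + (b : ℂ) * (∫ τ, Complex.exp (-(l : ℂ) * τ) ∂η) = 0) := by
  have key : ∀ l : ℝ, (∫ τ, Complex.exp (-(l : ℂ) * τ) ∂η)
      = ((∫ τ, Real.exp (-l * τ) ∂η : ℝ) : ℂ) := by
    intro l
    have h1 : (fun τ : ℝ => Complex.exp (-(l:ℂ) * τ)) = fun τ : ℝ => ((Real.exp (-l * τ) : ℝ) : ℂ) := by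
      ext τ; rw [Complex.ofReal_exp]; push_cast; ring_nf
    rw [h1]; exact integral_ofReal
  constructor
  · obtain ⟨l, hl0, -, hl⟩ := aux_main a b η hsupp hν (by linarith)
    exact ⟨l, hl0, by rw [key]; exact_mod_cast congrArg (Complex.ofReal ·) hl⟩
  · intro h
    obtain ⟨l, hl0, hne, hl⟩ := aux_main a b η hsupp hν (by linarith)
    refine ⟨l, lt_of_le_of_ne hl0 (Ne.symm (hne (by linarith))), ?_⟩
    rw [key]; exact_mod_cast congrArg (Complex.ofReal ·) hl
end

section
/- Let a, b ∈ ℝ with a ≥ |b| and a > -b, and let η be a Borel probability measure on [0,∞) with ∫₀^∞ e^{ντ} dη(τ) < ∞ for some ν > 0. Then the characteristic equation λ + a + b ∫₀^∞ e^{-λτ} dη(τ) = 0 has no complex root λ with positive real part. -/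
open MeasureTheory

/-- Paper statement (ii) after Theorem 2.5: when `a ≥ |b|` and `a > -b` the
characteristic equation has no root with positive real part. -/
theorem stmt5 (a b : ℝ) (ha : |b| ≤ a) (hab : -b < a)
    (η : Measure ℝ) [IsProbabilityMeasure η]
    (hsupp : η (Set.Iio 0) = 0)
    (hν : ∃ ν > 0, Integrable (fun τ => Real.exp (ν * τ)) η) :
    ¬ ∃ z : ℂ, 0 < z.re ∧
      z + (a : ℂ) + (b : ℂ) * (∫ τ, Complex.exp (-z * τ) ∂η) = 0 := by
  rintro ⟨z, hz, heq⟩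
  set I := ∫ τ, Complex.exp (-z * τ) ∂η with hI
  have hae : ∀ᵐ τ ∂η, 0 ≤ τ := by
    rw [ae_iff]
    have : {τ : ℝ | ¬ 0 ≤ τ} = Set.Iio 0 := by ext τ; simp
    rw [this]; exact hsupp
  have hbound : ‖I‖ ≤ 1 := by
    have h1 : ‖I‖ ≤ 1 * (η Set.univ).toReal := by
      apply norm_integral_le_of_norm_le_const
      filter_upwards [hae] with τ hτ
      rw [Complex.norm_exp]
      have : (-z * τ).re = -(z.re * τ) := by simp [Complex.mul_re]
      rw [this]
      exact Real.exp_le_one_iff.mpr (neg_nonpos.mpr (mul_nonneg hz.le hτ))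
    simpa using h1
  have hre : z.re + a + b * I.re = 0 := by
    have := congrArg Complex.re heq
    simpa [Complex.add_re, Complex.mul_re] using this
  have hIre : |I.re| ≤ 1 := (Complex.abs_re_le_norm I).trans hbound
  have : |b * I.re| ≤ a := by
    rw [abs_mul]
    calc |b| * |I.re| ≤ |b| * 1 := by
          exact mul_le_mul_of_nonneg_left hIre (abs_nonneg b)
      _ = |b| := mul_one _
      _ ≤ a := ha
  have := neg_le_of_abs_le this
  linarith
end

section
/- Let a ∈ (-1,1) and let η be a Borel probability measure on [0,∞) with ∫₀^∞ e^{ντ} dη(τ) < ∞ for some ν > 0. If the characteristic equation λ + a + ∫₀^∞ e^{-λτ} dη(τ) = 0 has a root λ with Re(λ) ≥ 0, then there exists ω_s ∈ (0, ω_c], where ω_c = √(1-a²), such that C(ω_s) = ∫₀^∞ cos(ω_s τ) dη(τ) = -a and S(ω_s) = ∫₀^∞ sin(ω_s τ) dη(τ) ≥ ω_s. -/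
open MeasureTheory

namespace Stmt6Aux
open Complex Metric Set Filter

noncomputable def Dfun (a : ℝ) (η : Measure ℝ) (t : ℝ) (z : ℂ) : ℂ :=
  z + a + ∫ (τ : ℝ), Complex.exp (-z * (t * τ)) ∂η

lemma exp_sub_one_bound (w : ℂ) : ‖Complex.exp w - 1‖ ≤ 2 * ‖w‖ * Real.exp ‖w‖ := by
  have hnn := norm_nonneg w
  have hE : ‖Complex.exp w‖ ≤ Real.exp ‖w‖ := by
    rw [Complex.norm_exp]
    exact Real.exp_le_exp.2 (le_trans (le_abs_self _) (Complex.abs_re_le_norm w))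
  have h3 : (1:ℝ) ≤ Real.exp ‖w‖ := Real.one_le_exp hnn
  rcases le_or_gt ‖w‖ 1 with h | h
  · have h1 : ‖Complex.exp w - 1‖ ≤ 2 * ‖w‖ :=
      Complex.norm_exp_sub_one_le h
    nlinarith [norm_nonneg (Complex.exp w - 1), norm_nonneg w]
  · have h1 : ‖Complex.exp w - 1‖ ≤ ‖Complex.exp w‖ + 1 := by
      calc ‖Complex.exp w - 1‖ ≤ ‖Complex.exp w‖ + ‖(1:ℂ)‖ := norm_sub_le _ _
        _ = ‖Complex.exp w‖ + 1 := by norm_num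
    nlinarith [Real.exp_pos ‖w‖]

/-- persistence of zeros via maximum modulus principle -/
lemma zero_persist {f g : ℂ → ℂ} {z₀ : ℂ} {r m : ℝ} (hr : 0 < r) (hm : 0 < m)
    (hsphere : ∀ z ∈ Metric.sphere z₀ r, m ≤ ‖f z‖)
    (hfz₀ : f z₀ = 0)
    (hclose : ∀ z ∈ Metric.closedBall z₀ r, ‖g z - f z‖ < m/2)
    (hgd : DifferentiableOn ℂ g (Metric.ball z₀ r))
    (hgc : ContinuousOn g (Metric.closedBall z₀ r)) :
    ∃ z ∈ Metric.closedBall z₀ r, g z = 0 := by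
  by_contra hcon
  push_neg at hcon
  have hball_sub : Metric.ball z₀ r ⊆ Metric.closedBall z₀ r := Metric.ball_subset_closedBall
  have hinv : DiffContOnCl ℂ (fun z => (g z)⁻¹) (Metric.ball z₀ r) := by
    constructor
    · intro z hz
      exact (hgd z hz).inv (hcon z (hball_sub hz))
    · rw [closure_ball z₀ hr.ne']
      exact hgc.inv₀ fun z hz => hcon z hz
  have hfr : ∀ z ∈ frontier (Metric.ball z₀ r), ‖(g z)⁻¹‖ ≤ (m/2)⁻¹ := by
    intro z hz
    rw [frontier_ball z₀ hr.ne'] at hz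
    have h1 : m ≤ ‖f z‖ := hsphere z hz
    have h2 : ‖g z - f z‖ < m/2 := hclose z (Metric.sphere_subset_closedBall hz)
    have h3 : m/2 ≤ ‖g z‖ := by
      have := norm_sub_norm_le (g z) (f z)  -- ‖g‖ - ‖f‖ ≤ ‖g - f‖ ; need other direction
      have h4 := norm_sub_norm_le (f z) (g z)
      rw [norm_sub_rev] at h4
      linarith
    rw [norm_inv]
    exact inv_anti₀ (by linarith) h3
  have hz₀cl : z₀ ∈ closure (Metric.ball z₀ r) := by
    rw [closure_ball z₀ hr.ne']
    exact Metric.mem_closedBall_self hr.le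
  have hmax := Complex.norm_le_of_forall_mem_frontier_norm_le
    Metric.isBounded_ball hinv hfr hz₀cl
  have hg0 : ‖g z₀‖ < m/2 := by
    have := hclose z₀ (Metric.mem_closedBall_self hr.le)
    rwa [hfz₀, sub_zero] at this
  have hgne : g z₀ ≠ 0 := hcon z₀ (Metric.mem_closedBall_self hr.le)
  rw [norm_inv] at hmax
  have hpos : 0 < ‖g z₀‖ := norm_pos_iff.2 hgne
  have : m/2 ≤ ‖g z₀‖ := by
    have hm2 : (0:ℝ) < m/2 := by linarith
    rwa [inv_le_inv₀ hpos hm2] at hmax  -- might be inv_le_inv_iff name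
  linarith




section basic
variable {η : Measure ℝ} [IsProbabilityMeasure η]

lemma ae_nonneg (hsupp : η (Set.Iio (0:ℝ)) = 0) : ∀ᵐ (τ : ℝ) ∂η, 0 ≤ τ := by
  rw [ae_iff]; convert hsupp using 2; ext τ; simp [Set.mem_Iio, not_le]

lemma meas_aux (t : ℝ) (z : ℂ) :
    AEStronglyMeasurable (fun τ : ℝ => Complex.exp (-z * (t * τ))) η := by
  apply Continuous.aestronglyMeasurable; fun_prop

lemma norm_integrand (t : ℝ) (z : ℂ) (τ : ℝ) :
    ‖Complex.exp (-z * (t * τ))‖ = Real.exp (-(z.re) * (t * τ)) := by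
  rw [Complex.norm_exp]
  congr 1
  have : ((t:ℂ) * (τ:ℂ)) = ((t*τ : ℝ) : ℂ) := by push_cast; ring
  rw [this]; simp [Complex.mul_re]

variable (hsupp : η (Set.Iio (0:ℝ)) = 0)
include hsupp

lemma bound_one {t : ℝ} (ht : 0 ≤ t) {z : ℂ} (hz : 0 ≤ z.re) :
    ∀ᵐ (τ : ℝ) ∂η, ‖Complex.exp (-z * (t * τ))‖ ≤ 1 := by
  filter_upwards [ae_nonneg hsupp] with τ hτ
  rw [norm_integrand, Real.exp_le_one_iff]
  have : 0 ≤ z.re * (t * τ) := mul_nonneg hz (mul_nonneg ht hτ)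
  linarith

lemma integrable_exp {t : ℝ} (ht : 0 ≤ t) {z : ℂ} (hz : 0 ≤ z.re) :
    Integrable (fun τ : ℝ => Complex.exp (-z * (t * τ))) η :=
  (integrable_const (1:ℝ)).mono' (meas_aux t z) (bound_one hsupp ht hz)

lemma norm_integral_le_one {t : ℝ} (ht : 0 ≤ t) {z : ℂ}
    (hz : 0 ≤ z.re) : ‖∫ (τ : ℝ), Complex.exp (-z * (t * τ)) ∂η‖ ≤ 1 := by
  have := norm_integral_le_of_norm_le_const (μ := η) (bound_one hsupp ht hz)
  simpa using this

lemma root_bound {a : ℝ} {t : ℝ} (ht : 0 ≤ t) {z : ℂ}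
    (hz : 0 ≤ z.re) (hD : Dfun a η t z = 0) : ‖z‖ ≤ |a| + 1 := by
  have hz' : z = -((a:ℂ) + ∫ (τ : ℝ), Complex.exp (-z * (t * τ)) ∂η) := by
    rw [Dfun] at hD; linear_combination hD
  have h1 : ‖z‖ = ‖(a:ℂ) + ∫ (τ : ℝ), Complex.exp (-z * (t * τ)) ∂η‖ := by
    conv_lhs => rw [hz']
    rw [norm_neg]
  have h2 := norm_integral_le_one hsupp ht hz
  have h3 := norm_add_le ((a:ℂ)) (∫ (τ : ℝ), Complex.exp (-z * (t * τ)) ∂η)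
  rw [h1]
  simp only [Complex.norm_real, Real.norm_eq_abs] at h3
  linarith


lemma contAt {ν : ℝ} (hν0 : 0 < ν)
    (hνint : Integrable (fun τ => Real.exp (ν * τ)) η) (a : ℝ) {p₀ : ℝ × ℂ}
    (hp : -ν < p₀.1 * p₀.2.re) :
    ContinuousAt (fun p : ℝ × ℂ => Dfun a η p.1 p.2) p₀ := by
  have hI : ContinuousAt (fun p : ℝ × ℂ => ∫ (τ:ℝ), Complex.exp (-p.2 * (p.1 * τ)) ∂η) p₀ := by
    apply continuousAt_of_dominated (bound := fun τ => Real.exp (ν * τ))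
    · exact Eventually.of_forall (fun p => meas_aux p.1 p.2)
    · have hopen : IsOpen {p : ℝ × ℂ | -ν < p.1 * p.2.re} := by
        have hcont : Continuous fun p : ℝ × ℂ => p.1 * p.2.re := by fun_prop
        exact isOpen_lt continuous_const hcont
      filter_upwards [hopen.mem_nhds hp] with p hp'
      filter_upwards [ae_nonneg hsupp] with τ hτ
      rw [norm_integrand, Real.exp_le_exp]
      have h1 : 0 ≤ (ν + p.1 * p.2.re) * τ := mul_nonneg (by linarith) hτ
      nlinarith
    · exact hνint
    · refine Eventually.of_forall (fun τ => ?_)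
      apply Continuous.continuousAt
      fun_prop
  have h2 : ContinuousAt (fun p : ℝ × ℂ => p.2 + (a:ℂ)) p₀ := by fun_prop
  exact h2.add hI

lemma contAt_z {ν : ℝ} (hν0 : 0 < ν)
    (hνint : Integrable (fun τ => Real.exp (ν * τ)) η) (a : ℝ) {t : ℝ} (ht : 0 ≤ t)
    {z : ℂ} (hz : 0 ≤ z.re) : ContinuousAt (Dfun a η t) z := by
  have h := contAt hsupp hν0 hνint a (p₀ := (t, z))
    (by simpa using lt_of_lt_of_le (neg_neg_iff_pos.2 hν0) (mul_nonneg ht hz))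
  exact h.comp ((continuous_const.prodMk continuous_id).continuousAt)

lemma diffAt (a : ℝ) {t : ℝ} (ht : 0 ≤ t) {z₀ : ℂ} (hz : 0 < z₀.re) :
    DifferentiableAt ℂ (Dfun a η t) z₀ := by
  set c : ℝ := z₀.re / 2 with hc
  have hc0 : 0 < c := half_pos hz
  have key := hasDerivAt_integral_of_dominated_loc_of_deriv_le (μ := η) (x₀ := z₀)
    (F := fun (z : ℂ) (τ:ℝ) => Complex.exp (-z * (t * τ)))
    (F' := fun (z : ℂ) (τ:ℝ) => Complex.exp (-z * (t * τ)) * (-((t * τ : ℝ) : ℂ)))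
    (bound := fun _ => 1/c) (s := Metric.ball z₀ c) (Metric.ball_mem_nhds z₀ hc0)
    (Eventually.of_forall (fun z => meas_aux t z))
    (by
      apply (integrable_const (1:ℝ)).mono' (meas_aux t z₀)
      filter_upwards [ae_nonneg hsupp] with τ hτ
      rw [norm_integrand, Real.exp_le_one_iff]
      have : 0 ≤ z₀.re * (t * τ) := mul_nonneg (le_of_lt hz) (mul_nonneg ht hτ)
      linarith)
    (by
      apply AEStronglyMeasurable.mul (meas_aux t z₀)
      apply Continuous.aestronglyMeasurable; fun_prop)
    (by
      filter_upwards [ae_nonneg hsupp] with τ hτ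
      intro z hzball
      have hzre : c ≤ z.re := by
        have h1 : |z.re - z₀.re| ≤ ‖z - z₀‖ := by
          simpa using Complex.abs_re_le_norm (z - z₀)
        have h2 : ‖z - z₀‖ < c := by simpa [dist_eq_norm] using hzball
        have := abs_le.1 h1
        simp only [hc] at *
        linarith [this.1]
      rw [norm_mul, norm_integrand]
      have hnn : 0 ≤ t * τ := mul_nonneg ht hτ
      have hnc : ‖(-((t * τ : ℝ) : ℂ))‖ = t * τ := by
        rw [norm_neg, Complex.norm_real, Real.norm_eq_abs, _root_.abs_of_nonneg hnn]
      rw [hnc]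
      have hb1 : Real.exp (-z.re * (t * τ)) ≤ Real.exp (-(c * (t*τ))) := by
        rw [Real.exp_le_exp]; nlinarith
      have hb2 : c * (t*τ) ≤ Real.exp (c * (t*τ)) := by
        have := Real.add_one_le_exp (c * (t*τ)); linarith
      have hpos := Real.exp_pos (c * (t*τ))
      rw [Real.exp_neg] at hb1
      have h3 : Real.exp (-z.re * (t * τ)) * (t*τ) ≤ (Real.exp (c * (t*τ)))⁻¹ * (t*τ) := by
        apply mul_le_mul_of_nonneg_right hb1 hnn
      have h4 : (Real.exp (c * (t*τ)))⁻¹ * (t*τ) ≤ 1/c := by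
        rw [inv_mul_le_iff₀ hpos, one_div]
        calc t * τ = (c * (t*τ)) * c⁻¹ := by field_simp
          _ ≤ Real.exp (c * (t*τ)) * c⁻¹ :=
              mul_le_mul_of_nonneg_right hb2 (inv_nonneg.2 hc0.le)
      calc Real.exp (-z.re * (t * τ)) * (t * τ) ≤ 1/c := le_trans h3 h4)
    (integrable_const _)
    (by
      refine Eventually.of_forall (fun τ => ?_)
      intro z hzball
      have h1 : HasDerivAt (fun z : ℂ => -z * (t * τ)) (-((t * τ : ℝ):ℂ)) z := by
        have h0 : HasDerivAt (fun z : ℂ => z) 1 z := hasDerivAt_id z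
        have := (h0.neg).mul_const ((t:ℂ) * (τ:ℂ))
        rw [show -((t * τ : ℝ) : ℂ) = -1 * ((t:ℂ) * (τ:ℂ)) by push_cast; ring]
        exact this
      simpa using h1.cexp)
  have hd : DifferentiableAt ℂ
      (fun z : ℂ => ∫ (τ:ℝ), Complex.exp (-z * (t * τ)) ∂η) z₀ := key.2.differentiableAt
  have : DifferentiableAt ℂ (fun z : ℂ => z + (a:ℂ)) z₀ := by fun_prop
  exact this.add hd


lemma integrable_texp {ν : ℝ} (hν0 : 0 < ν)
    (hνint : Integrable (fun τ => Real.exp (ν * τ)) η) :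
    Integrable (fun τ : ℝ => τ * Real.exp ((ν/2) * τ)) η := by
  have hmeas : AEStronglyMeasurable (fun τ : ℝ => τ * Real.exp ((ν/2) * τ)) η := by
    apply Continuous.aestronglyMeasurable; fun_prop
  apply (hνint.const_mul (2/ν)).mono' hmeas
  filter_upwards [ae_nonneg hsupp] with τ hτ
  rw [Real.norm_eq_abs, _root_.abs_of_nonneg (by positivity)]
  have h1 : (ν/2) * τ ≤ Real.exp ((ν/2) * τ) := by
    have := Real.add_one_le_exp ((ν/2) * τ); linarith
  have h2 : τ ≤ (2/ν) * Real.exp ((ν/2)*τ) := by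
    rw [div_mul_eq_mul_div, le_div_iff₀ hν0]; nlinarith
  have h3 : Real.exp ((ν/2)*τ) * Real.exp ((ν/2)*τ) = Real.exp (ν * τ) := by
    rw [← Real.exp_add]; ring_nf
  calc τ * Real.exp ((ν/2)*τ) ≤ ((2/ν) * Real.exp ((ν/2)*τ)) * Real.exp ((ν/2)*τ) :=
        mul_le_mul_of_nonneg_right h2 (Real.exp_pos _).le
    _ = (2/ν) * Real.exp (ν * τ) := by rw [mul_assoc, h3]

lemma D_sub_bound (a : ℝ) {t t' : ℝ}
    (ht : 0 ≤ t) (ht' : 0 ≤ t') {R : ℝ} (hR : 0 ≤ R) {z : ℂ}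
    (hz : 0 ≤ z.re) (hzR : ‖z‖ ≤ R) {ν : ℝ} (hν0 : 0 < ν)
    (hνint : Integrable (fun τ => Real.exp (ν * τ)) η)
    (hd : R * |t - t'| ≤ ν / 2) :
    ‖Dfun a η t z - Dfun a η t' z‖ ≤
      2 * R * |t - t'| * ∫ (τ:ℝ), τ * Real.exp ((ν/2) * τ) ∂η := by
  have hint1 := integrable_exp (η := η) hsupp ht hz
  have hint2 := integrable_exp (η := η) hsupp ht' hz
  have hDeq : Dfun a η t z - Dfun a η t' z
      = ∫ (τ:ℝ), (Complex.exp (-z * (t * τ)) - Complex.exp (-z * (t' * τ))) ∂η := by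
    rw [Dfun, Dfun, integral_sub hint1 hint2]; ring
  rw [hDeq]
  have hptw : ∀ᵐ (τ:ℝ) ∂η, ‖Complex.exp (-z * (t * τ)) - Complex.exp (-z * (t' * τ))‖
      ≤ 2 * R * |t - t'| * (τ * Real.exp ((ν/2) * τ)) := by
    filter_upwards [ae_nonneg hsupp] with τ hτ
    have hsplit : Complex.exp (-z * (t * τ))
        = Complex.exp (-z * (t' * τ)) * Complex.exp (-z * (((t - t') * τ : ℝ))) := by
      rw [← Complex.exp_add]; congr 1; push_cast; ring
    have hfac : Complex.exp (-z * (t * τ)) - Complex.exp (-z * (t' * τ))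
        = Complex.exp (-z * (t' * τ)) * (Complex.exp (-z * (((t - t') * τ : ℝ))) - 1) := by
      rw [mul_sub, mul_one, ← hsplit]
    rw [hfac, norm_mul]
    have hn1 : ‖Complex.exp (-z * (t' * τ))‖ ≤ 1 := by
      rw [norm_integrand, Real.exp_le_one_iff]
      nlinarith [mul_nonneg hz (mul_nonneg ht' hτ)]
    set w : ℂ := -z * (((t - t') * τ : ℝ)) with hw
    have hwnorm : ‖w‖ = ‖z‖ * (|t - t'| * τ) := by
      rw [hw, norm_mul, norm_neg, Complex.norm_real, Real.norm_eq_abs, abs_mul,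
        _root_.abs_of_nonneg hτ]
    have hwle : ‖w‖ ≤ R * |t - t'| * τ := by
      rw [hwnorm]
      have : ‖z‖ * (|t - t'| * τ) ≤ R * (|t - t'| * τ) :=
        mul_le_mul_of_nonneg_right hzR (by positivity)
      linarith [this]
    have hwle2 : ‖w‖ ≤ (ν/2) * τ := by
      have : R * |t - t'| * τ ≤ (ν/2) * τ := mul_le_mul_of_nonneg_right hd hτ
      linarith
    have hb := exp_sub_one_bound w
    have hb2 : 2 * ‖w‖ * Real.exp ‖w‖ ≤ 2 * (R * |t - t'| * τ) * Real.exp ((ν/2) * τ) := by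
      apply mul_le_mul (by linarith) (Real.exp_le_exp.2 hwle2) (Real.exp_pos _).le
        (by positivity)
    calc ‖Complex.exp (-z * (t' * τ))‖ * ‖Complex.exp w - 1‖
        ≤ 1 * ‖Complex.exp w - 1‖ :=
          mul_le_mul_of_nonneg_right hn1 (norm_nonneg _)
      _ = ‖Complex.exp w - 1‖ := one_mul _
      _ ≤ 2 * ‖w‖ * Real.exp ‖w‖ := hb
      _ ≤ 2 * (R * |t - t'| * τ) * Real.exp ((ν/2) * τ) := hb2
      _ = 2 * R * |t - t'| * (τ * Real.exp ((ν/2) * τ)) := by ring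
  have hbint : Integrable (fun τ:ℝ => 2 * R * |t - t'| * (τ * Real.exp ((ν/2) * τ))) η :=
    (integrable_texp hsupp hν0 hνint).const_mul _
  calc ‖∫ (τ:ℝ), (Complex.exp (-z * (t * τ)) - Complex.exp (-z * (t' * τ))) ∂η‖
      ≤ ∫ (τ:ℝ), 2 * R * |t - t'| * (τ * Real.exp ((ν/2) * τ)) ∂η :=
        norm_integral_le_of_norm_le hbint hptw
    _ = 2 * R * |t - t'| * ∫ (τ:ℝ), τ * Real.exp ((ν/2) * τ) ∂η := by
        rw [integral_const_mul]


lemma D_re_pos (a : ℝ) {t : ℝ} (ht : 0 ≤ t) :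
    Dfun a η t (((|a| + 2 : ℝ)) : ℂ) ≠ 0 := by
  intro h
  have hre : (Dfun a η t (((|a| + 2 : ℝ)) : ℂ)).re = 0 := by rw [h]; simp
  set I := ∫ (τ:ℝ), Complex.exp (-(((|a| + 2 : ℝ)) : ℂ) * (t * τ)) ∂η with hI
  have h1 : ‖I‖ ≤ 1 := norm_integral_le_one hsupp ht (by simp; positivity)
  have h2 : |I.re| ≤ 1 := le_trans (by simpa using Complex.abs_re_le_norm I) h1
  have h3 : (Dfun a η t (((|a| + 2 : ℝ)) : ℂ)).re = (|a| + 2) + a + I.re := by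
    rw [Dfun, ← hI]
    simp only [Complex.add_re, Complex.ofReal_re]
  rw [h3] at hre
  have := abs_le.1 h2
  have := neg_abs_le a
  linarith [this, (abs_le.1 h2).1]

lemma isolated_zero (a : ℝ) {t : ℝ} (ht : 0 ≤ t)
    {z₀ : ℂ} (hz : 0 < z₀.re) :
    ∃ ε > 0, ∀ z : ℂ, dist z z₀ < ε → z ≠ z₀ → Dfun a η t z ≠ 0 := by
  have hUopen : IsOpen {z : ℂ | 0 < z.re} := isOpen_lt continuous_const Complex.continuous_re
  have hdiffOn : DifferentiableOn ℂ (Dfun a η t) {z : ℂ | 0 < z.re} :=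
    fun w hw => (diffAt hsupp a ht hw).differentiableWithinAt
  have hanal : AnalyticOnNhd ℂ (Dfun a η t) {z : ℂ | 0 < z.re} :=
    hdiffOn.analyticOnNhd hUopen
  rcases (hanal z₀ hz).eventually_eq_zero_or_eventually_ne_zero with hev | hev
  · exfalso
    have hpre : IsPreconnected {z : ℂ | 0 < z.re} :=
      (convex_halfSpace_re_gt (r := 0)).isPreconnected
    have hEq := hanal.eqOn_zero_of_preconnected_of_eventuallyEq_zero hpre hz hev
    have hmem : (((|a| + 2 : ℝ)) : ℂ) ∈ {z : ℂ | 0 < z.re} := by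
      simp only [Set.mem_setOf_eq, Complex.ofReal_re]; positivity
    exact D_re_pos hsupp a ht (hEq hmem)
  · rw [eventually_nhdsWithin_iff] at hev
    rcases Metric.eventually_nhds_iff.1 hev with ⟨ε, hε, h⟩
    exact ⟨ε, hε, fun z h1 h2 => h h1 (by simpa using h2)⟩

end basic
end Stmt6Aux

open Stmt6Aux in
set_option maxHeartbeats 1000000 in
/-- Paper Proposition 3.1: necessary condition for instability. -/
theorem stmt6 (a : ℝ) (ha : a ∈ Set.Ioo (-1 : ℝ) 1)
    (η : Measure ℝ) [IsProbabilityMeasure η]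
    (hsupp : η (Set.Iio 0) = 0)
    (hν : ∃ ν > 0, Integrable (fun τ => Real.exp (ν * τ)) η)
    (hroot : ∃ z : ℂ, 0 ≤ z.re ∧
      z + (a : ℂ) + (∫ τ, Complex.exp (-z * τ) ∂η) = 0) :
    ∃ ωs : ℝ, ωs ∈ Set.Ioc 0 (Real.sqrt (1 - a ^ 2)) ∧
      (∫ τ, Real.cos (ωs * τ) ∂η) = -a ∧
      (∫ τ, Real.sin (ωs * τ) ∂η) ≥ ωs := by
  obtain ⟨ν, hν0, hνint⟩ := hν
  obtain ⟨z₁, hz₁re, hz₁⟩ := hroot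
  have hD1 : Dfun a η 1 z₁ = 0 := by
    rw [Dfun]; simp only [Complex.ofReal_one, one_mul]; exact hz₁
  set R : ℝ := |a| + 1 with hRdef
  have hR0 : 0 < R := by positivity
  set K : Set ℂ := {z : ℂ | 0 ≤ z.re} ∩ {z : ℂ | ‖z‖ ≤ R} with hKdef
  have hKclosed : IsClosed K :=
    (isClosed_le continuous_const Complex.continuous_re).inter
      (isClosed_le continuous_norm continuous_const)
  have hKcompact : IsCompact K := by
    apply (isCompact_closedBall (0:ℂ) R).of_isClosed_subset hKclosed
    intro z hz
    simpa [Metric.mem_closedBall, dist_eq_norm] using hz.2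
  set S : Set (ℝ × ℂ) := Set.Icc (0:ℝ) 1 ×ˢ K with hSdef
  have hScompact : IsCompact S := isCompact_Icc.prod hKcompact
  have hSclosed : IsClosed S := isClosed_Icc.prod hKclosed
  have hcontS : ContinuousOn (fun p : ℝ × ℂ => Dfun a η p.1 p.2) S := by
    intro p hp
    have h1 : (0:ℝ) ≤ p.1 := hp.1.1
    have h2 : (0:ℝ) ≤ p.2.re := hp.2.1
    exact (contAt hsupp hν0 hνint a
      (by nlinarith [mul_nonneg h1 h2])).continuousWithinAt
  set Z : Set (ℝ × ℂ) := S ∩ (fun p : ℝ × ℂ => Dfun a η p.1 p.2) ⁻¹' {0} with hZdef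
  have hZclosed : IsClosed Z :=
    hcontS.preimage_isClosed_of_isClosed hSclosed isClosed_singleton
  have hZcompact : IsCompact Z :=
    hScompact.of_isClosed_subset hZclosed Set.inter_subset_left
  set T : Set ℝ := Prod.fst '' Z with hTdef
  have hTcompact : IsCompact T := hZcompact.image continuous_fst
  have hmemT : ∀ {t : ℝ} {z : ℂ}, 0 ≤ t → t ≤ 1 → 0 ≤ z.re → Dfun a η t z = 0 → t ∈ T := by
    intro t z h0 h1 h2 hD
    exact ⟨(t, z), ⟨⟨⟨h0, h1⟩, ⟨h2, root_bound hsupp h0 h2 hD⟩⟩, by simpa using hD⟩, rfl⟩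
  have hTne : T.Nonempty := ⟨1, hmemT zero_le_one le_rfl hz₁re hD1⟩
  have ht₀mem := hTcompact.sInf_mem hTne
  set t₀ : ℝ := sInf T with ht₀def
  obtain ⟨⟨t', w⟩, ⟨⟨⟨hw0t, hw1t⟩, hwre, hwR⟩, hDw'⟩, hfst⟩ := ht₀mem
  obtain rfl : t' = t₀ := hfst
  have hDw : Dfun a η t₀ w = 0 := by simpa using hDw'
  have hwre' : (0:ℝ) ≤ w.re := hwre
  have hwR' : ‖w‖ ≤ R := hwR
  have htmin : ∀ s ∈ T, t₀ ≤ s := fun s hs => csInf_le hTcompact.bddBelow hs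
  clear_value K S Z T t₀
  have ht₀0 : (0:ℝ) ≤ t₀ := hw0t
  have ht₀1 : t₀ ≤ 1 := hw1t
  -- t₀ > 0
  have ht₀pos : 0 < t₀ := by
    rcases ht₀0.lt_or_eq with h | h
    · exact h
    · exfalso
      rw [← h, Dfun] at hDw
      have hint : (∫ (τ:ℝ), Complex.exp (-w * ((0:ℝ) * τ)) ∂η) = 1 := by
        have hc : ∀ τ:ℝ, Complex.exp (-w * ((0:ℝ) * τ)) = 1 := by
          intro τ; norm_num
        rw [integral_congr_ae (Filter.Eventually.of_forall hc)]
        simp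
      rw [hint] at hDw
      have hh := congrArg Complex.re hDw
      simp only [Complex.add_re, Complex.ofReal_re, Complex.one_re, Complex.zero_re] at hh
      linarith [hwre', ha.1]
  -- Re w = 0
  have hwre0 : w.re = 0 := by
    by_contra hne
    have hx : 0 < w.re := lt_of_le_of_ne hwre' (Ne.symm hne)
    obtain ⟨ε, hε, hiso⟩ := isolated_zero hsupp a ht₀0 hx
    set r : ℝ := min (ε/2) (w.re/2) with hrdef
    have hr0 : 0 < r := lt_min (by linarith) (by linarith)
    have hrx : r ≤ w.re/2 := min_le_right _ _
    have hballre : ∀ z ∈ Metric.closedBall w r, w.re/2 ≤ z.re := by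
      intro z hz
      have h1 : |z.re - w.re| ≤ ‖z - w‖ := by
        simpa using Complex.abs_re_le_norm (z - w)
      have h2 : ‖z - w‖ ≤ r := by simpa [dist_eq_norm] using hz
      have h3 := (abs_le.1 h1).1
      linarith
    have hsne : (Metric.sphere w r).Nonempty := NormedSpace.sphere_nonempty.2 hr0.le
    have hscont : ContinuousOn (fun z => ‖Dfun a η t₀ z‖) (Metric.sphere w r) := by
      intro z hz
      have hzre : (0:ℝ) ≤ z.re :=
        le_trans (by linarith) (hballre z (Metric.sphere_subset_closedBall hz))
      exact ((contAt_z hsupp hν0 hνint a ht₀0 hzre).norm).continuousWithinAt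
    have hmin : ∃ m : ℝ, 0 < m ∧ ∀ z ∈ Metric.sphere w r, m ≤ ‖Dfun a η t₀ z‖ := by
      obtain ⟨zm, hzm, hzmmin⟩ := (isCompact_sphere w r).exists_isMinOn hsne hscont
      refine ⟨‖Dfun a η t₀ zm‖, ?_, fun z hz => hzmmin hz⟩
      apply norm_pos_iff.2
      apply hiso
      · have hd : dist zm w = r := Metric.mem_sphere.1 hzm
        rw [hd]
        linarith [min_le_left (ε/2) (w.re/2)]
      · intro h
        rw [h] at hzm
        have : dist w w = r := Metric.mem_sphere.1 hzm
        rw [dist_self] at this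
        linarith
    obtain ⟨m, hm0, hsphere⟩ := hmin
    obtain ⟨M, hM0, hMdef⟩ :
        ∃ M : ℝ, (0:ℝ) ≤ M ∧ (∫ (τ:ℝ), τ * Real.exp ((ν/2) * τ) ∂η) = M := by
      refine ⟨_, ?_, rfl⟩
      apply integral_nonneg_of_ae
      filter_upwards [ae_nonneg hsupp] with τ hτ
      positivity
    set R' : ℝ := R + r with hR'def
    have hR'0 : 0 < R' := by positivity
    have hballK : ∀ z ∈ Metric.closedBall w r, 0 ≤ z.re ∧ ‖z‖ ≤ R' := by
      intro z hz
      refine ⟨le_trans (by linarith) (hballre z hz), ?_⟩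
      have h2 : ‖z - w‖ ≤ r := by simpa [dist_eq_norm] using hz
      have h3 := norm_sub_norm_le z w
      have := hwR'
      simp only [hR'def]
      linarith
    clear_value R'
    set δ : ℝ := min t₀ (min (ν/(2*(R'+1))) (m/(8*(R'+1)*(M+1)))) with hδdef
    have hδ0 : 0 < δ := lt_min ht₀pos (lt_min (by positivity) (by positivity))
    have hδt₀ : δ ≤ t₀ := min_le_left _ _
    have hδν : δ ≤ ν/(2*(R'+1)) := le_trans (min_le_right _ _) (min_le_left _ _)
    have hδm : δ ≤ m/(8*(R'+1)*(M+1)) := le_trans (min_le_right _ _) (min_le_right _ _)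
    set t₁ : ℝ := t₀ - δ/2 with ht₁def
    have ht₁0 : 0 < t₁ := by rw [ht₁def]; linarith
    have ht₁lt : t₁ < t₀ := by rw [ht₁def]; linarith
    clear_value t₁
    have habs : |t₁ - t₀| = δ/2 := by
      rw [ht₁def, show t₀ - δ/2 - t₀ = -(δ/2) by ring, abs_neg,
        _root_.abs_of_nonneg (by linarith)]
    clear_value δ
    have hδν' : δ * (2*(R'+1)) ≤ ν := (le_div_iff₀ (by positivity)).1 hδν
    have hδm' : δ * (8*(R'+1)*(M+1)) ≤ m := (le_div_iff₀ (by positivity)).1 hδm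
    have hdcond : R' * |t₁ - t₀| ≤ ν/2 := by
      rw [habs]
      have e1 : δ * (2*(R'+1)) = 2*(δ*R') + 2*δ := by ring
      nlinarith [mul_nonneg hδ0.le hR'0.le, hδν', hδ0.le, e1]
    have hclosebound : 2 * R' * |t₁ - t₀| * M < m/2 := by
      rw [habs]
      have n1 : 0 ≤ δ*R' := mul_nonneg hδ0.le hR'0.le
      have n2 : 0 ≤ δ*M := mul_nonneg hδ0.le hM0
      have n3 : 0 ≤ δ*R'*M := mul_nonneg n1 hM0
      nlinarith [hδm', hm0, hδ0.le, n1, n2, n3]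
    have hpersist := zero_persist (f := Dfun a η t₀) (g := Dfun a η t₁)
      (z₀ := w) (r := r) (m := m) hr0 hm0
      hsphere
      hDw
      (by
        intro z hz
        obtain ⟨hz1, hz2⟩ := hballK z hz
        have hb := D_sub_bound hsupp a ht₁0.le ht₀0 hR'0.le hz1 hz2 hν0 hνint hdcond
        rw [hMdef] at hb
        calc ‖Dfun a η t₁ z - Dfun a η t₀ z‖
            ≤ 2 * R' * |t₁ - t₀| * M := hb
          _ < m/2 := hclosebound)
      (by
        intro z hz
        have hzre : 0 < z.re :=
          lt_of_lt_of_le (by linarith) (hballre z (Metric.ball_subset_closedBall hz))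
        exact (diffAt hsupp a ht₁0.le hzre).differentiableWithinAt)
      (by
        intro z hz
        obtain ⟨hz1, _⟩ := hballK z hz
        exact (contAt_z hsupp hν0 hνint a ht₁0.le hz1).continuousWithinAt)
    obtain ⟨z', hz'ball, hz'0⟩ := hpersist
    have hz're : (0:ℝ) ≤ z'.re := (hballK z' hz'ball).1
    have ht₁T : t₁ ∈ T := hmemT ht₁0.le (by linarith) hz're hz'0
    exact absurd (htmin t₁ ht₁T) (not_le.2 ht₁lt)

  -- final: w = y i, extract real equations
  have hy0 : w.im ≠ 0 := by
    intro h
    have hw0 : w = 0 := by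
      apply Complex.ext
      · exact hwre0
      · exact h
    rw [hw0, Dfun] at hDw
    have hint : (∫ (τ:ℝ), Complex.exp (-(0:ℂ) * (t₀ * τ)) ∂η) = 1 := by
      have hc : ∀ τ:ℝ, Complex.exp (-(0:ℂ) * (t₀ * τ)) = 1 := by intro τ; norm_num
      rw [integral_congr_ae (Filter.Eventually.of_forall hc)]
      simp
    rw [hint] at hDw
    have hh := congrArg Complex.re hDw
    simp only [Complex.add_re, Complex.ofReal_re, Complex.one_re, Complex.zero_re] at hh
    linarith [ha.1]
  set y : ℝ := w.im with hydef
  have hweq : w = (y:ℂ) * Complex.I := by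
    apply Complex.ext <;> simp [hwre0, hydef]
  have hptw : ∀ τ:ℝ, Complex.exp (-w * (t₀ * τ))
      = (Real.cos (y * (t₀ * τ)) : ℂ) - (Real.sin (y * (t₀ * τ)) : ℂ) * Complex.I := by
    intro τ
    rw [hweq]
    have h1 : -((y:ℂ) * Complex.I) * ((t₀:ℂ) * (τ:ℂ))
        = ((-(y * (t₀ * τ)) : ℝ) : ℂ) * Complex.I := by push_cast; ring
    rw [h1, Complex.exp_mul_I, ← Complex.ofReal_cos, ← Complex.ofReal_sin,
      Real.cos_neg, Real.sin_neg]
    push_cast; ring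
  have hintcos : Integrable (fun τ:ℝ => Real.cos (y * (t₀ * τ))) η := by
    apply (integrable_const (1:ℝ)).mono' (Continuous.aestronglyMeasurable (by fun_prop))
    filter_upwards with τ
    rw [Real.norm_eq_abs]
    exact Real.abs_cos_le_one _
  have hintsin : Integrable (fun τ:ℝ => Real.sin (y * (t₀ * τ))) η := by
    apply (integrable_const (1:ℝ)).mono' (Continuous.aestronglyMeasurable (by fun_prop))
    filter_upwards with τ
    rw [Real.norm_eq_abs]
    exact Real.abs_sin_le_one _
  have hIeq : (∫ (τ:ℝ), Complex.exp (-w * (t₀ * τ)) ∂η)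
      = ((∫ (τ:ℝ), Real.cos (y * (t₀ * τ)) ∂η : ℝ) : ℂ)
        - ((∫ (τ:ℝ), Real.sin (y * (t₀ * τ)) ∂η : ℝ) : ℂ) * Complex.I := by
    simp only [hptw]
    have h := integral_sub (Integrable.ofReal (𝕜 := ℂ) hintcos)
      ((Integrable.ofReal (𝕜 := ℂ) hintsin).mul_const Complex.I)
    rw [integral_mul_const] at h
    exact h.trans (by norm_cast)
  have hn1 : ‖∫ (τ:ℝ), Complex.exp (-w * (t₀ * τ)) ∂η‖ ≤ 1 :=
    norm_integral_le_one hsupp ht₀0 hwre'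
  set Cv : ℝ := ∫ (τ:ℝ), Real.cos (y * (t₀ * τ)) ∂η with hCvdef
  set Sv : ℝ := ∫ (τ:ℝ), Real.sin (y * (t₀ * τ)) ∂η with hSvdef
  rw [Dfun, hIeq] at hDw
  rw [hIeq] at hn1
  have hre := congrArg Complex.re hDw
  have him := congrArg Complex.im hDw
  simp only [Complex.add_re, Complex.add_im, Complex.sub_re, Complex.sub_im,
    Complex.mul_re, Complex.mul_im, Complex.I_re, Complex.I_im, Complex.ofReal_re,
    Complex.ofReal_im, Complex.zero_re, Complex.zero_im, hwre0] at hre him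
  -- hre : 0 + a + (Cv - 0) = 0 (roughly), him : y + (0 - Sv) = 0
  have hCv : Cv = -a := by linarith [hre]
  have hSv : Sv = y := by linarith [him]
  -- a² + y² ≤ 1
  have hnormsq : Cv^2 + Sv^2 ≤ 1 := by
    have habs : ‖(Cv:ℂ) - (Sv:ℂ) * Complex.I‖ ≤ 1 := by
      exact hn1
    have hsq : Complex.normSq ((Cv:ℂ) - (Sv:ℂ) * Complex.I) ≤ 1 := by
      rw [← Complex.sq_norm]
      nlinarith [norm_nonneg ((Cv:ℂ) - (Sv:ℂ) * Complex.I)]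
    have hcomp : Complex.normSq ((Cv:ℂ) - (Sv:ℂ) * Complex.I) = Cv^2 + Sv^2 := by
      simp [Complex.normSq_apply, Complex.sub_re, Complex.sub_im, Complex.mul_re,
        Complex.mul_im]
      ring
    linarith [hcomp ▸ hsq]
  have hy2 : y^2 ≤ 1 - a^2 := by
    rw [hCv, hSv] at hnormsq; nlinarith [hnormsq]
  rcases lt_or_gt_of_ne hy0 with hyneg | hypos
  · -- y < 0
    refine ⟨t₀ * (-y), ⟨by nlinarith, ?_⟩, ?_, ?_⟩
    · have hysqrt : -y ≤ Real.sqrt (1 - a^2) := by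
        rw [show -y = Real.sqrt ((-y)^2) from (Real.sqrt_sq (by linarith)).symm]
        apply Real.sqrt_le_sqrt
        nlinarith
      nlinarith [ht₀1, ht₀pos.le]
    · have hcong : (fun τ:ℝ => Real.cos (t₀ * (-y) * τ)) = fun τ:ℝ => Real.cos (y * (t₀ * τ)) := by
        funext τ
        rw [show t₀ * (-y) * τ = -(y * (t₀ * τ)) by ring, Real.cos_neg]
      show (∫ (τ:ℝ), Real.cos (t₀ * (-y) * τ) ∂η) = -a
      rw [hcong, ← hCvdef, hCv]
    · have hcong : (fun τ:ℝ => Real.sin (t₀ * (-y) * τ)) = fun τ:ℝ => -Real.sin (y * (t₀ * τ)) := by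
        funext τ
        rw [show t₀ * (-y) * τ = -(y * (t₀ * τ)) by ring, Real.sin_neg]
      show (∫ (τ:ℝ), Real.sin (t₀ * (-y) * τ) ∂η) ≥ t₀ * (-y)
      rw [hcong, integral_neg, ← hSvdef, hSv]
      nlinarith [ht₀1, ht₀pos.le]
  · -- y > 0
    refine ⟨t₀ * y, ⟨by positivity, ?_⟩, ?_, ?_⟩
    · have hysqrt : y ≤ Real.sqrt (1 - a^2) := by
        rw [show y = Real.sqrt (y^2) from (Real.sqrt_sq hypos.le).symm]
        exact Real.sqrt_le_sqrt hy2
      nlinarith [ht₀1, ht₀pos.le, hypos.le]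
    · have hcong : (fun τ:ℝ => Real.cos (t₀ * y * τ)) = fun τ:ℝ => Real.cos (y * (t₀ * τ)) := by
        funext τ
        rw [show t₀ * y * τ = y * (t₀ * τ) by ring]
      show (∫ (τ:ℝ), Real.cos (t₀ * y * τ) ∂η) = -a
      rw [hcong, ← hCvdef, hCv]
    · have hcong : (fun τ:ℝ => Real.sin (t₀ * y * τ)) = fun τ:ℝ => Real.sin (y * (t₀ * τ)) := by
        funext τ
        rw [show t₀ * y * τ = y * (t₀ * τ) by ring]
      show (∫ (τ:ℝ), Real.sin (t₀ * y * τ) ∂η) ≥ t₀ * y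
      rw [hcong, ← hSvdef, hSv]
      nlinarith [ht₀1, ht₀pos.le, hypos.le]
end

section
/- Let a ∈ (-1,1) and let η be a Borel probability measure on [0,∞) with ∫₀^∞ e^{ντ} dη(τ) < ∞ for some ν > 0. Set ω_c = √(1-a²). If either (i) C(ω) > -a for all ω ∈ [0, ω_c], or (ii) for every ω ∈ (0, ω_c] with C(ω) = -a one has S(ω) < ω, then every complex root of the characteristic equation λ + a + ∫₀^∞ e^{-λτ} dη(τ) = 0 has negative real part. -/
open MeasureTheory

namespace Stmt7Aux

open Complex Set Metric
open scoped Topology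

/-- The homotoped characteristic function: delays scaled by `s`. -/
noncomputable def DD (a : ℝ) (η : Measure ℝ) (s : ℝ) (z : ℂ) : ℂ :=
  z + (a : ℂ) + ∫ τ, Complex.exp (-z * ((s : ℂ) * (τ : ℂ))) ∂η

variable {a ν : ℝ} {η : Measure ℝ}

lemma ae_nonneg (hsupp : η (Set.Iio 0) = 0) : ∀ᵐ τ ∂η, (0 : ℝ) ≤ τ := by
  rw [ae_iff]
  convert hsupp using 2
  ext τ
  simp [Set.mem_Iio, not_le]

lemma meas_exp (s : ℝ) (z : ℂ) :
    AEStronglyMeasurable (fun τ : ℝ => Complex.exp (-z * ((s : ℂ) * (τ : ℝ)))) η := by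
  refine Continuous.aestronglyMeasurable ?_
  exact Complex.continuous_exp.comp
    ((continuous_const.mul (continuous_const.mul Complex.continuous_ofReal)))

lemma exp_re_eq (s τ : ℝ) (z : ℂ) :
    (-z * ((s : ℂ) * (τ : ℝ))).re = -(z.re * (s * τ)) := by
  have : ((s : ℂ) * (τ : ℂ)) = ((s * τ : ℝ) : ℂ) := by push_cast; ring
  rw [this]
  simp [Complex.mul_re]

lemma norm_exp_le_one {s : ℝ} {z : ℂ} (hs : 0 ≤ s) (hz : 0 ≤ z.re)
    {τ : ℝ} (hτ : 0 ≤ τ) : ‖Complex.exp (-z * ((s : ℂ) * (τ : ℝ)))‖ ≤ 1 := by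
  rw [Complex.norm_exp, exp_re_eq]
  rw [Real.exp_le_one_iff]
  have : 0 ≤ z.re * (s * τ) := mul_nonneg hz (mul_nonneg hs hτ)
  linarith

lemma integrable_exp (hsupp : η (Set.Iio 0) = 0) [IsProbabilityMeasure η]
    {s : ℝ} {z : ℂ} (hs : 0 ≤ s) (hz : 0 ≤ z.re) :
    Integrable (fun τ : ℝ => Complex.exp (-z * ((s : ℂ) * (τ : ℝ)))) η := by
  refine (integrable_const (1 : ℝ)).mono' (meas_exp s z) ?_
  filter_upwards [ae_nonneg hsupp] with τ hτ
  exact norm_exp_le_one hs hz hτ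

lemma integrable_id (hν : 0 < ν) (hint : Integrable (fun τ => Real.exp (ν * τ)) η)
    (hsupp : η (Set.Iio 0) = 0) : Integrable (fun τ : ℝ => τ) η := by
  refine (hint.const_mul (1 / ν)).mono' aestronglyMeasurable_id ?_
  filter_upwards [ae_nonneg hsupp] with τ hτ
  have h1 : ν * τ ≤ Real.exp (ν * τ) := by
    have := Real.add_one_le_exp (ν * τ); linarith
  have h2 : τ ≤ (1 / ν) * Real.exp (ν * τ) := by
    rw [div_mul_eq_mul_div, le_div_iff₀ hν]
    calc τ * ν = ν * τ := by ring
    _ ≤ Real.exp (ν * τ) := h1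
    _ ≤ 1 * Real.exp (ν * τ) := by linarith
  have h3 : (0:ℝ) < 1 / ν := by positivity
  calc ‖τ‖ = τ := by rw [Real.norm_eq_abs, _root_.abs_of_nonneg hτ]
  _ ≤ (1 / ν) * Real.exp (ν * τ) := h2

lemma norm_integral_le_one (hsupp : η (Set.Iio 0) = 0) [IsProbabilityMeasure η]
    {s : ℝ} {z : ℂ} (hs : 0 ≤ s) (hz : 0 ≤ z.re) :
    ‖∫ τ, Complex.exp (-z * ((s : ℂ) * (τ : ℝ))) ∂η‖ ≤ 1 := by
  calc ‖∫ τ, Complex.exp (-z * ((s : ℂ) * (τ : ℝ))) ∂η‖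
      ≤ ∫ τ, ‖Complex.exp (-z * ((s : ℂ) * (τ : ℝ)))‖ ∂η := norm_integral_le_integral_norm _
  _ ≤ ∫ _τ, (1 : ℝ) ∂η := by
      refine integral_mono_ae ((integrable_exp hsupp hs hz).norm) (integrable_const 1) ?_
      filter_upwards [ae_nonneg hsupp] with τ hτ
      exact norm_exp_le_one hs hz hτ
  _ = 1 := by simp

lemma root_norm_le (hsupp : η (Set.Iio 0) = 0) [IsProbabilityMeasure η]
    (ha : |a| ≤ 1) {s : ℝ} {z : ℂ} (hs : 0 ≤ s) (hz : 0 ≤ z.re)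
    (h0 : DD a η s z = 0) : ‖z‖ ≤ 2 := by
  have hz' : z = -((a : ℂ) + ∫ τ, Complex.exp (-z * ((s : ℂ) * (τ : ℝ))) ∂η) := by
    rw [DD] at h0; linear_combination h0
  calc ‖z‖ = ‖(a : ℂ) + ∫ τ, Complex.exp (-z * ((s : ℂ) * (τ : ℝ))) ∂η‖ := by
        conv_lhs => rw [hz']
        rw [norm_neg]
  _ ≤ ‖(a : ℂ)‖ + ‖∫ τ, Complex.exp (-z * ((s : ℂ) * (τ : ℝ))) ∂η‖ := norm_add_le _ _
  _ ≤ 1 + 1 := by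
      refine add_le_add ?_ (norm_integral_le_one hsupp hs hz)
      rwa [Complex.norm_real, Real.norm_eq_abs]
  _ = 2 := by norm_num

lemma DD_conj (s : ℝ) (z : ℂ) :
    DD a η s ((starRingEnd ℂ) z) = (starRingEnd ℂ) (DD a η s z) := by
  rw [DD, DD]
  have h1 : ∀ τ : ℝ, Complex.exp (-(starRingEnd ℂ) z * ((s : ℂ) * (τ : ℝ)))
      = (starRingEnd ℂ) (Complex.exp (-z * ((s : ℂ) * (τ : ℝ)))) := by
    intro τ
    rw [← Complex.exp_conj]
    congr 1
    simp [map_mul, Complex.conj_ofReal]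
  simp_rw [h1]
  rw [integral_conj]
  simp [map_add, Complex.conj_ofReal]

/-- no purely imaginary roots, for nonnegative frequency -/
lemma no_imag_aux [IsProbabilityMeasure η]
    (ha : a ∈ Set.Ioo (-1 : ℝ) 1) (hsupp : η (Set.Iio 0) = 0)
    (hcond :
      (∀ ω ∈ Set.Icc (0 : ℝ) (Real.sqrt (1 - a ^ 2)),
          (∫ τ, Real.cos (ω * τ) ∂η) > -a) ∨
      (∀ ω ∈ Set.Ioc (0 : ℝ) (Real.sqrt (1 - a ^ 2)),
          (∫ τ, Real.cos (ω * τ) ∂η) = -a → (∫ τ, Real.sin (ω * τ) ∂η) < ω))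
    {s : ℝ} (hs : s ∈ Set.Icc (0:ℝ) 1) {ω : ℝ} (hω : 0 ≤ ω) :
    DD a η s (Complex.I * (ω : ℂ)) ≠ 0 := by
  intro h0
  set u : ℝ := s * ω with hu
  have hu0 : 0 ≤ u := mul_nonneg hs.1 hω
  set C : ℝ := ∫ τ, Real.cos (u * τ) ∂η with hC
  set S : ℝ := ∫ τ, Real.sin (u * τ) ∂η with hS
  have hcos_int : Integrable (fun τ : ℝ => Real.cos (u * τ)) η := by
    refine (integrable_const (1 : ℝ)).mono'
      (Continuous.aestronglyMeasurable
        (Real.continuous_cos.comp (continuous_const.mul continuous_id))) ?_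
    filter_upwards with τ
    rw [Real.norm_eq_abs]; exact Real.abs_cos_le_one _
  have hsin_int : Integrable (fun τ : ℝ => Real.sin (u * τ)) η := by
    refine (integrable_const (1 : ℝ)).mono'
      (Continuous.aestronglyMeasurable
        (Real.continuous_sin.comp (continuous_const.mul continuous_id))) ?_
    filter_upwards with τ
    rw [Real.norm_eq_abs]; exact Real.abs_sin_le_one _
  have key : (∫ τ, Complex.exp (-(Complex.I * (ω : ℂ)) * ((s : ℂ) * (τ : ℝ))) ∂η)
      = (C : ℂ) - (S : ℂ) * Complex.I := by
    have hpt : ∀ τ : ℝ, Complex.exp (-(Complex.I * (ω : ℂ)) * ((s : ℂ) * (τ : ℝ)))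
        = ((Real.cos (u * τ) : ℝ) : ℂ) - ((Real.sin (u * τ) : ℝ) : ℂ) * Complex.I := by
      intro τ
      have h1 : -(Complex.I * (ω : ℂ)) * ((s : ℂ) * (τ : ℝ))
          = ((-(u * τ) : ℝ) : ℂ) * Complex.I := by push_cast [hu]; ring
      rw [h1, Complex.exp_mul_I, ← Complex.ofReal_cos, ← Complex.ofReal_sin,
        Real.cos_neg, Real.sin_neg]
      push_cast
      ring
    simp_rw [hpt]
    have h1 : Integrable (fun τ : ℝ => ((Real.cos (u * τ) : ℝ) : ℂ)) η := hcos_int.ofReal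
    have h2 : Integrable (fun τ : ℝ => ((Real.sin (u * τ) : ℝ) : ℂ)) η := hsin_int.ofReal
    have hci : (∫ τ, ((Real.cos (u * τ) : ℝ) : ℂ) ∂η) = ((C : ℝ) : ℂ) := integral_ofReal
    have hsi : (∫ τ, ((Real.sin (u * τ) : ℝ) : ℂ) ∂η) = ((S : ℝ) : ℂ) := integral_ofReal
    rw [integral_sub h1 (h2.mul_const Complex.I), integral_mul_const, hci, hsi]
  rw [DD, key] at h0
  have hre : a + C = 0 := by
    have := congrArg Complex.re h0
    simpa using this
  have him : ω - S = 0 := by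
    have := congrArg Complex.im h0
    simpa [sub_eq_add_neg] using this
  have hnorm : ‖(C : ℂ) - (S : ℂ) * Complex.I‖ ≤ 1 := by
    rw [← key]
    exact norm_integral_le_one hsupp hs.1 (by simp)
  have hCS : C ^ 2 + S ^ 2 ≤ 1 := by
    have h1 : ((C : ℂ) - (S : ℂ) * Complex.I) = ((C : ℝ) : ℂ) + ((-S : ℝ) : ℂ) * Complex.I := by
      push_cast; ring
    have h2 : Complex.normSq ((C : ℂ) - (S : ℂ) * Complex.I) = C ^ 2 + S ^ 2 := by
      rw [h1, Complex.normSq_add_mul_I]; ring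
    have h3 := Complex.sq_norm ((C : ℂ) - (S : ℂ) * Complex.I)
    rw [h2] at h3
    nlinarith [norm_nonneg ((C : ℂ) - (S : ℂ) * Complex.I)]
  have hCa : C = -a := by linarith
  have hSω : S = ω := by linarith
  rw [hCa, hSω] at hCS
  have hωc : ω ≤ Real.sqrt (1 - a ^ 2) := by
    refine Real.le_sqrt_of_sq_le ?_
    nlinarith [hCS]
  have huωc : u ≤ Real.sqrt (1 - a ^ 2) := by
    have : u ≤ ω := by nlinarith [hs.2]
    linarith
  rcases hcond with h | h
  · have := h u ⟨hu0, huωc⟩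
    linarith
  · rcases eq_or_lt_of_le hu0 with hu0' | hu0'
    · have hC1 : C = 1 := by
        rw [hC, ← hu0']
        simp
      linarith [ha.1]
    · have := h u ⟨hu0', huωc⟩ (by linarith)
      -- S < u ≤ ω = S
      have hωS : ω = S := by linarith
      have huω : u ≤ ω := by nlinarith [hs.2]
      linarith

lemma no_imag [IsProbabilityMeasure η]
    (ha : a ∈ Set.Ioo (-1 : ℝ) 1) (hsupp : η (Set.Iio 0) = 0)
    (hcond :
      (∀ ω ∈ Set.Icc (0 : ℝ) (Real.sqrt (1 - a ^ 2)),
          (∫ τ, Real.cos (ω * τ) ∂η) > -a) ∨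
      (∀ ω ∈ Set.Ioc (0 : ℝ) (Real.sqrt (1 - a ^ 2)),
          (∫ τ, Real.cos (ω * τ) ∂η) = -a → (∫ τ, Real.sin (ω * τ) ∂η) < ω))
    {s : ℝ} (hs : s ∈ Set.Icc (0:ℝ) 1) (ω : ℝ) :
    DD a η s (Complex.I * (ω : ℂ)) ≠ 0 := by
  rcases le_or_gt 0 ω with hω | hω
  · exact no_imag_aux ha hsupp hcond hs hω
  · intro h0
    have hconj : Complex.I * (ω : ℂ) = (starRingEnd ℂ) (Complex.I * ((-ω : ℝ) : ℂ)) := by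
      rw [map_mul, Complex.conj_I, Complex.ofReal_neg, map_neg, Complex.conj_ofReal]
      ring
    rw [hconj, DD_conj] at h0
    have : DD a η s (Complex.I * ((-ω : ℝ) : ℂ)) = 0 := by
      have := congrArg (starRingEnd ℂ) h0
      simpa using this
    exact no_imag_aux ha hsupp hcond hs (by linarith) this

lemma isOpen_rhp : IsOpen {z : ℂ | 0 < z.re} := isOpen_lt continuous_const Complex.continuous_re

lemma diffOn [IsProbabilityMeasure η] (hν : 0 < ν)
    (hint : Integrable (fun τ => Real.exp (ν * τ)) η)
    (hsupp : η (Set.Iio 0) = 0) {s : ℝ} (hs : s ∈ Set.Icc (0:ℝ) 1) :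
    DifferentiableOn ℂ (DD a η s) {z : ℂ | 0 < z.re} := by
  intro z1 hz1
  have hz1' : 0 < z1.re := hz1
  set ε : ℝ := z1.re / 2 with hε
  have hεpos : 0 < ε := by positivity
  have hball : ∀ x ∈ ball z1 ε, 0 ≤ x.re := by
    intro x hx
    have : |x.re - z1.re| ≤ ‖x - z1‖ := by
      rw [← Complex.sub_re]
      exact Complex.abs_re_le_norm _
    rw [mem_ball, dist_eq_norm] at hx
    have := abs_lt.mp (lt_of_le_of_lt this hx)
    linarith [this.1]
  have key := hasDerivAt_integral_of_dominated_loc_of_deriv_le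
    (F := fun (z : ℂ) (τ : ℝ) => Complex.exp (-z * ((s : ℂ) * (τ : ℝ))))
    (F' := fun (z : ℂ) (τ : ℝ) => -((s : ℂ) * (τ : ℝ)) * Complex.exp (-z * ((s : ℂ) * (τ : ℝ))))
    (x₀ := z1) (bound := fun τ : ℝ => τ) (s := ball z1 ε) (ball_mem_nhds z1 hεpos)
    (Filter.Eventually.of_forall fun z => meas_exp s z)
    (integrable_exp hsupp hs.1 (le_of_lt hz1'))
    (Continuous.aestronglyMeasurable (by
      exact ((continuous_const.mul Complex.continuous_ofReal).neg).mul
        (Complex.continuous_exp.comp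
          ((continuous_const.mul (continuous_const.mul Complex.continuous_ofReal))))))
    ?_ (integrable_id hν hint hsupp) ?_
  · exact ((differentiableAt_id.add (differentiableAt_const _)).add
      key.2.differentiableAt).differentiableWithinAt
  · filter_upwards [ae_nonneg hsupp] with τ hτ
    intro x hx
    rw [norm_mul, norm_neg]
    have h1 : ‖(s : ℂ) * (τ : ℝ)‖ = s * τ := by
      rw [norm_mul, Complex.norm_real, Complex.norm_real, Real.norm_eq_abs, Real.norm_eq_abs,
        _root_.abs_of_nonneg hs.1, _root_.abs_of_nonneg hτ]
    rw [h1]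
    calc s * τ * ‖Complex.exp (-x * ((s : ℂ) * (τ : ℝ)))‖
        ≤ s * τ * 1 := by
          refine mul_le_mul_of_nonneg_left ?_ (mul_nonneg hs.1 hτ)
          exact norm_exp_le_one hs.1 (hball x hx) hτ
    _ = s * τ := mul_one _
    _ ≤ 1 * τ := by nlinarith [hs.2]
    _ = τ := one_mul τ
  · filter_upwards with τ
    intro x _hx
    have h1 : HasDerivAt (fun z : ℂ => -z * ((s : ℂ) * (τ : ℝ))) (-((s : ℂ) * (τ : ℝ))) x := by
      simpa using ((hasDerivAt_id x).neg.mul_const ((s : ℂ) * (τ : ℝ)))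
    have h2 := h1.cexp
    exact h2.congr_deriv (by ring)

lemma analD [IsProbabilityMeasure η] (hν : 0 < ν)
    (hint : Integrable (fun τ => Real.exp (ν * τ)) η)
    (hsupp : η (Set.Iio 0) = 0) {s : ℝ} (hs : s ∈ Set.Icc (0:ℝ) 1) :
    AnalyticOnNhd ℂ (DD a η s) {z : ℂ | 0 < z.re} :=
  (diffOn hν hint hsupp hs).analyticOnNhd isOpen_rhp

lemma contD [IsProbabilityMeasure η] (hsupp : η (Set.Iio 0) = 0) :
    ContinuousOn (fun p : ℝ × ℂ => DD a η p.1 p.2)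
      (Set.Icc (0:ℝ) 1 ×ˢ {z : ℂ | 0 ≤ z.re}) := by
  have hint : ContinuousOn
      (fun p : ℝ × ℂ => ∫ τ, Complex.exp (-p.2 * ((p.1 : ℂ) * (τ : ℝ))) ∂η)
      (Set.Icc (0:ℝ) 1 ×ˢ {z : ℂ | 0 ≤ z.re}) := by
    refine continuousOn_of_dominated (bound := fun _ => (1:ℝ)) ?_ ?_ (integrable_const 1) ?_
    · intro p _hp
      exact meas_exp p.1 p.2
    · rintro ⟨s, z⟩ hp
      rw [Set.mem_prod] at hp
      filter_upwards [ae_nonneg hsupp] with τ hτ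
      exact norm_exp_le_one hp.1.1 hp.2 hτ
    · filter_upwards with τ
      refine Continuous.continuousOn ?_
      exact Complex.continuous_exp.comp
        ((continuous_snd.neg).mul
          ((Complex.continuous_ofReal.comp continuous_fst).mul continuous_const))
  have : ContinuousOn (fun p : ℝ × ℂ => p.2 + (a : ℂ)) (Set.Icc (0:ℝ) 1 ×ˢ {z : ℂ | 0 ≤ z.re}) :=
    (continuous_snd.add continuous_const).continuousOn
  exact this.add hint

/-- The key property. -/
def P (a : ℝ) (η : Measure ℝ) (s : ℝ) : Prop :=
  ∀ z : ℂ, 0 ≤ z.re → DD a η s z ≠ 0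

lemma P_zero [IsProbabilityMeasure η] (ha : a ∈ Set.Ioo (-1 : ℝ) 1) : P a η 0 := by
  intro z hz h0
  have h1 : DD a η 0 z = z + (a : ℂ) + 1 := by
    rw [DD]
    congr 1
    have : ∀ τ : ℝ, Complex.exp (-z * (((0:ℝ) : ℂ) * (τ : ℝ))) = 1 := by
      intro τ; simp
    simp_rw [this]
    simp
  rw [h1] at h0
  have := congrArg Complex.re h0
  simp at this
  linarith [ha.1]

lemma unif [IsProbabilityMeasure η] (hsupp : η (Set.Iio 0) = 0) (r : ℝ) {m : ℝ} (hm : 0 < m) :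
    ∃ δ > 0, ∀ s ∈ Set.Icc (0:ℝ) 1, ∀ s' ∈ Set.Icc (0:ℝ) 1, |s' - s| < δ →
      ∀ z ∈ closedBall (0:ℂ) r ∩ {z : ℂ | 0 ≤ z.re},
        ‖DD a η s' z - DD a η s z‖ < m := by
  set T : Set (ℝ × ℂ) := (Set.Icc (0:ℝ) 1) ×ˢ (closedBall (0:ℂ) r ∩ {z : ℂ | 0 ≤ z.re})
    with hT
  have hTc : IsCompact T :=
    (isCompact_Icc).prod ((isCompact_closedBall _ _).inter_right
      (isClosed_le continuous_const Complex.continuous_re))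
  have hc : ContinuousOn (fun p : ℝ × ℂ => DD a η p.1 p.2) T := by
    refine (contD hsupp).mono ?_
    rintro ⟨t, z⟩ hp
    exact Set.mem_prod.mpr ⟨(Set.mem_prod.mp hp).1, (Set.mem_prod.mp hp).2.2⟩
  have hu := hTc.uniformContinuousOn_of_continuous hc
  rw [Metric.uniformContinuousOn_iff] at hu
  obtain ⟨δ, hδ, hδ'⟩ := hu m hm
  refine ⟨δ, hδ, ?_⟩
  intro s hs s' hs' hss z hz
  have h1 : (s', z) ∈ T := Set.mem_prod.mpr ⟨hs', hz⟩
  have h2 : (s, z) ∈ T := Set.mem_prod.mpr ⟨hs, hz⟩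
  have hd : dist (s', z) (s, z) < δ := by
    rw [Prod.dist_eq]
    simp only [dist_self]
    have h3 : dist s' s < δ := by rwa [Real.dist_eq]
    exact max_lt h3 hδ
  have := hδ' (s', z) h1 (s, z) h2 hd
  rwa [dist_eq_norm] at this

lemma Lopen [IsProbabilityMeasure η] (hsupp : η (Set.Iio 0) = 0) (ha : |a| ≤ 1)
    {s : ℝ} (hs : s ∈ Set.Icc (0:ℝ) 1) (hP : P a η s) :
    ∃ δ > 0, ∀ s' ∈ Set.Icc (0:ℝ) 1, |s' - s| < δ → P a η s' := by
  set K : Set ℂ := closedBall (0:ℂ) 2 ∩ {z : ℂ | 0 ≤ z.re} with hKdef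
  have hK : IsCompact K := (isCompact_closedBall _ _).inter_right
    (isClosed_le continuous_const Complex.continuous_re)
  have hKne : K.Nonempty := ⟨0, by simp [hKdef]⟩
  have hcont : ContinuousOn (fun z => DD a η s z) K := by
    have hmaps : ∀ z ∈ K, ((s, z) : ℝ × ℂ) ∈
        (Set.Icc (0:ℝ) 1) ×ˢ {z : ℂ | 0 ≤ z.re} :=
      fun z hz => Set.mem_prod.mpr ⟨hs, hz.2⟩
    exact (contD hsupp).comp
      ((continuous_const.prodMk continuous_id).continuousOn) hmaps
  obtain ⟨z0, hz0K, hz0min⟩ := hK.exists_isMinOn hKne hcont.norm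
  have hm : 0 < ‖DD a η s z0‖ := by
    rw [norm_pos_iff]
    exact hP z0 hz0K.2
  obtain ⟨δ, hδ, hδ'⟩ := unif (a := a) hsupp 2 hm
  refine ⟨δ, hδ, ?_⟩
  intro s' hs' hss z hzre h0
  have hzK : z ∈ K :=
    ⟨mem_closedBall_zero_iff.mpr (root_norm_le hsupp ha hs'.1 hzre h0), hzre⟩
  have h1 := hδ' s hs s' hs' hss z hzK
  rw [h0, zero_sub, norm_neg] at h1
  have h2 := isMinOn_iff.mp hz0min z hzK
  linarith

lemma Lclosed [IsProbabilityMeasure η] (hν : 0 < ν)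
    (hint : Integrable (fun τ => Real.exp (ν * τ)) η)
    (hsupp : η (Set.Iio 0) = 0) (ha : a ∈ Set.Ioo (-1 : ℝ) 1)
    (hcond :
      (∀ ω ∈ Set.Icc (0 : ℝ) (Real.sqrt (1 - a ^ 2)),
          (∫ τ, Real.cos (ω * τ) ∂η) > -a) ∨
      (∀ ω ∈ Set.Ioc (0 : ℝ) (Real.sqrt (1 - a ^ 2)),
          (∫ τ, Real.cos (ω * τ) ∂η) = -a → (∫ τ, Real.sin (ω * τ) ∂η) < ω))
    {s : ℝ} (hs : s ∈ Set.Icc (0:ℝ) 1) (hP : ¬ P a η s) :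
    ∃ δ > 0, ∀ s' ∈ Set.Icc (0:ℝ) 1, |s' - s| < δ → ¬ P a η s' := by
  have ha' : |a| ≤ 1 := le_of_lt (abs_lt.mpr ha)
  rw [P] at hP; push_neg at hP
  obtain ⟨z0, hz0re, hz0⟩ := hP
  have hz0pos : 0 < z0.re := by
    rcases eq_or_lt_of_le hz0re with h | h
    · exfalso
      have hz0' : z0 = Complex.I * (z0.im : ℂ) := by
        apply Complex.ext <;> simp [← h]
      exact no_imag ha hsupp hcond hs z0.im (hz0' ▸ hz0)
    · exact h
  have hz0n : ‖z0‖ ≤ 2 := root_norm_le hsupp ha' hs.1 hz0re hz0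
  have hanal := analD (a := a) hν hint hsupp hs
  rcases (hanal z0 hz0pos).eventually_eq_zero_or_eventually_ne_zero with hev | hev
  · exfalso
    have heq := hanal.eqOn_zero_of_preconnected_of_eventuallyEq_zero
      (convex_halfSpace_re_gt (0:ℝ)).isPreconnected hz0pos hev
    have h3 : DD a η s 3 = 0 := heq (by norm_num [Set.mem_setOf_eq])
    have h4 : ‖(3:ℂ)‖ ≤ 2 := root_norm_le hsupp ha' hs.1 (by norm_num) h3
    norm_num at h4
  · rw [eventually_nhdsWithin_iff, Metric.eventually_nhds_iff] at hev
    obtain ⟨r0, hr0, hr0'⟩ := hev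
    set r : ℝ := min (min (r0/2) (z0.re/2)) (1/2) with hrdef
    have hr : 0 < r :=
      lt_min (lt_min (by linarith) (by linarith)) (by norm_num)
    have hrr0 : r < r0 := lt_of_le_of_lt (le_trans (min_le_left _ _) (min_le_left _ _))
      (by linarith)
    have hrz0 : r ≤ z0.re/2 := le_trans (min_le_left _ _) (min_le_right _ _)
    have hrhalf : r ≤ 1/2 := min_le_right _ _
    have hball_re : ∀ z ∈ closedBall z0 r, 0 < z.re := by
      intro z hz
      rw [mem_closedBall, dist_eq_norm] at hz
      have h1 : |z.re - z0.re| ≤ ‖z - z0‖ := by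
        rw [← Complex.sub_re]; exact Complex.abs_re_le_norm _
      have h2 := abs_le.mp (le_trans h1 hz)
      linarith [h2.1]
    have hball_mem : ∀ z ∈ closedBall z0 r, z ∈ closedBall (0:ℂ) 3 ∩ {z : ℂ | 0 ≤ z.re} := by
      intro z hz
      refine ⟨?_, le_of_lt (hball_re z hz)⟩
      rw [mem_closedBall, dist_eq_norm] at hz ⊢
      have h5 : ‖z‖ ≤ ‖z - z0‖ + ‖z0‖ := by
        have := norm_add_le (z - z0) z0
        simpa using this
      simp only [sub_zero]
      linarith
    have hsne : (sphere z0 r).Nonempty := NormedSpace.sphere_nonempty.mpr hr.le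
    have hsc : IsCompact (sphere z0 r) := isCompact_sphere _ _
    have hsub : sphere z0 r ⊆ closedBall z0 r := sphere_subset_closedBall
    have hcont : ContinuousOn (fun z => DD a η s z) (sphere z0 r) :=
      ((diffOn hν hint hsupp hs).continuousOn).mono
        (fun z hz => hball_re z (hsub hz))
    obtain ⟨z1, hz1s, hz1min⟩ := hsc.exists_isMinOn hsne hcont.norm
    have hz1ne : DD a η s z1 ≠ 0 := by
      refine hr0' ?_ ?_
      · rw [mem_sphere] at hz1s
        rw [hz1s]; exact hrr0
      · exact Set.mem_compl_singleton_iff.mpr (ne_of_mem_sphere hz1s hr.ne')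
    set m : ℝ := ‖DD a η s z1‖ with hmdef
    have hm : 0 < m := norm_pos_iff.mpr hz1ne
    have hm2 : 0 < m / 2 := by linarith
    obtain ⟨δ, hδ, hδ'⟩ := unif (a := a) hsupp 3 hm2
    refine ⟨δ, hδ, ?_⟩
    intro s' hs' hss hP'
    -- On the sphere, DD s' is bounded below by m/2
    have key1 : ∀ z ∈ sphere z0 r, m / 2 ≤ ‖DD a η s' z‖ := by
      intro z hz
      have h1 := hδ' s hs s' hs' hss z (hball_mem z (hsub hz))
      have h2 := isMinOn_iff.mp hz1min z hz
      have h3 := norm_sub_norm_le (DD a η s z) (DD a η s' z)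
      rw [norm_sub_rev] at h3
      linarith
    -- max modulus principle applied to the inverse on the ball
    have hD's : DifferentiableOn ℂ (DD a η s') {z : ℂ | 0 < z.re} := diffOn hν hint hsupp hs'
    have hne' : ∀ z ∈ closedBall z0 r, DD a η s' z ≠ 0 := fun z hz =>
      hP' z (le_of_lt (hball_re z hz))
    have hdiff_inv : DifferentiableOn ℂ (fun z => (DD a η s' z)⁻¹) (closure (ball z0 r)) := by
      rw [closure_ball z0 hr.ne']
      exact (hD's.mono (fun z hz => hball_re z hz)).inv hne'
    have hdc : DiffContOnCl ℂ (fun z => (DD a η s' z)⁻¹) (ball z0 r) :=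
      hdiff_inv.diffContOnCl
    have hfr : ∀ z ∈ frontier (ball z0 r), ‖(DD a η s' z)⁻¹‖ ≤ (m/2)⁻¹ := by
      intro z hz
      rw [frontier_ball z0 hr.ne'] at hz
      rw [norm_inv]
      exact inv_anti₀ hm2 (key1 z hz)
    have hmax := Complex.norm_le_of_forall_mem_frontier_norm_le isBounded_ball hdc hfr
      (by rw [closure_ball z0 hr.ne']; exact mem_closedBall_self hr.le)
    have h7 : 0 < ‖DD a η s' z0‖ := norm_pos_iff.mpr (hP' z0 hz0re)
    have h6 : m/2 ≤ ‖DD a η s' z0‖ := by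
      by_contra hcon
      push_neg at hcon
      have h9 : (m/2)⁻¹ < ‖DD a η s' z0‖⁻¹ := inv_strictAnti₀ h7 hcon
      rw [norm_inv] at hmax
      exact absurd hmax (not_le.mpr h9)
    have h8 := hδ' s hs s' hs' hss z0 (hball_mem z0 (mem_closedBall_self hr.le))
    rw [hz0, sub_zero] at h8
    linarith

lemma P_one [IsProbabilityMeasure η] (hν : 0 < ν)
    (hint : Integrable (fun τ => Real.exp (ν * τ)) η)
    (hsupp : η (Set.Iio 0) = 0) (ha : a ∈ Set.Ioo (-1 : ℝ) 1)
    (hcond :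
      (∀ ω ∈ Set.Icc (0 : ℝ) (Real.sqrt (1 - a ^ 2)),
          (∫ τ, Real.cos (ω * τ) ∂η) > -a) ∨
      (∀ ω ∈ Set.Ioc (0 : ℝ) (Real.sqrt (1 - a ^ 2)),
          (∫ τ, Real.cos (ω * τ) ∂η) = -a → (∫ τ, Real.sin (ω * τ) ∂η) < ω)) :
    P a η 1 := by
  have ha' : |a| ≤ 1 := le_of_lt (abs_lt.mpr ha)
  set B : Set ℝ := {s : ℝ | s ∈ Set.Icc (0:ℝ) 1 ∧ ∀ t ∈ Set.Icc (0:ℝ) s, P a η t}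
    with hBdef
  have h0B : (0:ℝ) ∈ B := by
    refine ⟨⟨le_refl _, by norm_num⟩, fun t ht => ?_⟩
    have : t = 0 := le_antisymm ht.2 ht.1
    rw [this]
    exact P_zero ha
  have hne : B.Nonempty := ⟨0, h0B⟩
  have hbdd : BddAbove B := ⟨1, fun x hx => hx.1.2⟩
  set c : ℝ := sSup B with hcdef
  have hc1 : c ≤ 1 := csSup_le hne (fun x hx => hx.1.2)
  have hc0 : 0 ≤ c := le_csSup hbdd h0B
  have hcIcc : c ∈ Set.Icc (0:ℝ) 1 := ⟨hc0, hc1⟩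
  have hlt : ∀ t, 0 ≤ t → t < c → P a η t := by
    intro t ht htc
    obtain ⟨x, hxB, hx⟩ := exists_lt_of_lt_csSup hne htc
    exact hxB.2 t ⟨ht, le_of_lt hx⟩
  have hPc : P a η c := by
    by_contra hPc
    obtain ⟨δ, hδ, hδ'⟩ := Lclosed hν hint hsupp ha hcond hcIcc hPc
    rcases eq_or_lt_of_le hc0 with h | h
    · exact hPc (h ▸ P_zero ha)
    · have htIcc : max 0 (c - δ/2) ∈ Set.Icc (0:ℝ) 1 :=
        ⟨le_max_left _ _, max_le (by linarith) (by linarith)⟩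
      have htc : max 0 (c - δ/2) < c := max_lt h (by linarith)
      have habs : |max 0 (c - δ/2) - c| < δ := by
        rw [abs_lt]
        constructor
        · have h2 : c - δ/2 ≤ max 0 (c - δ/2) := le_max_right _ _
          linarith
        · linarith
      exact hδ' _ htIcc habs (hlt _ (le_max_left _ _) htc)
  have hcB : c ∈ B := by
    refine ⟨hcIcc, fun t ht => ?_⟩
    rcases eq_or_lt_of_le ht.2 with h | h
    · rw [h]; exact hPc
    · exact hlt t ht.1 h
  rcases eq_or_lt_of_le hc1 with h | h
  · rw [← h]; exact hPc
  · exfalso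
    obtain ⟨δ, hδ, hδ'⟩ := Lopen hsupp ha' hcIcc hPc
    have hs'Icc : min 1 (c + δ/2) ∈ Set.Icc (0:ℝ) 1 :=
      ⟨le_min (by norm_num) (by linarith), min_le_left _ _⟩
    have hs'B : min 1 (c + δ/2) ∈ B := by
      refine ⟨hs'Icc, fun t ht => ?_⟩
      rcases le_or_gt t c with h' | h'
      · rcases eq_or_lt_of_le h' with h'' | h''
        · rw [h'']; exact hPc
        · exact hlt t ht.1 h''
      · refine hδ' t ⟨ht.1, le_trans ht.2 hs'Icc.2⟩ ?_
        rw [abs_lt]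
        constructor
        · linarith
        · have h2 : t ≤ c + δ/2 := le_trans ht.2 (min_le_right _ _)
          linarith
    have h3 : min 1 (c + δ/2) ≤ c := le_csSup hbdd hs'B
    have h4 : c < min 1 (c + δ/2) := lt_min h (by linarith)
    linarith

end Stmt7Aux

/-- Paper Corollary 3.2: sufficient conditions for asymptotic stability. -/
theorem stmt7 (a : ℝ) (ha : a ∈ Set.Ioo (-1 : ℝ) 1)
    (η : Measure ℝ) [IsProbabilityMeasure η]
    (hsupp : η (Set.Iio 0) = 0)
    (hν : ∃ ν > 0, Integrable (fun τ => Real.exp (ν * τ)) η)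
    (hcond :
      (∀ ω ∈ Set.Icc (0 : ℝ) (Real.sqrt (1 - a ^ 2)),
          (∫ τ, Real.cos (ω * τ) ∂η) > -a) ∨
      (∀ ω ∈ Set.Ioc (0 : ℝ) (Real.sqrt (1 - a ^ 2)),
          (∫ τ, Real.cos (ω * τ) ∂η) = -a → (∫ τ, Real.sin (ω * τ) ∂η) < ω)) :
    ∀ z : ℂ, z + (a : ℂ) + (∫ τ, Complex.exp (-z * τ) ∂η) = 0 → z.re < 0 := by
  obtain ⟨ν, hν0, hint⟩ := hν
  intro z hz
  by_contra hre
  push_neg at hre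
  have hP1 : Stmt7Aux.P a η 1 := Stmt7Aux.P_one hν0 hint hsupp ha hcond
  refine hP1 z hre ?_
  rw [Stmt7Aux.DD]
  have hI : (∫ τ, Complex.exp (-z * (((1:ℝ) : ℂ) * (τ : ℝ))) ∂η)
      = ∫ τ, Complex.exp (-z * (τ : ℝ)) ∂η := by
    simp_rw [Complex.ofReal_one, one_mul]
  rw [hI]
  exact hz
end

section
/- Let c ≈ 0.7246 and θ_c ≈ 2.3311 be defined by: θ_c is the unique θ ∈ (0,π) with 1 - θ·sin(θ) = cos(θ), and c = sin(θ_c). Let a ∈ (-1,1) and E > 0 with E < arccos(-a)/ω_c, where ω_c = √(1-a²). Suppose ω_s ∈ [0, ω_c], and suppose there are τ₁, τ₂ ≥ 0 and p₁, p₂ > 0 with p₁ + p₂ = 1, p₁τ₁ + p₂τ₂ = E, and p₁cos(ω_s τ₁) + p₂cos(ω_s τ₂) = -a. Then ω_s E < θ_c and cos(ω_s E) > -a. -/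
private lemma hasDerivAt_g0 (x : ℝ) :
    HasDerivAt (fun θ : ℝ => θ * Real.sin θ + Real.cos θ) (x * Real.cos x) x := by
  have h := ((hasDerivAt_id x).mul (Real.hasDerivAt_sin x)).add (Real.hasDerivAt_cos x)
  simp only [id_eq, one_mul] at h
  refine h.congr_deriv ?_
  ring

private lemma g0_strictMono :
    StrictMonoOn (fun θ : ℝ => θ * Real.sin θ + Real.cos θ)
      (Set.Icc 0 (Real.pi / 2)) := by
  apply strictMonoOn_of_deriv_pos (convex_Icc _ _)
  · exact Continuous.continuousOn (by continuity)
  · intro x hx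
    rw [interior_Icc] at hx
    rw [(hasDerivAt_g0 x).deriv]
    exact mul_pos hx.1 (Real.cos_pos_of_mem_Ioo ⟨by linarith [hx.1, Real.pi_pos], hx.2⟩)

private lemma g0_ge_one {x : ℝ} (hx0 : 0 ≤ x) (hx : x ≤ Real.pi / 2) :
    1 ≤ x * Real.sin x + Real.cos x := by
  have h := g0_strictMono.monotoneOn (Set.mem_Icc.mpr ⟨le_rfl, by positivity⟩)
    (Set.mem_Icc.mpr ⟨hx0, hx⟩) hx0
  simpa using h

private lemma g0_anti :
    AntitoneOn (fun θ : ℝ => θ * Real.sin θ + Real.cos θ)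
      (Set.Icc (Real.pi / 2) Real.pi) := by
  apply antitoneOn_of_deriv_nonpos (convex_Icc _ _) (Continuous.continuousOn (by continuity))
  · intro x hx
    exact (hasDerivAt_g0 x).differentiableAt.differentiableWithinAt
  · intro x hx
    rw [interior_Icc] at hx
    rw [(hasDerivAt_g0 x).deriv]
    have h1 : Real.cos x ≤ 0 :=
      Real.cos_nonpos_of_pi_div_two_le_of_le hx.1.le (by linarith [hx.2, Real.pi_pos])
    nlinarith [hx.1, Real.pi_pos]

private lemma sin_le_sin_aux {x y : ℝ} (hx0 : 0 ≤ x) (hxy : x ≤ y) (hy : y ≤ Real.pi / 2) :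
    Real.sin x ≤ Real.sin y := by
  have hp := Real.pi_pos
  exact Real.strictMonoOn_sin.monotoneOn ⟨by linarith, by linarith⟩ ⟨by linarith, hy⟩ hxy

/-- Support line of the convex envelope: for `m ∈ [θc, π]` with `θc ≥ π/2` and
`cos m + m sin m ≤ 1`, the line through `(m, cos m)` with slope `-sin m` lies below
`cos` on `[0, ∞)`. -/
private lemma support_line {m θ : ℝ} (hm2 : Real.pi / 2 ≤ m) (hmπ : m ≤ Real.pi)
    (hK : Real.cos m + m * Real.sin m ≤ 1) (hθ : 0 ≤ θ) :
    Real.cos m ≤ Real.cos θ + Real.sin m * (θ - m) := by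
  have hp := Real.pi_pos
  have hs0 : 0 ≤ Real.sin m := Real.sin_nonneg_of_nonneg_of_le_pi (by linarith) hmπ
  have e1 : Real.sin (Real.pi - m) = Real.sin m := Real.sin_pi_sub m
  have e2 : Real.cos (Real.pi - m) = -Real.cos m := Real.cos_pi_sub m
  have hd : ∀ x : ℝ, HasDerivAt (fun t : ℝ => Real.cos t + Real.sin m * t)
      (Real.sin m - Real.sin x) x := by
    intro x
    have h := (Real.hasDerivAt_cos x).add ((hasDerivAt_id x).const_mul (Real.sin m))
    refine h.congr_deriv ?_
    ring
  have mono : ∀ a b : ℝ, (∀ x ∈ Set.Ioo a b, Real.sin x ≤ Real.sin m) →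
      MonotoneOn (fun t : ℝ => Real.cos t + Real.sin m * t) (Set.Icc a b) := by
    intro a b hab
    apply monotoneOn_of_deriv_nonneg (convex_Icc _ _) (Continuous.continuousOn (by continuity))
    · intro x hx
      exact (hd x).differentiableAt.differentiableWithinAt
    · intro x hx
      rw [interior_Icc] at hx
      rw [(hd x).deriv]
      linarith [hab x hx]
  have anti : ∀ a b : ℝ, (∀ x ∈ Set.Ioo a b, Real.sin m ≤ Real.sin x) →
      AntitoneOn (fun t : ℝ => Real.cos t + Real.sin m * t) (Set.Icc a b) := by
    intro a b hab
    apply antitoneOn_of_deriv_nonpos (convex_Icc _ _) (Continuous.continuousOn (by continuity))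
    · intro x hx
      exact (hd x).differentiableAt.differentiableWithinAt
    · intro x hx
      rw [interior_Icc] at hx
      rw [(hd x).deriv]
      linarith [hab x hx]
  have key : Real.cos m + Real.sin m * m ≤ Real.cos θ + Real.sin m * θ := by
    rcases le_or_gt θ (Real.pi - m) with h1 | h1
    · -- θ ∈ [0, π - m] : function increasing there, value at 0 is 1 ≥ K
      have hmono := mono 0 (Real.pi - m) (fun x hx => by
        have := sin_le_sin_aux hx.1.le hx.2.le (by linarith)
        rw [e1] at this
        exact this)
      have h2 := hmono (Set.mem_Icc.mpr ⟨le_rfl, by linarith⟩)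
        (Set.mem_Icc.mpr ⟨hθ, h1⟩) hθ
      simp only [Real.cos_zero, mul_zero, add_zero] at h2
      nlinarith
    · rcases le_or_gt θ m with h2 | h2
      · -- θ ∈ [π - m, m] : function decreasing, value at m is K
        have hanti := anti (Real.pi - m) m (fun x hx => by
          rcases le_or_gt x (Real.pi / 2) with h3 | h3
          · have := sin_le_sin_aux (by linarith [hx.1]) hx.1.le h3
            rw [e1] at this
            linarith
          · have := sin_le_sin_aux (x := Real.pi - m) (y := Real.pi - x)
              (by linarith) (by linarith [hx.2]) (by linarith)
            rw [e1, Real.sin_pi_sub] at this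
            exact this)
        have h3 := hanti (Set.mem_Icc.mpr ⟨h1.le, h2⟩)
          (Set.mem_Icc.mpr ⟨by linarith, le_rfl⟩) h2
        exact h3
      · rcases le_or_gt θ Real.pi with h3 | h3
        · -- θ ∈ [m, π] : function increasing (sin x ≤ sin m there)
          have hmono := mono m Real.pi (fun x hx => by
            have := sin_le_sin_aux (x := Real.pi - x) (y := Real.pi - m)
              (by linarith [hx.2]) (by linarith [hx.1]) (by linarith)
            rw [Real.sin_pi_sub, e1] at this
            exact this)
          have h4 := hmono (Set.mem_Icc.mpr ⟨le_rfl, hmπ⟩)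
            (Set.mem_Icc.mpr ⟨h2.le, h3⟩) h2.le
          exact h4
        · -- θ > π : use cos θ ≥ -1 and sin m (π - m) ≥ 1 + cos m
          have g := g0_ge_one (x := Real.pi - m) (by linarith) (by linarith)
          rw [e1, e2] at g
          have h4 : Real.sin m * (Real.pi - m) ≤ Real.sin m * (θ - m) :=
            mul_le_mul_of_nonneg_left (by linarith) hs0
          nlinarith [Real.neg_one_le_cos θ]
  nlinarith [key]

/-- Paper Lemma 4.2. -/
theorem stmt9 (θc c : ℝ)
    (hθc_mem : θc ∈ Set.Ioo 0 Real.pi)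
    (hθc_eq : 1 - θc * Real.sin θc = Real.cos θc)
    (hθc_uniq : ∀ θ ∈ Set.Ioo 0 Real.pi, 1 - θ * Real.sin θ = Real.cos θ → θ = θc)
    (hc : c = Real.sin θc)
    (a E : ℝ) (ha : a ∈ Set.Ioo (-1 : ℝ) 1) (hE : 0 < E)
    (hEbound : E < Real.arccos (-a) / Real.sqrt (1 - a ^ 2))
    (ωs : ℝ) (hωs : ωs ∈ Set.Icc 0 (Real.sqrt (1 - a ^ 2)))
    (τ₁ τ₂ p₁ p₂ : ℝ) (hτ₁ : 0 ≤ τ₁) (hτ₂ : 0 ≤ τ₂) (hp₁ : 0 < p₁) (hp₂ : 0 < p₂)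
    (hsum : p₁ + p₂ = 1) (hmean : p₁ * τ₁ + p₂ * τ₂ = E)
    (hC : p₁ * Real.cos (ωs * τ₁) + p₂ * Real.cos (ωs * τ₂) = -a) :
    ωs * E < θc ∧ Real.cos (ωs * E) > -a := by
  have hp := Real.pi_pos
  obtain ⟨ha1, ha2⟩ := ha
  have hA_le_pi : Real.arccos (-a) ≤ Real.pi := Real.arccos_le_pi _
  have hcosA : Real.cos (Real.arccos (-a)) = -a :=
    Real.cos_arccos (by linarith) (by linarith)
  have hωc_pos : 0 < Real.sqrt (1 - a ^ 2) := Real.sqrt_pos.mpr (by nlinarith)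
  have hm_lt_A : ωs * E < Real.arccos (-a) := by
    have h1 : ωs * E ≤ Real.sqrt (1 - a ^ 2) * E :=
      mul_le_mul_of_nonneg_right hωs.2 hE.le
    have h2 : E * Real.sqrt (1 - a ^ 2) < Real.arccos (-a) :=
      (lt_div_iff₀ hωc_pos).mp hEbound
    nlinarith
  have hm0 : 0 ≤ ωs * E := mul_nonneg hωs.1 hE.le
  have hcos_gt : Real.cos (ωs * E) > -a := by
    rw [← hcosA]
    exact Real.cos_lt_cos_of_nonneg_of_le_pi hm0 hA_le_pi hm_lt_A
  refine ⟨?_, hcos_gt⟩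
  by_contra hcon
  push_neg at hcon
  -- so θc ≤ ωs * E
  have hθc_half : Real.pi / 2 ≤ θc := by
    by_contra hh
    push_neg at hh
    have h := g0_strictMono (Set.mem_Icc.mpr ⟨le_rfl, by positivity⟩)
      (Set.mem_Icc.mpr ⟨hθc_mem.1.le, hh.le⟩) hθc_mem.1
    simp only [Real.sin_zero, Real.cos_zero, mul_zero, zero_mul, zero_add] at h
    linarith
  have hmπ : ωs * E ≤ Real.pi := by linarith
  have hm2 : Real.pi / 2 ≤ ωs * E := le_trans hθc_half hcon
  have hK : Real.cos (ωs * E) + (ωs * E) * Real.sin (ωs * E) ≤ 1 := by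
    have h := g0_anti (Set.mem_Icc.mpr ⟨hθc_half, hθc_mem.2.le⟩)
      (Set.mem_Icc.mpr ⟨hm2, hmπ⟩) hcon
    simp only at h
    linarith
  have i1 := support_line hm2 hmπ hK (mul_nonneg hωs.1 hτ₁)
  have i2 := support_line hm2 hmπ hK (mul_nonneg hωs.1 hτ₂)
  have keym : p₁ * (ωs * τ₁) + p₂ * (ωs * τ₂) = ωs * E := by
    rw [← hmean]; ring
  have j1 := mul_le_mul_of_nonneg_left i1 hp₁.le
  have j2 := mul_le_mul_of_nonneg_left i2 hp₂.le
  have rhs_eq : p₁ * (Real.cos (ωs * τ₁) + Real.sin (ωs * E) * (ωs * τ₁ - ωs * E))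
      + p₂ * (Real.cos (ωs * τ₂) + Real.sin (ωs * E) * (ωs * τ₂ - ωs * E)) = -a := by
    linear_combination hC + Real.sin (ωs * E) * keym - (Real.sin (ωs * E) * (ωs * E)) * hsum
  have lhs_eq : p₁ * Real.cos (ωs * E) + p₂ * Real.cos (ωs * E) = Real.cos (ωs * E) := by
    linear_combination Real.cos (ωs * E) * hsum
  linarith
end

section
/- Let c ≈ 0.7246 and θ_c ≈ 2.3311 be defined by: θ_c is the unique θ ∈ (0,π) with 1 - θ·sin(θ) = cos(θ), and c = sin(θ_c). Let a ∈ (-1,1) and E > 0 with E < arccos(-a)/ω_c, where ω_c = √(1-a²). Suppose ω_s ∈ [0, ω_c], and suppose there exist τ₁, τ₂ ≥ 0 and p₁, p₂ > 0 with p₁ + p₂ = 1, p₁τ₁ + p₂τ₂ = E, and p₁cos(ω_s τ₁) + p₂cos(ω_s τ₂) = -a. Then there exists a unique pair (p*, τ₂*) with p* ∈ (0,1), τ₂* > 0, 0 < ω_s τ₂* ≤ θ_c, p*·τ₂* = E, and (1 - p*) + p*·cos(ω_s τ₂*) = -a (i.e., a unique two-delay density f* with delays τ₁* = 0 and τ₂*,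 weights 1-p* and p*, mean E, satisfying C*(ω_s) = -a). -/
set_option maxHeartbeats 1000000
open Real Set

lemma hderivA (θ : ℝ) :
    HasDerivAt (fun t : ℝ => 1 - Real.cos t - t * Real.sin t) (-(θ * Real.cos θ)) θ := by
  have h1 := Real.hasDerivAt_cos θ
  have h2 := (hasDerivAt_id θ).mul (Real.hasDerivAt_sin θ)
  have h3 := ((hasDerivAt_const θ (1:ℝ)).sub h1).sub h2
  exact h3.congr_deriv (by simp [id])
lemma gderivA (k θ : ℝ) :
    HasDerivAt (fun t : ℝ => Real.cos t + k * t) (-Real.sin θ + k) θ := by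
  have h1 := Real.hasDerivAt_cos θ
  have h2 := (hasDerivAt_id θ).const_mul k
  have h3 := h1.add h2
  exact h3.congr_deriv (by simp [id])
lemma uderivA (x : ℝ) (hx : x ≠ 0) :
    HasDerivAt (fun t : ℝ => (1 - Real.cos t) / t)
      ((Real.sin x * x - (1 - Real.cos x)) / x ^ 2) x := by
  have h3 := ((hasDerivAt_const x (1:ℝ)).sub (Real.hasDerivAt_cos x)).div (hasDerivAt_id x) hx
  exact h3.congr_deriv (by simp [id])
lemma h_anti : StrictAntiOn (fun t : ℝ => 1 - Real.cos t - t * Real.sin t)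
    (Set.Icc 0 (Real.pi/2)) := by
  apply strictAntiOn_of_deriv_neg (convex_Icc _ _)
  · exact (continuous_const.sub Real.continuous_cos).sub
      (continuous_id.mul Real.continuous_sin) |>.continuousOn
  · intro x hx
    rw [interior_Icc] at hx
    rw [(hderivA x).deriv]
    have hcos : 0 < Real.cos x := Real.cos_pos_of_mem_Ioo
      ⟨by linarith [hx.1, Real.pi_pos], hx.2⟩
    nlinarith [hx.1]
lemma h_mono : StrictMonoOn (fun t : ℝ => 1 - Real.cos t - t * Real.sin t)
    (Set.Icc (Real.pi/2) Real.pi) := by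
  apply strictMonoOn_of_deriv_pos (convex_Icc _ _)
  · exact (continuous_const.sub Real.continuous_cos).sub
      (continuous_id.mul Real.continuous_sin) |>.continuousOn
  · intro x hx
    rw [interior_Icc] at hx
    rw [(hderivA x).deriv]
    have hcos : Real.cos x < 0 := Real.cos_neg_of_pi_div_two_lt_of_lt hx.1
      (by linarith [hx.2, Real.pi_pos])
    nlinarith [hx.1, Real.pi_pos]
lemma lemA (s : ℝ) (hs1 : Real.pi/2 ≤ s) (hs2 : s ≤ Real.pi)
    (hs3 : Real.cos s + s * Real.sin s ≤ 1) :
    ∀ θ, 0 ≤ θ → Real.cos s + s * Real.sin s ≤ Real.cos θ + θ * Real.sin s := by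
  have hπ := Real.pi_pos
  set k := Real.sin s with hk
  have hk0 : 0 ≤ k := Real.sin_nonneg_of_nonneg_of_le_pi (by linarith) hs2
  have hps : Real.sin (Real.pi - s) = k := Real.sin_pi_sub s
  set g : ℝ → ℝ := fun t => Real.cos t + k * t with hg
  have hgc : Continuous g := Real.continuous_cos.add (continuous_const.mul continuous_id)
  have hmono := Real.strictMonoOn_sin.monotoneOn
  have m1 : MonotoneOn g (Set.Icc 0 (Real.pi - s)) := by
    apply monotoneOn_of_deriv_nonneg (convex_Icc _ _) hgc.continuousOn
      (fun x _ => ((gderivA k x).differentiableAt).differentiableWithinAt)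
    intro x hx
    rw [interior_Icc] at hx
    rw [(gderivA k x).deriv]
    have : Real.sin x ≤ Real.sin (Real.pi - s) := by
      apply hmono ⟨by linarith [hx.1], by linarith [hx.2]⟩
        ⟨by linarith, by linarith⟩ hx.2.le
    linarith [hps ▸ this]
  have m2 : AntitoneOn g (Set.Icc (Real.pi - s) s) := by
    apply antitoneOn_of_deriv_nonpos (convex_Icc _ _) hgc.continuousOn
      (fun x _ => ((gderivA k x).differentiableAt).differentiableWithinAt)
    intro x hx
    rw [interior_Icc] at hx
    rw [(gderivA k x).deriv]
    have hks : k ≤ Real.sin x := by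
      rcases le_or_gt x (Real.pi/2) with h | h
      · rw [← hps]
        exact hmono ⟨by linarith [hx.2], by linarith⟩
          ⟨by linarith [hx.1], h⟩ hx.1.le
      · rw [← Real.sin_pi_sub x, ← hps]
        exact hmono ⟨by linarith, by linarith⟩
          ⟨by linarith [hx.2], by linarith⟩ (by linarith [hx.2])
    linarith
  have m3 : MonotoneOn g (Set.Icc s (2 * Real.pi)) := by
    apply monotoneOn_of_deriv_nonneg (convex_Icc _ _) hgc.continuousOn
      (fun x _ => ((gderivA k x).differentiableAt).differentiableWithinAt)
    intro x hx
    rw [interior_Icc] at hx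
    rw [(gderivA k x).deriv]
    have hks : Real.sin x ≤ k := by
      rcases le_or_gt x Real.pi with h | h
      · rw [← Real.sin_pi_sub x, ← hps]
        exact hmono ⟨by linarith, by linarith [hx.1]⟩
          ⟨by linarith, by linarith⟩ (by linarith [hx.1])
      · have h1 : 0 ≤ Real.sin (x - Real.pi) :=
          Real.sin_nonneg_of_nonneg_of_le_pi (by linarith) (by linarith [hx.2])
        rw [Real.sin_sub_pi] at h1
        linarith
    linarith
  have base : ∀ θ ∈ Set.Icc (0:ℝ) (2 * Real.pi), g s ≤ g θ := by
    intro θ hθ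
    rcases le_or_gt θ (Real.pi - s) with h1 | h1
    · have : g 0 ≤ g θ := m1 ⟨le_refl 0, by linarith⟩ ⟨hθ.1, h1⟩ hθ.1
      have hg0 : g 0 = 1 := by simp [hg]
      have hgs : g s = Real.cos s + s * k := by simp [hg]; ring
      linarith
    · rcases le_or_gt θ s with h2 | h2
      · exact m2 ⟨h1.le, h2⟩ ⟨by linarith, le_refl s⟩ h2
      · exact m3 ⟨le_refl s, by linarith⟩ ⟨h2.le, hθ.2⟩ h2.le
  have step : ∀ n : ℕ, ∀ θ, 0 ≤ θ → θ ≤ 2 * Real.pi * (n + 1) → g s ≤ g θ := by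
    intro n
    induction n with
    | zero => intro θ h1 h2; exact base θ ⟨h1, by push_cast at h2; linarith⟩
    | succ m ih =>
      intro θ h1 h2
      rcases le_or_gt θ (2 * Real.pi * (m + 1)) with h | h
      · exact ih θ h1 h
      · have h3 : 0 ≤ θ - 2 * Real.pi := by
          have hm : (0:ℝ) ≤ (m:ℝ) := Nat.cast_nonneg m
          nlinarith
        have h4 : θ - 2 * Real.pi ≤ 2 * Real.pi * (m + 1) := by push_cast at h2 ⊢; nlinarith
        have := ih (θ - 2 * Real.pi) h3 h4
        have hcos : Real.cos (θ - 2 * Real.pi) = Real.cos θ := Real.cos_sub_two_pi θ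
        simp only [hg] at this ⊢
        rw [hcos] at this
        nlinarith
  intro θ hθ
  obtain ⟨n, hn⟩ := exists_nat_ge (θ / (2 * Real.pi))
  have hn' : θ ≤ 2 * Real.pi * (n + 1) := by
    rw [div_le_iff₀ (by positivity)] at hn
    push_cast; nlinarith
  have := step n θ hθ hn'
  simp only [hg] at this
  linarith [this]



/-- Paper Lemma 4.3: existence and uniqueness of the extremal two-delay density `f*`. -/
theorem stmt10 (θc c : ℝ)
    (hθc_mem : θc ∈ Set.Ioo 0 Real.pi)
    (hθc_eq : 1 - θc * Real.sin θc = Real.cos θc)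
    (hθc_uniq : ∀ θ ∈ Set.Ioo 0 Real.pi, 1 - θ * Real.sin θ = Real.cos θ → θ = θc)
    (hc : c = Real.sin θc)
    (a E : ℝ) (ha : a ∈ Set.Ioo (-1 : ℝ) 1) (hE : 0 < E)
    (hEbound : E < Real.arccos (-a) / Real.sqrt (1 - a ^ 2))
    (ωs : ℝ) (hωs : ωs ∈ Set.Icc 0 (Real.sqrt (1 - a ^ 2)))
    (τ₁ τ₂ p₁ p₂ : ℝ) (hτ₁ : 0 ≤ τ₁) (hτ₂ : 0 ≤ τ₂) (hp₁ : 0 < p₁) (hp₂ : 0 < p₂)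
    (hsum : p₁ + p₂ = 1) (hmean : p₁ * τ₁ + p₂ * τ₂ = E)
    (hC : p₁ * Real.cos (ωs * τ₁) + p₂ * Real.cos (ωs * τ₂) = -a) :
    ∃! pt : ℝ × ℝ,
      pt.1 ∈ Set.Ioo (0 : ℝ) 1 ∧ 0 < pt.2 ∧
      0 < ωs * pt.2 ∧ ωs * pt.2 ≤ θc ∧
      pt.1 * pt.2 = E ∧
      (1 - pt.1) + pt.1 * Real.cos (ωs * pt.2) = -a := by
  subst hc
  obtain ⟨hθc0, hθcπ⟩ := hθc_mem
  obtain ⟨ha1, ha2⟩ := ha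
  have hπ := Real.pi_pos
  have hhθc : 1 - Real.cos θc - θc * Real.sin θc = 0 := by linarith
  -- θc > π/2
  have hθchalf : Real.pi/2 < θc := by
    by_contra hle
    push_neg at hle
    have := h_anti (Set.left_mem_Icc.mpr (by linarith)) ⟨hθc0.le, hle⟩ hθc0
    simp only [Real.cos_zero, Real.sin_zero] at this
    norm_num at this
    linarith
  -- sign of h on (0, θc)
  have hneg : ∀ θ, 0 < θ → θ < θc → 1 - Real.cos θ - θ * Real.sin θ < 0 := by
    intro θ h0 hlt
    rcases le_or_gt θ (Real.pi/2) with h | h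
    · have := h_anti (Set.left_mem_Icc.mpr (by linarith)) ⟨h0.le, h⟩ h0
      simp only [Real.cos_zero, Real.sin_zero] at this
      norm_num at this
      linarith
    · have := h_mono ⟨h.le, by linarith⟩ ⟨hθchalf.le, hθcπ.le⟩ hlt
      simp only at this
      linarith
  have hnonnegS : ∀ S, θc ≤ S → S ≤ Real.pi →
      0 ≤ 1 - Real.cos S - S * Real.sin S := by
    intro S h1 h2
    rcases eq_or_lt_of_le h1 with h | h1
    · rw [← h]; linarith
    · have := h_mono ⟨hθchalf.le, hθcπ.le⟩ ⟨by linarith, h2⟩ h1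
      simp only at this
      linarith
  have hc0 : 0 < Real.sin θc := Real.sin_pos_of_pos_of_lt_pi hθc0 hθcπ
  -- the c-inequality
  have hcineq : ∀ θ, 0 ≤ θ → 1 - Real.cos θ ≤ Real.sin θc * θ := by
    intro θ hθ
    have := lemA θc hθchalf.le hθcπ.le (by linarith) θ hθ
    nlinarith
  have h1a : 0 < 1 + a := by linarith
  have hωc : 0 < Real.sqrt (1 - a ^ 2) := Real.sqrt_pos.mpr (by nlinarith)
  have harc1 : Real.arccos (-a) ≤ Real.pi := Real.arccos_le_pi _
  have hcosarc : Real.cos (Real.arccos (-a)) = -a :=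
    Real.cos_arccos (by linarith) (by linarith)
  have hωs0 : 0 < ωs := by
    rcases hωs.1.eq_or_lt with h | h
    · exfalso
      rw [← h] at hC
      simp only [zero_mul, Real.cos_zero, mul_one] at hC
      linarith
    · exact h
  have hS0 : 0 < E * ωs := mul_pos hE hωs0
  have hSarc : E * ωs < Real.arccos (-a) := by
    have h1 : E * Real.sqrt (1 - a ^ 2) < Real.arccos (-a) :=
      (lt_div_iff₀ hωc).mp hEbound
    have h2 : E * ωs ≤ E * Real.sqrt (1 - a ^ 2) :=
      mul_le_mul_of_nonneg_left hωs.2 hE.le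
    linarith
  have hSπ : E * ωs < Real.pi := lt_of_lt_of_le hSarc harc1
  have hcosS : -a < Real.cos (E * ωs) := by
    have := Real.strictAntiOn_cos ⟨hS0.le, hSπ.le⟩
      ⟨Real.arccos_nonneg _, harc1⟩ hSarc
    rw [hcosarc] at this
    exact this
  -- key inequality 1 + a ≤ sin θc * (E * ωs)
  have key : 1 + a ≤ Real.sin θc * (E * ωs) := by
    have hk1 := hcineq (ωs * τ₁) (mul_nonneg hωs0.le hτ₁)
    have hk2 := hcineq (ωs * τ₂) (mul_nonneg hωs0.le hτ₂)
    have e1 := mul_le_mul_of_nonneg_left hk1 hp₁.le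
    have e2 := mul_le_mul_of_nonneg_left hk2 hp₂.le
    have e3 : p₁ * (Real.sin θc * (ωs * τ₁)) + p₂ * (Real.sin θc * (ωs * τ₂))
        = Real.sin θc * (E * ωs) := by
      rw [← hmean]; ring
    nlinarith [e1, e2, e3]
  -- E * ωs < θc
  have hSθc : E * ωs < θc := by
    by_contra hge
    push_neg at hge
    have hw := hnonnegS (E * ωs) hge hSπ.le
    have hl1 := lemA (E * ωs) (by linarith) hSπ.le (by linarith)
      (ωs * τ₁) (mul_nonneg hωs0.le hτ₁)
    have hl2 := lemA (E * ωs) (by linarith) hSπ.le (by linarith)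
      (ωs * τ₂) (mul_nonneg hωs0.le hτ₂)
    have e1 := mul_le_mul_of_nonneg_left hl1 hp₁.le
    have e2 := mul_le_mul_of_nonneg_left hl2 hp₂.le
    have e3 : p₁ * (ωs * τ₁) * Real.sin (E * ωs) + p₂ * (ωs * τ₂) * Real.sin (E * ωs)
        = (E * ωs) * Real.sin (E * ωs) := by
      have : p₁ * (ωs * τ₁) + p₂ * (ωs * τ₂) = E * ωs := by rw [← hmean]; ring
      nlinarith [this]
    nlinarith [e1, e2, e3]
  -- strict monotonicity of u
  have humono : StrictMonoOn (fun θ : ℝ => (1 - Real.cos θ) / θ) (Set.Ioc 0 θc) := by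
    apply strictMonoOn_of_deriv_pos (convex_Ioc _ _)
    · exact ContinuousOn.div (continuous_const.sub Real.continuous_cos).continuousOn
        continuous_id.continuousOn (fun x hx => ne_of_gt hx.1)
    · intro x hx
      rw [interior_Ioc] at hx
      rw [(uderivA x (ne_of_gt hx.1)).deriv]
      have := hneg x hx.1 hx.2
      apply div_pos (by nlinarith) (pow_pos hx.1 2)
  -- IVT
  have hUc : Continuous (fun θ : ℝ => (1 - Real.cos θ) * (E * ωs) - (1 + a) * θ) :=
    ((continuous_const.sub Real.continuous_cos).mul continuous_const).sub
      (continuous_const.mul continuous_id)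
  have hUS : (1 - Real.cos (E * ωs)) * (E * ωs) - (1 + a) * (E * ωs) < 0 := by
    nlinarith [hcosS, hS0]
  have hUθc : 0 ≤ (1 - Real.cos θc) * (E * ωs) - (1 + a) * θc := by
    have h7 : 1 - Real.cos θc = θc * Real.sin θc := by linarith
    nlinarith [mul_nonneg hθc0.le (sub_nonneg.mpr key)]
  obtain ⟨θs, hθsmem, hθseq⟩ := intermediate_value_Icc hSθc.le hUc.continuousOn
    ⟨hUS.le, hUθc⟩
  simp only at hθseq
  have hθsS : E * ωs < θs := by
    rcases eq_or_lt_of_le hθsmem.1 with h | h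
    · exfalso; rw [← h] at hθseq; linarith
    · exact h
  have hθs0 : 0 < θs := lt_trans hS0 hθsS
  have hθsne : θs ≠ 0 := ne_of_gt hθs0
  have hωsne : ωs ≠ 0 := ne_of_gt hωs0
  have hω : ωs * (θs / ωs) = θs := by field_simp
  have hcross2 : (1 - Real.cos θs) * (E * ωs) = (1 + a) * θs := by linarith
  refine ⟨(E * ωs / θs, θs / ωs), ⟨⟨div_pos hS0 hθs0, (div_lt_one hθs0).mpr hθsS⟩,
    div_pos hθs0 hωs0, ?_, ?_, ?_, ?_⟩, ?_⟩
  · rw [hω]; exact hθs0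
  · rw [hω]; exact hθsmem.2
  · field_simp
  · rw [hω]
    field_simp
    linear_combination -hcross2
  · rintro ⟨q, σ⟩ ⟨⟨hq0, hq1⟩, hσ0, hφ0, hφθc, hqσ, heq⟩
    simp only at hq0 hq1 hσ0 hφ0 hφθc hqσ heq ⊢
    have hσne : σ ≠ 0 := ne_of_gt hσ0
    have hq : q * (1 - Real.cos (ωs * σ)) = 1 + a := by nlinarith [heq]
    have hcross : (1 - Real.cos (ωs * σ)) * (E * ωs) = (1 + a) * (ωs * σ) := by
      rw [← hqσ]
      linear_combination (σ * ωs) * hq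
    have hueq : (1 - Real.cos (ωs * σ)) / (ωs * σ) = (1 - Real.cos θs) / θs := by
      rw [div_eq_div_iff (ne_of_gt hφ0) hθsne]
      have h8 : ((1 - Real.cos (ωs * σ)) * θs) * (E * ωs)
          = ((1 - Real.cos θs) * (ωs * σ)) * (E * ωs) := by
        linear_combination θs * hcross - (ωs * σ) * hcross2
      exact mul_right_cancel₀ (ne_of_gt hS0) h8
    have hφθs : ωs * σ = θs := humono.injOn ⟨hφ0, hφθc⟩ ⟨hθs0, hθsmem.2⟩ hueq
    have hσval : σ = θs / ωs := by
      field_simp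
      linear_combination hφθs
    have hqval : q = E * ωs / θs := by
      rw [eq_div_iff hθsne]
      linear_combination ωs * hqσ - q * hφθs
    rw [Prod.mk.injEq]
    exact ⟨hqval, hσval⟩
end
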